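/- arXiv:2004.06768 — 7 statements merged into one kernel-verified Lean document; each statement's English description precedes it below -/
import Mathlib

section
/- For positive integers d, the number of pairs (L, g) where L is a subgroup of (ℤ/d)² of order d and g is a nonzero element of L equals (d-1)·σ₁(d). -/
open AddSubgroup

variable {d : ℕ} [NeZero d]

/-- the hom `(k,j) ↦ (k*e, k*f + j*c)` whose range is the subgroup parametrized by `(c,f)`. -/
def psi (e c : ℕ) (f : ZMod d) : ZMod d × ZMod d →+ ZMod d × ZMod d where
  toFun p := (p.1 * (e : ZMod d), p.1 * f + p.2 * (c : ZMod d))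
  map_zero' := by simp
  map_add' p q := by
    ext <;> simp <;> ring

def subL (e c : ℕ) (f : ZMod d) : AddSubgroup (ZMod d × ZMod d) := (psi e c f).range

@[simp] lemma psi_apply (e c : ℕ) (f : ZMod d) (p : ZMod d × ZMod d) :
    psi e c f p = (p.1 * (e : ZMod d), p.1 * f + p.2 * (c : ZMod d)) := rfl

omit [NeZero d] in
lemma mem_subL {e c : ℕ} {f : ZMod d} {x : ZMod d × ZMod d} :
    x ∈ subL e c f ↔ ∃ k j : ZMod d, x = (k * (e : ZMod d), k * f + j * (c : ZMod d)) := by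
  constructor
  · rintro ⟨⟨k, j⟩, rfl⟩; exact ⟨k, j, rfl⟩
  · rintro ⟨k, j, rfl⟩; exact ⟨⟨k, j⟩, rfl⟩

lemma natCast_mem_zmultiples_iff {c : ℕ} (hc : c ∣ d) (m : ℤ) :
    ((m : ZMod d) ∈ zmultiples ((c : ℕ) : ZMod d)) ↔ (c : ℤ) ∣ m := by
  constructor
  · rintro ⟨k, hk⟩
    have : ((k * c - m : ℤ) : ZMod d) = 0 := by
      push_cast
      rw [sub_eq_zero, ← hk]
      push_cast [zsmul_eq_mul]
      ring
    rw [ZMod.intCast_zmod_eq_zero_iff_dvd] at this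
    have hcd : (c : ℤ) ∣ (d : ℤ) := Int.natCast_dvd_natCast.mpr hc
    have h2 : (c : ℤ) ∣ k * c - m := dvd_trans hcd this
    have h3 : (c : ℤ) ∣ k * c := Dvd.intro_left k rfl
    exact (dvd_sub_right h3).mp h2
  · rintro ⟨k, rfl⟩
    exact ⟨k, by push_cast [zsmul_eq_mul]; ring⟩

lemma mul_natCast_eq_zero_iff {c e : ℕ} (hce : c * e = d) (k : ZMod d) :
    k * (e : ZMod d) = 0 ↔ k ∈ zmultiples ((c : ℕ) : ZMod d) := by
  obtain ⟨m, rfl⟩ := ZMod.intCast_surjective k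
  have he : (e : ℤ) ≠ 0 := by
    have hd := NeZero.ne d
    simp only [ne_eq, Int.natCast_eq_zero]
    rintro rfl; exact hd (by omega)
  rw [natCast_mem_zmultiples_iff ⟨e, hce.symm⟩ m]
  have : ((m : ZMod d) * (e : ZMod d)) = ((m * e : ℤ) : ZMod d) := by push_cast; ring
  rw [this, ZMod.intCast_zmod_eq_zero_iff_dvd]
  constructor
  · intro h
    have : (c : ℤ) * e ∣ m * e := by rw [show ((c:ℤ) * e) = (d:ℤ) by exact_mod_cast hce]; exact h
    exact (mul_dvd_mul_iff_right he).mp this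
  · intro h
    have : (c : ℤ) * e ∣ m * e := mul_dvd_mul_right h e
    rwa [show ((c:ℤ) * e) = (d:ℤ) by exact_mod_cast hce] at this

lemma card_zmultiples_natCast {c e : ℕ} (hce : c * e = d) :
    Nat.card (zmultiples ((c : ℕ) : ZMod d)) = e := by
  have hd := NeZero.ne d
  rw [Nat.card_zmultiples, ZMod.addOrderOf_coe c hd, Nat.gcd_eq_right ⟨e, hce.symm⟩]
  have hc : c ≠ 0 := by rintro rfl; exact hd (by omega)
  subst hce
  exact Nat.mul_div_cancel_left e (Nat.pos_of_ne_zero hc)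

/-- Cardinality of a subgroup of a product: projection times kernel. -/
lemma card_decomp {A B : Type*} [AddCommGroup A] [AddCommGroup B] [Finite A] [Finite B]
    (L : AddSubgroup (A × B)) :
    Nat.card L =
      Nat.card (L.map (AddMonoidHom.fst A B)) * Nat.card (L.comap (AddMonoidHom.inr A B)) := by
  set p : L →+ A := (AddMonoidHom.fst A B).comp L.subtype with hp
  have hrange : p.range = L.map (AddMonoidHom.fst A B) := by
    rw [hp, AddMonoidHom.range_comp, AddSubgroup.range_subtype]
  have hker : Nat.card p.ker = Nat.card (L.comap (AddMonoidHom.inr A B)) := by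
    refine Nat.card_congr ⟨fun x => ⟨x.1.1.2, ?_⟩, fun y => ⟨⟨(0, y.1), y.2⟩, ?_⟩, ?_, ?_⟩
    · have h0 : x.1.1.1 = 0 := x.2
      have : ((0 : A), x.1.1.2) = x.1.1 := by rw [← h0]
      simpa [AddSubgroup.mem_comap, this] using x.1.2
    · rfl
    · rintro ⟨⟨⟨a, b⟩, hab⟩, hk⟩
      have h0 : a = 0 := hk
      subst h0; rfl
    · rintro ⟨y, hy⟩; rfl
  rw [AddSubgroup.card_eq_card_quotient_mul_card_addSubgroup p.ker,
    Nat.card_congr (QuotientAddGroup.quotientKerEquivRange p).toEquiv, hrange, hker]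

lemma map_fst_subL {c e : ℕ} (hce : c * e = d) (f : ZMod d) :
    (subL e c f).map (AddMonoidHom.fst _ _) = zmultiples ((e : ℕ) : ZMod d) := by
  ext x
  simp only [AddSubgroup.mem_map, mem_subL]
  constructor
  · rintro ⟨y, ⟨k, j, rfl⟩, rfl⟩
    obtain ⟨m, rfl⟩ := ZMod.intCast_surjective k
    refine ⟨m, ?_⟩
    simp only [AddMonoidHom.coe_fst, zsmul_eq_mul]
  · rintro ⟨m, rfl⟩
    refine ⟨((m : ZMod d) * e, (m : ZMod d) * f), ⟨m, 0, by simp⟩, ?_⟩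
    simp only [AddMonoidHom.coe_fst, zsmul_eq_mul]

lemma comap_inr_subL {c e : ℕ} (hce : c * e = d) (f : ZMod d) :
    (subL e c f).comap (AddMonoidHom.inr _ _) = zmultiples ((c : ℕ) : ZMod d) := by
  ext y
  simp only [AddSubgroup.mem_comap, AddMonoidHom.inr_apply, mem_subL, Prod.mk.injEq]
  constructor
  · rintro ⟨k, j, h1, rfl⟩
    have hk : k ∈ zmultiples ((c : ℕ) : ZMod d) := (mul_natCast_eq_zero_iff hce k).mp h1.symm
    obtain ⟨m, rfl⟩ := hk
    obtain ⟨m', hm'⟩ := ZMod.intCast_surjective ((m : ZMod d) * f + j)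
    refine ⟨m', ?_⟩
    simp only [zsmul_eq_mul] at hm' ⊢
    rw [hm']
    ring
  · rintro ⟨m, rfl⟩
    refine ⟨0, (m : ZMod d), by simp, ?_⟩
    simp only [zsmul_eq_mul]
    ring

lemma card_subL {c e : ℕ} (hce : c * e = d) (f : ZMod d) :
    Nat.card (subL e c f : AddSubgroup (ZMod d × ZMod d)) = d := by
  rw [card_decomp, map_fst_subL hce, comap_inr_subL hce,
    card_zmultiples_natCast (mul_comm e c ▸ hce), card_zmultiples_natCast hce]
  omega

lemma subL_shift {e c : ℕ} (f t : ZMod d) :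
    subL e c (f + t * ((c : ℕ) : ZMod d)) = subL e c f := by
  ext x
  simp only [mem_subL]
  constructor
  · rintro ⟨k, j, rfl⟩
    exact ⟨k, j + k * t, by rw [Prod.mk.injEq]; exact ⟨rfl, by ring⟩⟩
  · rintro ⟨k, j, rfl⟩
    exact ⟨k, j - k * t, by rw [Prod.mk.injEq]; exact ⟨rfl, by ring⟩⟩

lemma exists_eq_zmultiples (N : AddSubgroup (ZMod d)) :
    ∃ c : ℕ, c ∣ d ∧ N = zmultiples ((c : ℕ) : ZMod d) := by
  obtain ⟨⟨y, hy⟩, hgen⟩ := IsAddCyclic.exists_generator (α := N)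
  have hN : N = zmultiples y := by
    apply le_antisymm
    · intro x hx
      obtain ⟨k, hk⟩ := hgen ⟨x, hx⟩
      exact ⟨k, congrArg Subtype.val hk⟩
    · exact zmultiples_le_of_mem hy
  refine ⟨Nat.gcd d y.val, Nat.gcd_dvd_left _ _, ?_⟩
  rw [hN]
  apply le_antisymm
  · apply zmultiples_le_of_mem
    obtain ⟨k, hk⟩ := Nat.gcd_dvd_right d y.val
    refine ⟨(k : ℤ), ?_⟩
    have hyv : ((y.val : ℕ) : ZMod d) = y := ZMod.natCast_rightInverse y
    conv_rhs => rw [← hyv, hk]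
    push_cast [zsmul_eq_mul]
    ring
  · apply zmultiples_le_of_mem
    refine ⟨Nat.gcdB d y.val, ?_⟩
    have hyv : ((y.val : ℤ) : ZMod d) = y := by
      push_cast
      exact ZMod.natCast_rightInverse y
    have h := Nat.gcd_eq_gcd_ab d y.val
    calc Nat.gcdB d y.val • y = ((y.val : ℤ) : ZMod d) * (Nat.gcdB d y.val : ZMod d) := by
          rw [hyv, zsmul_eq_mul]; push_cast; ring
    _ = (((d : ℤ) * Nat.gcdA d y.val + (y.val : ℤ) * Nat.gcdB d y.val : ℤ) : ZMod d) := by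
          push_cast; simp
    _ = ((Nat.gcd d y.val : ℤ) : ZMod d) := by rw [← h]
    _ = ((Nat.gcd d y.val : ℕ) : ZMod d) := by push_cast; ring

lemma subL_surj (L : AddSubgroup (ZMod d × ZMod d)) (hL : Nat.card L = d) :
    ∃ c : ℕ, c ∣ d ∧ ∃ f : ZMod d, L = subL (d / c) c f := by
  have hd := NeZero.ne d
  obtain ⟨c, hc, hN⟩ := exists_eq_zmultiples (L.comap (AddMonoidHom.inr _ _))
  obtain ⟨e₀, he₀, hP⟩ := exists_eq_zmultiples (L.map (AddMonoidHom.fst _ _))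
  have hcd : c * (d / c) = d := Nat.mul_div_cancel' hc
  have hed : e₀ * (d / e₀) = d := Nat.mul_div_cancel' he₀
  have hcard : Nat.card L = (d / e₀) * (d / c) := by
    rw [card_decomp L, hN, hP, card_zmultiples_natCast hed, card_zmultiples_natCast hcd]
  have he : e₀ = d / c := by
    have h1 : (d / e₀) * (d / c) = d := by rw [← hcard, hL]
    have h2 : e₀ * (d / e₀) = d := hed
    have h3 : d / e₀ ≠ 0 := by
      intro h; rw [h] at h1; simp at h1; exact hd h1.symm
    -- e₀ * (d/e₀) = (d/e₀) * (d/c)  →  e₀ = d/c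
    have := h2.trans h1.symm
    exact Nat.eq_of_mul_eq_mul_left (Nat.pos_of_ne_zero h3) (by linarith [this])
  refine ⟨c, hc, ?_⟩
  have hmem : ((e₀ : ZMod d) : ZMod d) ∈ L.map (AddMonoidHom.fst _ _) := by
    rw [hP]; exact mem_zmultiples _
  obtain ⟨⟨x1, y₀⟩, hxy, hx1⟩ := hmem
  have hx1' : x1 = ((d / c : ℕ) : ZMod d) := by rw [← he]; exact hx1
  have hcmem : ((0 : ZMod d), ((c : ℕ) : ZMod d)) ∈ L := by
    have : ((c : ℕ) : ZMod d) ∈ L.comap (AddMonoidHom.inr _ _) := by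
      rw [hN]; exact mem_zmultiples _
    exact this
  refine ⟨y₀, ?_⟩
  have hle : subL (d / c) c y₀ ≤ L := by
    rintro x ⟨⟨k, j⟩, rfl⟩
    obtain ⟨m, rfl⟩ := ZMod.intCast_surjective k
    obtain ⟨n, rfl⟩ := ZMod.intCast_surjective j
    have h1 : (((d / c : ℕ) : ZMod d), y₀) ∈ L := by rw [← hx1']; exact hxy
    have := add_mem (zsmul_mem h1 m) (zsmul_mem hcmem n)
    convert this using 1
    show ((m : ZMod d) * _, (m : ZMod d) * y₀ + (n : ZMod d) * _) = _
    rw [Prod.smul_mk, Prod.smul_mk, Prod.mk_add_mk, Prod.mk.injEq]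
    constructor
    · simp [zsmul_eq_mul]
    · simp [zsmul_eq_mul]
  have : Finite (ZMod d × ZMod d) := inferInstance
  refine (AddSubgroup.eq_of_le_of_card_ge hle ?_).symm
  rw [hL, card_subL hcd]

lemma subL_inj_f {c e : ℕ} (hce : c * e = d) {f f' : ZMod c}
    (h : subL e c ((f.val : ℕ) : ZMod d) = subL e c ((f'.val : ℕ) : ZMod d)) : f = f' := by
  have hd := NeZero.ne d
  have hc0 : c ≠ 0 := by rintro rfl; exact hd (by omega)
  haveI : NeZero c := ⟨hc0⟩
  have hmem : (((e : ℕ) : ZMod d), ((f.val : ℕ) : ZMod d)) ∈ subL e c ((f.val : ℕ) : ZMod d) :=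
    ⟨⟨1, 0⟩, by show ((1 : ZMod d) * _, _) = _; rw [Prod.mk.injEq]; constructor <;> ring⟩
  rw [h] at hmem
  obtain ⟨⟨k, j⟩, hkj⟩ := hmem
  rw [psi_apply, Prod.mk.injEq] at hkj
  obtain ⟨h1, h2⟩ := hkj
  -- h1 : k * e = e, so k - 1 ∈ zmultiples c
  have h1'' : k * ((e : ℕ) : ZMod d) = ((e : ℕ) : ZMod d) := h1
  have h1' : (k - 1) * ((e : ℕ) : ZMod d) = 0 := by rw [sub_mul, one_mul, h1'', sub_self]
  obtain ⟨m, hm⟩ := (mul_natCast_eq_zero_iff hce _).mp h1'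
  simp only [zsmul_eq_mul] at hm
  -- h2 : k * f' + j * c = f
  have key : (((f.val : ℤ) - (f'.val : ℤ) : ℤ) : ZMod d) ∈ zmultiples ((c : ℕ) : ZMod d) := by
    obtain ⟨n, hn⟩ := ZMod.intCast_surjective ((m : ZMod d) * ((f'.val : ℕ) : ZMod d) + j)
    refine ⟨n, ?_⟩
    have hk : k = 1 + (m : ZMod d) * ((c : ℕ) : ZMod d) := by rw [hm]; ring
    have key2 : ((f.val : ℕ) : ZMod d) - ((f'.val : ℕ) : ZMod d)
        = ((m : ZMod d) * ((f'.val : ℕ) : ZMod d) + j) * ((c : ℕ) : ZMod d) := by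
      rw [← h2, hk]
      ring
    simp only [zsmul_eq_mul]
    rw [hn, ← key2]
    push_cast
    ring
  have hdvd : (c : ℤ) ∣ (f.val : ℤ) - (f'.val : ℤ) :=
    (natCast_mem_zmultiples_iff ⟨e, hce.symm⟩ _).mp key
  have : (((f.val : ℤ) - (f'.val : ℤ) : ℤ) : ZMod c) = 0 :=
    (ZMod.intCast_zmod_eq_zero_iff_dvd _ _).mpr hdvd
  have hff : (f.val : ZMod c) = (f'.val : ZMod c) := by
    push_cast at this
    rwa [sub_eq_zero] at this
  rwa [ZMod.natCast_rightInverse f, ZMod.natCast_rightInverse f'] at hff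

lemma c_determined {c c' : ℕ} {e e' : ℕ} (hce : c * e = d) (hce' : c' * e' = d)
    {f f' : ZMod d} (h : subL e c f = subL e' c' f') : c = c' := by
  have h2 := congrArg (fun L => Nat.card (AddSubgroup.comap (AddMonoidHom.inr (ZMod d) (ZMod d)) L)) h
  simp only [comap_inr_subL hce, comap_inr_subL hce'] at h2
  rw [card_zmultiples_natCast hce, card_zmultiples_natCast hce'] at h2
  -- e = e', and c * e = c' * e' = d
  have he0 : e ≠ 0 := by rintro rfl; exact (NeZero.ne d) (by omega)
  subst h2
  exact Nat.eq_of_mul_eq_mul_right (Nat.pos_of_ne_zero he0) (hce.trans hce'.symm)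

lemma card_subgroup_count :
    Nat.card {L : AddSubgroup (ZMod d × ZMod d) // Nat.card L = d} = ∑ a ∈ d.divisors, a := by
  have hd := NeZero.ne d
  haveI : ∀ c : d.divisors, NeZero (c : ℕ) := fun c => ⟨(Nat.pos_of_mem_divisors c.2).ne'⟩
  set F : ((c : d.divisors) × ZMod (c : ℕ)) → {L : AddSubgroup (ZMod d × ZMod d) // Nat.card L = d} :=
    fun x => ⟨subL (d / (x.1 : ℕ)) (x.1 : ℕ) (((x.2.val : ℕ) : ZMod d)),
      card_subL (Nat.mul_div_cancel' (Nat.dvd_of_mem_divisors x.1.2)) _⟩ with hF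
  have hbij : Function.Bijective F := by
    constructor
    · rintro ⟨⟨c, hc⟩, f⟩ ⟨⟨c', hc'⟩, f'⟩ h
      simp only [hF, Subtype.mk.injEq] at h
      have hcc : c = c' := c_determined (Nat.mul_div_cancel' (Nat.dvd_of_mem_divisors hc))
        (Nat.mul_div_cancel' (Nat.dvd_of_mem_divisors hc')) h
      subst hcc
      have hf : f = f' := subL_inj_f (Nat.mul_div_cancel' (Nat.dvd_of_mem_divisors hc)) h
      subst hf
      rfl
    · rintro ⟨L, hL⟩
      obtain ⟨c, hc, f, hLf⟩ := subL_surj L hL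
      have hc0 : c ≠ 0 := by rintro rfl; exact hd (Nat.eq_zero_of_zero_dvd hc)
      haveI : NeZero c := ⟨hc0⟩
      refine ⟨⟨⟨c, Nat.mem_divisors.mpr ⟨hc, hd⟩⟩, ((f.val : ℕ) : ZMod c)⟩, Subtype.ext ?_⟩
      show subL (d / c) c ((((f.val : ℕ) : ZMod c)).val : ZMod d) = L
      have hval : (((f.val : ℕ) : ZMod c)).val = f.val % c := ZMod.val_natCast c f.val
      rw [hval, hLf]
      -- show subL (d/c) c ↑(f.val % c) = subL (d/c) c f
      have hsplit : f.val % c + c * (f.val / c) = f.val := Nat.mod_add_div f.val c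
      have hf : f = ((f.val % c : ℕ) : ZMod d) + ((f.val / c : ℕ) : ZMod d) * ((c : ℕ) : ZMod d) := by
        conv_lhs => rw [← ZMod.natCast_rightInverse f, ← hsplit]
        push_cast
        ring
      conv_rhs => rw [hf]
      rw [subL_shift]
  rw [← Nat.card_eq_of_bijective F hbij]
  haveI : ∀ c : d.divisors, Fintype (ZMod (c : ℕ)) := fun c => ZMod.fintype _
  rw [Nat.card_eq_fintype_card, Fintype.card_sigma]
  have : ∀ c : d.divisors, Fintype.card (ZMod (c : ℕ)) = (c : ℕ) := by
    intro c
    rw [← Nat.card_eq_fintype_card, Nat.card_zmod]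
  rw [Finset.sum_congr rfl (fun c _ => this c)]
  exact Finset.sum_coe_sort d.divisors (fun a => a)

lemma card_fiber (L : AddSubgroup (ZMod d × ZMod d)) (hL : Nat.card L = d) :
    Nat.card {g : ZMod d × ZMod d // g ∈ L ∧ g ≠ 0} = d - 1 := by
  classical
  have e1 : {g : ZMod d × ZMod d // g ∈ L ∧ g ≠ 0} ≃ {g : L // g ≠ 0} :=
    { toFun := fun x => ⟨⟨x.1, x.2.1⟩, fun h => x.2.2 (congrArg Subtype.val h)⟩
      invFun := fun y => ⟨y.1.1, y.1.2, fun h => y.2 (Subtype.ext h)⟩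
      left_inv := fun x => rfl
      right_inv := fun y => rfl }
  rw [Nat.card_congr e1]
  haveI : Fintype L := Fintype.ofFinite L
  rw [Nat.card_eq_fintype_card]
  have : Fintype.card {g : L // g ≠ 0} = Fintype.card {g : L // ¬ g = 0} := rfl
  rw [this, Fintype.card_subtype_compl, Fintype.card_subtype_eq (0 : L)]
  rw [← Nat.card_eq_fintype_card, hL]

def pointed_eqv :
    {p : AddSubgroup (ZMod d × ZMod d) × (ZMod d × ZMod d) //
        Nat.card p.1 = d ∧ p.2 ∈ p.1 ∧ p.2 ≠ 0} ≃
      Σ L : {L : AddSubgroup (ZMod d × ZMod d) // Nat.card L = d},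
        {g : ZMod d × ZMod d // g ∈ L.1 ∧ g ≠ 0} where
  toFun x := ⟨⟨x.1.1, x.2.1⟩, ⟨x.1.2, x.2.2⟩⟩
  invFun y := ⟨(y.1.1, y.2.1), y.1.2, y.2.2⟩
  left_inv x := rfl
  right_inv y := rfl

/-- The number of pairs `(L, g)` where `L` is a subgroup of `(ℤ/d)²` of order `d` and
`g` is a nonzero element of `L` equals `(d-1)·σ₁(d)`. -/
theorem pointed_subgroup_count (d : ℕ) (hd : 0 < d) :
    Nat.card {p : AddSubgroup (ZMod d × ZMod d) × (ZMod d × ZMod d) //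
        Nat.card p.1 = d ∧ p.2 ∈ p.1 ∧ p.2 ≠ 0} =
      (d - 1) * ∑ a ∈ d.divisors, a := by
  haveI : NeZero d := ⟨hd.ne'⟩
  rw [Nat.card_congr (pointed_eqv (d := d))]
  have hfib : ∀ L : {L : AddSubgroup (ZMod d × ZMod d) // Nat.card L = d},
      {g : ZMod d × ZMod d // g ∈ L.1 ∧ g ≠ 0} ≃ Fin (d - 1) := by
    intro L
    exact Finite.equivFinOfCardEq (card_fiber L.1 L.2)
  rw [Nat.card_congr ((Equiv.sigmaCongrRight hfib).trans (Equiv.sigmaEquivProd _ _))]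
  rw [Nat.card_prod, card_subgroup_count, Nat.card_eq_fintype_card, Fintype.card_fin]
  ring
end

section
/- For every positive integer d, Σ_{d₁+d₂=d, d₁,d₂≥1} σ₁(d₁)σ₁(d₂) = (-d/2 + 1/12)·σ₁(d) + (5/12)·σ₃(d). -/
open Finset

/-- `σₖ(n) = ∑_{a ∣ n} aᵏ`, as a rational number. -/
def sigmaQ (k n : ℕ) : ℚ := ∑ a ∈ n.divisors, (a : ℚ) ^ k

namespace Besge

abbrev Quad : Type := (ℕ × ℕ) × (ℕ × ℕ)

/-- The set of quadruples `((a,b),(c,e))` of positive naturals with `a*b + c*e = n`. -/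
def S (n : ℕ) : Finset Quad :=
  ((range (n+1) ×ˢ range (n+1)) ×ˢ (range (n+1) ×ˢ range (n+1))).filter
    fun x => x.1.1 * x.1.2 + x.2.1 * x.2.2 = n ∧
      0 < x.1.1 ∧ 0 < x.1.2 ∧ 0 < x.2.1 ∧ 0 < x.2.2

lemma mem_S {n : ℕ} {x : Quad} :
    x ∈ S n ↔ x.1.1 * x.1.2 + x.2.1 * x.2.2 = n ∧
      0 < x.1.1 ∧ 0 < x.1.2 ∧ 0 < x.2.1 ∧ 0 < x.2.2 := by
  unfold S
  simp only [mem_filter, mem_product, mem_range]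
  constructor
  · tauto
  · rintro ⟨heq, h1, h2, h3, h4⟩
    have b1 : x.1.1 ≤ x.1.1 * x.1.2 := Nat.le_mul_of_pos_right _ h2
    have b2 : x.1.2 ≤ x.1.1 * x.1.2 := Nat.le_mul_of_pos_left _ h1
    have b3 : x.2.1 ≤ x.2.1 * x.2.2 := Nat.le_mul_of_pos_right _ h4
    have b4 : x.2.2 ≤ x.2.1 * x.2.2 := Nat.le_mul_of_pos_left _ h3
    exact ⟨⟨⟨by omega, by omega⟩, by omega, by omega⟩, heq, h1, h2, h3, h4⟩

lemma sum_S (n : ℕ) (f : Quad → ℚ) :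
    ∑ x ∈ S n, f x =
      ∑ m ∈ Ioo 0 n, ∑ x ∈ (Nat.divisorsAntidiagonal m) ×ˢ (Nat.divisorsAntidiagonal (n - m)), f x := by
  have hun : S n = (Ioo 0 n).biUnion
      (fun m => (Nat.divisorsAntidiagonal m) ×ˢ (Nat.divisorsAntidiagonal (n - m))) := by
    ext x
    simp only [mem_S, mem_biUnion, mem_Ioo, mem_product, Nat.mem_divisorsAntidiagonal]
    constructor
    · rintro ⟨heq, h1, h2, h3, h4⟩
      refine ⟨x.1.1 * x.1.2, ⟨Nat.mul_pos h1 h2, ?_⟩, ⟨rfl, ?_⟩, ?_, ?_⟩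
      · nlinarith
      · positivity
      · omega
      · have : 0 < x.2.1 * x.2.2 := Nat.mul_pos h3 h4
        omega
    · rintro ⟨m, ⟨hm0, hmn⟩, ⟨he1, hne1⟩, he2, hne2⟩
      have h1 : 0 < x.1.1 := by
        rcases Nat.eq_zero_or_pos x.1.1 with h | h
        · exfalso; apply hne1; rw [← he1, h, zero_mul]
        · exact h
      have h2 : 0 < x.1.2 := by
        rcases Nat.eq_zero_or_pos x.1.2 with h | h
        · exfalso; apply hne1; rw [← he1, h, mul_zero]
        · exact h
      have h3 : 0 < x.2.1 := by
        rcases Nat.eq_zero_or_pos x.2.1 with h | h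
        · exfalso; apply hne2; rw [← he2, h, zero_mul]
        · exact h
      have h4 : 0 < x.2.2 := by
        rcases Nat.eq_zero_or_pos x.2.2 with h | h
        · exfalso; apply hne2; rw [← he2, h, mul_zero]
        · exact h
      exact ⟨by omega, h1, h2, h3, h4⟩
  rw [hun, Finset.sum_biUnion]
  intro m₁ hm₁ m₂ hm₂ hne
  simp only [Finset.disjoint_left]
  intro x hx1 hx2
  simp only [Finset.mem_coe, mem_product, Nat.mem_divisorsAntidiagonal] at hx1 hx2
  exact hne (by rw [← hx1.1.1, hx2.1.1])

/-- Reindexing by the swap `((a,b),(c,e)) ↦ ((c,e),(a,b))`. -/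
lemma swap_reindex (n : ℕ) (p q : Quad → Prop) [DecidablePred p] [DecidablePred q]
    (hpq : ∀ x : Quad, q x ↔ p (x.2, x.1)) (f g : Quad → ℚ)
    (hfg : ∀ x : Quad, g x = f (x.2, x.1)) :
    ∑ x ∈ (S n).filter q, g x = ∑ x ∈ (S n).filter p, f x := by
  refine Finset.sum_nbij' (fun x => (x.2, x.1)) (fun x => (x.2, x.1)) ?_ ?_ ?_ ?_ ?_
  · rintro ⟨⟨a, b⟩, ⟨c, e⟩⟩ hx
    simp only [mem_filter, mem_S] at hx ⊢
    obtain ⟨⟨heq, h1, h2, h3, h4⟩, hq⟩ := hx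
    exact ⟨⟨by omega, h3, h4, h1, h2⟩, (hpq _).mp hq⟩
  · rintro ⟨⟨a, b⟩, ⟨c, e⟩⟩ hx
    simp only [mem_filter, mem_S] at hx ⊢
    obtain ⟨⟨heq, h1, h2, h3, h4⟩, hp⟩ := hx
    exact ⟨⟨by omega, h3, h4, h1, h2⟩, (hpq _).mpr hp⟩
  · rintro ⟨⟨a, b⟩, ⟨c, e⟩⟩ _; rfl
  · rintro ⟨⟨a, b⟩, ⟨c, e⟩⟩ _; rfl
  · intro x _; exact hfg x

/-- Reindexing by `Φ : ((a,b),(c,e)) ↦ ((a+c,b),(c,e-b))`, a bijection from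
the part of `S n` with `b < e` to the part with `c < a`. -/
lemma phi_reindex (n : ℕ) (f : Quad → ℚ) :
    ∑ x ∈ (S n).filter (fun x => x.1.2 < x.2.2),
        f ((x.1.1 + x.2.1, x.1.2), (x.2.1, x.2.2 - x.1.2)) =
      ∑ x ∈ (S n).filter (fun x => x.2.1 < x.1.1), f x := by
  refine Finset.sum_nbij' (fun x => ((x.1.1 + x.2.1, x.1.2), (x.2.1, x.2.2 - x.1.2)))
    (fun x => ((x.1.1 - x.2.1, x.1.2), (x.2.1, x.2.2 + x.1.2))) ?_ ?_ ?_ ?_ ?_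
  · rintro ⟨⟨a, b⟩, ⟨c, e⟩⟩ hx
    simp only [mem_filter, mem_S] at hx ⊢
    obtain ⟨⟨heq, h1, h2, h3, h4⟩, hbe⟩ := hx
    refine ⟨⟨?_, by omega, h2, h3, by omega⟩, by omega⟩
    obtain ⟨k, rfl⟩ : ∃ k, e = b + k := ⟨e - b, by omega⟩
    rw [← heq, Nat.add_sub_cancel_left]
    ring
  · rintro ⟨⟨a, b⟩, ⟨c, e⟩⟩ hx
    simp only [mem_filter, mem_S] at hx ⊢
    obtain ⟨⟨heq, h1, h2, h3, h4⟩, hca⟩ := hx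
    refine ⟨⟨?_, by omega, h2, h3, by omega⟩, by omega⟩
    obtain ⟨k, rfl⟩ : ∃ k, a = c + k := ⟨a - c, by omega⟩
    rw [← heq, Nat.add_sub_cancel_left]
    ring
  · rintro ⟨⟨a, b⟩, ⟨c, e⟩⟩ hx
    simp only [mem_filter, mem_S] at hx
    obtain ⟨⟨heq, h1, h2, h3, h4⟩, hbe⟩ := hx
    simp only [Prod.mk.injEq, and_true, true_and]
    omega
  · rintro ⟨⟨a, b⟩, ⟨c, e⟩⟩ hx
    simp only [mem_filter, mem_S] at hx
    obtain ⟨⟨heq, h1, h2, h3, h4⟩, hca⟩ := hx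
    simp only [Prod.mk.injEq, and_true, true_and]
    omega
  · intro x _; rfl

/-- Parametrization of the diagonal `a = c` of `S n`. -/
lemma diag_first (n : ℕ) (f : ℕ → ℕ → ℕ → ℚ) :
    ∑ x ∈ (S n).filter (fun x => x.1.1 = x.2.1), f x.1.1 x.1.2 x.2.2 =
      ∑ p ∈ Nat.divisorsAntidiagonal n, ∑ b ∈ Ioo 0 p.2, f p.1 b (p.2 - b) := by
  rw [Finset.sum_sigma']
  refine Finset.sum_nbij' (fun x => ⟨(x.1.1, x.1.2 + x.2.2), x.1.2⟩)
    (fun y => ((y.1.1, y.2), (y.1.1, y.1.2 - y.2))) ?_ ?_ ?_ ?_ ?_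
  · rintro ⟨⟨a, b⟩, ⟨c, e⟩⟩ hx
    simp only [mem_filter, mem_S] at hx
    obtain ⟨⟨heq, h1, h2, h3, h4⟩, hac⟩ := hx
    simp only [Finset.mem_sigma, Nat.mem_divisorsAntidiagonal, mem_Ioo]
    constructor
    · constructor
      · rw [← heq, hac]; ring
      · have := Nat.mul_pos h1 h2
        omega
    · omega
  · rintro ⟨⟨a, s⟩, b⟩ hy
    simp only [Finset.mem_sigma, Nat.mem_divisorsAntidiagonal, mem_Ioo] at hy
    obtain ⟨⟨heq, hn0⟩, hb0, hbs⟩ := hy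
    simp only [mem_filter, mem_S]
    have h1 : 0 < a := by
      rcases Nat.eq_zero_or_pos a with h | h
      · exfalso; apply hn0; rw [← heq, h, zero_mul]
      · exact h
    refine ⟨⟨?_, h1, hb0, h1, by omega⟩, trivial⟩
    obtain ⟨k, rfl⟩ : ∃ k, s = b + k := ⟨s - b, by omega⟩
    rw [← heq, Nat.add_sub_cancel_left]
    ring
  · rintro ⟨⟨a, b⟩, ⟨c, e⟩⟩ hx
    simp only [mem_filter, mem_S] at hx
    obtain ⟨⟨heq, h1, h2, h3, h4⟩, hac⟩ := hx
    simp only [Prod.mk.injEq, and_true, true_and]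
    omega
  · rintro ⟨⟨a, s⟩, b⟩ hy
    simp only [Finset.mem_sigma, Nat.mem_divisorsAntidiagonal, mem_Ioo] at hy
    simp only [Sigma.mk.inj_iff, Prod.mk.injEq, heq_eq_eq, and_true, true_and]
    omega
  · rintro ⟨⟨a, b⟩, ⟨c, e⟩⟩ hx
    simp only [mem_filter, mem_S] at hx
    obtain ⟨⟨heq, h1, h2, h3, h4⟩, hac⟩ := hx
    simp only
    congr 1
    omega


/-- Parametrization of the diagonal `b = e` of `S n`. -/
lemma diag_second (n : ℕ) (f : ℕ → ℕ → ℕ → ℚ) :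
    ∑ x ∈ (S n).filter (fun x => x.1.2 = x.2.2), f x.1.1 x.1.2 x.2.1 =
      ∑ p ∈ Nat.divisorsAntidiagonal n, ∑ a ∈ Ioo 0 p.1, f a p.2 (p.1 - a) := by
  rw [Finset.sum_sigma']
  refine Finset.sum_nbij' (fun x => ⟨(x.1.1 + x.2.1, x.1.2), x.1.1⟩)
    (fun y => ((y.2, y.1.2), (y.1.1 - y.2, y.1.2))) ?_ ?_ ?_ ?_ ?_
  · rintro ⟨⟨a, b⟩, ⟨c, e⟩⟩ hx
    simp only [mem_filter, mem_S] at hx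
    obtain ⟨⟨heq, h1, h2, h3, h4⟩, hbe⟩ := hx
    simp only [Finset.mem_sigma, Nat.mem_divisorsAntidiagonal, mem_Ioo]
    constructor
    · constructor
      · rw [← heq, hbe]; ring
      · have := Nat.mul_pos h1 h2
        omega
    · omega
  · rintro ⟨⟨s, t⟩, a⟩ hy
    simp only [Finset.mem_sigma, Nat.mem_divisorsAntidiagonal, mem_Ioo] at hy
    obtain ⟨⟨heq, hn0⟩, ha0, has⟩ := hy
    simp only [mem_filter, mem_S]
    have h2 : 0 < t := by
      rcases Nat.eq_zero_or_pos t with h | h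
      · exfalso; apply hn0; rw [← heq, h, mul_zero]
      · exact h
    refine ⟨⟨?_, ha0, h2, by omega, h2⟩, trivial⟩
    obtain ⟨k, rfl⟩ : ∃ k, s = a + k := ⟨s - a, by omega⟩
    rw [← heq, Nat.add_sub_cancel_left]
    ring
  · rintro ⟨⟨a, b⟩, ⟨c, e⟩⟩ hx
    simp only [mem_filter, mem_S] at hx
    obtain ⟨⟨heq, h1, h2, h3, h4⟩, hbe⟩ := hx
    simp only [Prod.mk.injEq, and_true, true_and]
    omega
  · rintro ⟨⟨s, t⟩, a⟩ hy
    simp only [Finset.mem_sigma, Nat.mem_divisorsAntidiagonal, mem_Ioo] at hy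
    simp only [Sigma.mk.inj_iff, Prod.mk.injEq, heq_eq_eq, and_true, true_and]
    omega
  · rintro ⟨⟨a, b⟩, ⟨c, e⟩⟩ hx
    simp only [mem_filter, mem_S] at hx
    obtain ⟨⟨heq, h1, h2, h3, h4⟩, hbe⟩ := hx
    simp only
    congr 1
    omega


/-- Split a sum into three according to the trichotomy `g < h`, `g = h`, `h < g`. -/
lemma split3 {α : Type*} (s : Finset α) (g h : α → ℕ) (f : α → ℚ) :
    ∑ x ∈ s, f x =
      ∑ x ∈ s.filter (fun x => g x < h x), f x +
      ∑ x ∈ s.filter (fun x => g x = h x), f x +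
      ∑ x ∈ s.filter (fun x => h x < g x), f x := by
  classical
  have h1 := Finset.sum_filter_add_sum_filter_not s (fun x => g x < h x) f
  have h2 := Finset.sum_filter_add_sum_filter_not
    (s.filter (fun x => ¬ g x < h x)) (fun x => g x = h x) f
  rw [Finset.filter_filter, Finset.filter_filter] at h2
  have e1 : s.filter (fun x => ¬ g x < h x ∧ g x = h x)
      = s.filter (fun x => g x = h x) := by
    ext x
    simp only [mem_filter]
    constructor
    · rintro ⟨hs, _, hgh⟩; exact ⟨hs, hgh⟩
    · rintro ⟨hs, hgh⟩; exact ⟨hs, by omega, hgh⟩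
  have e2 : s.filter (fun x => ¬ g x < h x ∧ ¬ g x = h x)
      = s.filter (fun x => h x < g x) := by
    ext x
    simp only [mem_filter]
    constructor
    · rintro ⟨hs, hgh₁, hgh₂⟩; exact ⟨hs, by omega⟩
    · rintro ⟨hs, hgh⟩; exact ⟨hs, by omega, by omega⟩
  rw [e1, e2] at h2
  linarith

lemma Ioo_zero_erase (m : ℕ) : Ioo 0 m = (range m).erase 0 := by
  ext x
  simp only [mem_Ioo, mem_erase, mem_range]
  omega

lemma sum_Ioo_id (m : ℕ) :
    ∑ x ∈ Ioo 0 m, (x : ℚ) = ((m : ℚ) ^ 2 - m) / 2 := by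
  rw [Ioo_zero_erase, Finset.sum_erase _ (by norm_num)]
  induction m with
  | zero => simp
  | succ m ih =>
    rw [Finset.sum_range_succ, ih]
    push_cast
    ring

lemma sum_Ioo_sq (m : ℕ) :
    ∑ x ∈ Ioo 0 m, (x : ℚ) ^ 2 = (2 * (m : ℚ) ^ 3 - 3 * (m : ℚ) ^ 2 + m) / 6 := by
  rw [Ioo_zero_erase, Finset.sum_erase _ (by norm_num)]
  induction m with
  | zero => simp
  | succ m ih =>
    rw [Finset.sum_range_succ, ih]
    push_cast
    ring

end Besge

/-- `∑_{d₁+d₂=d, d₁,d₂≥1} σ₁(d₁)σ₁(d₂) = (-d/2 + 1/12)·σ₁(d) + (5/12)·σ₃(d)`. -/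
theorem convolution_sigma1 (d : ℕ) (hd : 0 < d) :
    ∑ d₁ ∈ Finset.Ioo 0 d, sigmaQ 1 d₁ * sigmaQ 1 (d - d₁) =
      (-(d : ℚ) / 2 + 1 / 12) * sigmaQ 1 d + (5 / 12) * sigmaQ 3 d := by
  classical
  have hsig : ∀ k m : ℕ, sigmaQ k m = ∑ p ∈ Nat.divisorsAntidiagonal m, (p.1 : ℚ) ^ k := by
    intro k m
    rw [sigmaQ, ← Nat.sum_divisorsAntidiagonal (f := fun a _ => (a : ℚ) ^ k)]
  -- Step 1 : the LHS as a sum over quadruples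
  have hLHS : ∑ d₁ ∈ Finset.Ioo 0 d, sigmaQ 1 d₁ * sigmaQ 1 (d - d₁)
      = ∑ x ∈ Besge.S d, ((x.1.1 : ℚ) * (x.2.1 : ℚ)) := by
    rw [Besge.sum_S]
    refine Finset.sum_congr rfl fun m _ => ?_
    rw [hsig, hsig, Finset.sum_mul_sum, Finset.sum_product]
    simp [pow_one]
  -- abbreviations for regions (as filter predicates written out each time)
  -- h1 : trichotomy for a vs c
  have h1 : ∑ x ∈ Besge.S d, ((x.1.1 : ℚ) * (x.2.1 : ℚ)) =
      ∑ x ∈ (Besge.S d).filter (fun x => x.1.1 < x.2.1), ((x.1.1 : ℚ) * (x.2.1 : ℚ)) +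
      ∑ x ∈ (Besge.S d).filter (fun x => x.1.1 = x.2.1), ((x.1.1 : ℚ) * (x.2.1 : ℚ)) +
      ∑ x ∈ (Besge.S d).filter (fun x => x.2.1 < x.1.1), ((x.1.1 : ℚ) * (x.2.1 : ℚ)) :=
    Besge.split3 (Besge.S d) (fun x => x.1.1) (fun x => x.2.1)
      (fun x => (x.1.1 : ℚ) * (x.2.1 : ℚ))
  have h3 : ∑ x ∈ Besge.S d, ((x.1.1 : ℚ) * (x.2.1 : ℚ)) =
      ∑ x ∈ (Besge.S d).filter (fun x => x.1.2 < x.2.2), ((x.1.1 : ℚ) * (x.2.1 : ℚ)) +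
      ∑ x ∈ (Besge.S d).filter (fun x => x.1.2 = x.2.2), ((x.1.1 : ℚ) * (x.2.1 : ℚ)) +
      ∑ x ∈ (Besge.S d).filter (fun x => x.2.2 < x.1.2), ((x.1.1 : ℚ) * (x.2.1 : ℚ)) :=
    Besge.split3 (Besge.S d) (fun x => x.1.2) (fun x => x.2.2)
      (fun x => (x.1.1 : ℚ) * (x.2.1 : ℚ))
  have h8 : ∑ x ∈ Besge.S d, ((x.1.1 : ℚ) ^ 2) =
      ∑ x ∈ (Besge.S d).filter (fun x => x.1.1 < x.2.1), ((x.1.1 : ℚ) ^ 2) +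
      ∑ x ∈ (Besge.S d).filter (fun x => x.1.1 = x.2.1), ((x.1.1 : ℚ) ^ 2) +
      ∑ x ∈ (Besge.S d).filter (fun x => x.2.1 < x.1.1), ((x.1.1 : ℚ) ^ 2) :=
    Besge.split3 (Besge.S d) (fun x => x.1.1) (fun x => x.2.1) (fun x => (x.1.1 : ℚ) ^ 2)
  have h10 : ∑ x ∈ Besge.S d, ((x.1.1 : ℚ) ^ 2) =
      ∑ x ∈ (Besge.S d).filter (fun x => x.1.2 < x.2.2), ((x.1.1 : ℚ) ^ 2) +
      ∑ x ∈ (Besge.S d).filter (fun x => x.1.2 = x.2.2), ((x.1.1 : ℚ) ^ 2) +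
      ∑ x ∈ (Besge.S d).filter (fun x => x.2.2 < x.1.2), ((x.1.1 : ℚ) ^ 2) :=
    Besge.split3 (Besge.S d) (fun x => x.1.2) (fun x => x.2.2) (fun x => (x.1.1 : ℚ) ^ 2)
  -- h2 : swap symmetry a<c vs c<a for a*c
  have h2 : ∑ x ∈ (Besge.S d).filter (fun x => x.1.1 < x.2.1), ((x.1.1 : ℚ) * (x.2.1 : ℚ))
      = ∑ x ∈ (Besge.S d).filter (fun x => x.2.1 < x.1.1), ((x.1.1 : ℚ) * (x.2.1 : ℚ)) := by
    exact Besge.swap_reindex d (fun x => x.2.1 < x.1.1) (fun x => x.1.1 < x.2.1)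
      (fun x => Iff.rfl) (fun x => (x.1.1 : ℚ) * (x.2.1 : ℚ)) (fun x => (x.1.1 : ℚ) * (x.2.1 : ℚ))
      (fun x => mul_comm _ _)
  -- h4 : swap symmetry e<b vs b<e for a*c
  have h4 : ∑ x ∈ (Besge.S d).filter (fun x => x.2.2 < x.1.2), ((x.1.1 : ℚ) * (x.2.1 : ℚ))
      = ∑ x ∈ (Besge.S d).filter (fun x => x.1.2 < x.2.2), ((x.1.1 : ℚ) * (x.2.1 : ℚ)) := by
    exact Besge.swap_reindex d (fun x => x.1.2 < x.2.2) (fun x => x.2.2 < x.1.2)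
      (fun x => Iff.rfl) (fun x => (x.1.1 : ℚ) * (x.2.1 : ℚ)) (fun x => (x.1.1 : ℚ) * (x.2.1 : ℚ))
      (fun x => mul_comm _ _)
  -- h9 : swap symmetry : sum of a² over a<c equals sum of c² over c<a
  have h9 : ∑ x ∈ (Besge.S d).filter (fun x => x.1.1 < x.2.1), ((x.1.1 : ℚ) ^ 2)
      = ∑ x ∈ (Besge.S d).filter (fun x => x.2.1 < x.1.1), ((x.2.1 : ℚ) ^ 2) := by
    exact Besge.swap_reindex d (fun x => x.2.1 < x.1.1) (fun x => x.1.1 < x.2.1)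
      (fun x => Iff.rfl) (fun x => (x.2.1 : ℚ) ^ 2) (fun x => (x.1.1 : ℚ) ^ 2)
      (fun x => rfl)
  -- h11 : swap symmetry : sum of a² over e<b equals sum of c² over b<e
  have h11 : ∑ x ∈ (Besge.S d).filter (fun x => x.2.2 < x.1.2), ((x.1.1 : ℚ) ^ 2)
      = ∑ x ∈ (Besge.S d).filter (fun x => x.1.2 < x.2.2), ((x.2.1 : ℚ) ^ 2) := by
    exact Besge.swap_reindex d (fun x => x.1.2 < x.2.2) (fun x => x.2.2 < x.1.2)
      (fun x => Iff.rfl) (fun x => (x.2.1 : ℚ) ^ 2) (fun x => (x.1.1 : ℚ) ^ 2)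
      (fun x => rfl)
  -- h5, h6, h7 : the Φ reindexing identities
  have h5 : ∑ x ∈ (Besge.S d).filter (fun x => x.1.2 < x.2.2), ((x.1.1 : ℚ) * (x.2.1 : ℚ)) +
      ∑ x ∈ (Besge.S d).filter (fun x => x.1.2 < x.2.2), ((x.2.1 : ℚ) ^ 2) =
      ∑ x ∈ (Besge.S d).filter (fun x => x.2.1 < x.1.1), ((x.1.1 : ℚ) * (x.2.1 : ℚ)) := by
    rw [← Besge.phi_reindex d (fun x => (x.1.1 : ℚ) * (x.2.1 : ℚ)), ← Finset.sum_add_distrib]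
    refine Finset.sum_congr rfl fun x _ => ?_
    push_cast
    ring
  have h6 : ∑ x ∈ (Besge.S d).filter (fun x => x.1.2 < x.2.2), ((x.1.1 : ℚ) ^ 2) +
      2 * ∑ x ∈ (Besge.S d).filter (fun x => x.1.2 < x.2.2), ((x.1.1 : ℚ) * (x.2.1 : ℚ)) +
      ∑ x ∈ (Besge.S d).filter (fun x => x.1.2 < x.2.2), ((x.2.1 : ℚ) ^ 2) =
      ∑ x ∈ (Besge.S d).filter (fun x => x.2.1 < x.1.1), ((x.1.1 : ℚ) ^ 2) := by
    rw [← Besge.phi_reindex d (fun x => (x.1.1 : ℚ) ^ 2), Finset.mul_sum,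
      ← Finset.sum_add_distrib, ← Finset.sum_add_distrib]
    refine Finset.sum_congr rfl fun x _ => ?_
    push_cast
    ring
  have h7 : ∑ x ∈ (Besge.S d).filter (fun x => x.1.2 < x.2.2), ((x.2.1 : ℚ) ^ 2) =
      ∑ x ∈ (Besge.S d).filter (fun x => x.2.1 < x.1.1), ((x.2.1 : ℚ) ^ 2) := by
    simpa using Besge.phi_reindex d (fun x => (x.2.1 : ℚ) ^ 2)
  -- h12 : on the diagonal a = c, a*c = a²
  have h12 : ∑ x ∈ (Besge.S d).filter (fun x => x.1.1 = x.2.1), ((x.1.1 : ℚ) * (x.2.1 : ℚ)) =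
      ∑ x ∈ (Besge.S d).filter (fun x => x.1.1 = x.2.1), ((x.1.1 : ℚ) ^ 2) := by
    refine Finset.sum_congr rfl fun x hx => ?_
    have h := (Finset.mem_filter.mp hx).2
    rw [← h, sq]
  -- diagonal evaluations
  have hD : ∑ x ∈ (Besge.S d).filter (fun x => x.1.1 = x.2.1), ((x.1.1 : ℚ) ^ 2) =
      ∑ p ∈ Nat.divisorsAntidiagonal d, (((p.2 : ℚ) - 1) * (p.1 : ℚ) ^ 2) := by
    rw [Besge.diag_first d (fun a _ _ => (a : ℚ) ^ 2)]
    refine Finset.sum_congr rfl fun p hp => ?_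
    have hp2 : 1 ≤ p.2 := Nat.pos_of_ne_zero (Nat.ne_zero_of_mem_divisorsAntidiagonal hp).2
    rw [Finset.sum_const, Nat.card_Ioo, nsmul_eq_mul, Nat.sub_zero, Nat.cast_sub hp2]
    push_cast
    ring
  have hP : ∑ x ∈ (Besge.S d).filter (fun x => x.1.2 = x.2.2), ((x.1.1 : ℚ) ^ 2) =
      ∑ p ∈ Nat.divisorsAntidiagonal d,
        ((2 * (p.1 : ℚ) ^ 3 - 3 * (p.1 : ℚ) ^ 2 + (p.1 : ℚ)) / 6) := by
    rw [Besge.diag_second d (fun a _ _ => (a : ℚ) ^ 2)]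
    exact Finset.sum_congr rfl fun p _ => Besge.sum_Ioo_sq p.1
  have hG : ∑ x ∈ (Besge.S d).filter (fun x => x.1.2 = x.2.2), ((x.1.1 : ℚ) * (x.2.1 : ℚ)) =
      ∑ p ∈ Nat.divisorsAntidiagonal d, (((p.1 : ℚ) ^ 3 - (p.1 : ℚ)) / 6) := by
    rw [Besge.diag_second d (fun a _ c => (a : ℚ) * (c : ℚ))]
    refine Finset.sum_congr rfl fun p _ => ?_
    have hc : ∀ a ∈ Ioo 0 p.1, (a : ℚ) * ((p.1 - a : ℕ) : ℚ) = (p.1 : ℚ) * (a : ℚ) - (a : ℚ) ^ 2 := by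
      intro a ha
      have h2 := (Finset.mem_Ioo.mp ha).2
      rw [Nat.cast_sub (by omega)]
      ring
    rw [Finset.sum_congr rfl hc, Finset.sum_sub_distrib, ← Finset.mul_sum,
      Besge.sum_Ioo_id, Besge.sum_Ioo_sq]
    ring
  -- final per-divisor computation
  have hfin : ∑ p ∈ Nat.divisorsAntidiagonal d,
        ((2 * (p.1 : ℚ) ^ 3 - 3 * (p.1 : ℚ) ^ 2 + (p.1 : ℚ)) / 6) -
      (∑ p ∈ Nat.divisorsAntidiagonal d, (((p.2 : ℚ) - 1) * (p.1 : ℚ) ^ 2)) / 2 +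
      (∑ p ∈ Nat.divisorsAntidiagonal d, (((p.1 : ℚ) ^ 3 - (p.1 : ℚ)) / 6)) / 2 =
      (-(d : ℚ) / 2 + 1 / 12) * ∑ p ∈ Nat.divisorsAntidiagonal d, ((p.1 : ℚ) ^ 1) +
      5 / 12 * ∑ p ∈ Nat.divisorsAntidiagonal d, ((p.1 : ℚ) ^ 3) := by
    rw [Finset.mul_sum, Finset.mul_sum, Finset.sum_div, Finset.sum_div,
      ← Finset.sum_sub_distrib, ← Finset.sum_add_distrib, ← Finset.sum_add_distrib]
    refine Finset.sum_congr rfl fun p hp => ?_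
    have hst : (p.1 : ℚ) * (p.2 : ℚ) = (d : ℚ) := by
      exact_mod_cast congrArg (Nat.cast : ℕ → ℚ) (Nat.mem_divisorsAntidiagonal.mp hp).1
    linear_combination (-(p.1 : ℚ) / 2) * hst
  rw [hLHS, hsig 1 d, hsig 3 d]
  linarith [h1, h2, h3, h4, h5, h6, h7, h8, h9, h10, h11, h12, hD, hP, hG, hfin]
end

section
/- For every positive integer d, Σ_{d₁+d₂=d, d₁,d₂≥1} d₁·σ₁(d₁)σ₁(d₂) = (-d²/4 + d/24)·σ₁(d) + (5/24)·d·σ₃(d). -/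
open Finset Nat

def Q (n : ℕ) : Finset ((ℕ×ℕ)×(ℕ×ℕ)) :=
  ((range (n+1) ×ˢ range (n+1)) ×ˢ (range (n+1) ×ˢ range (n+1))).filter
    (fun p => 0 < p.1.1 ∧ 0 < p.1.2 ∧ 0 < p.2.1 ∧ 0 < p.2.2 ∧ p.1.1*p.1.2 + p.2.1*p.2.2 = n)

lemma mem_Q {n : ℕ} {p : (ℕ×ℕ)×(ℕ×ℕ)} :
    p ∈ Q n ↔ 0 < p.1.1 ∧ 0 < p.1.2 ∧ 0 < p.2.1 ∧ 0 < p.2.2 ∧ p.1.1*p.1.2 + p.2.1*p.2.2 = n := by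
  simp only [Q, Finset.mem_filter, Finset.mem_product, Finset.mem_range]
  constructor
  · tauto
  · rintro ⟨h1, h2, h3, h4, h5⟩
    have ha : p.1.1 ≤ n := le_trans (Nat.le_mul_of_pos_right _ h2) (by omega)
    have hx : p.1.2 ≤ n := le_trans (Nat.le_mul_of_pos_left _ h1) (by omega)
    have hb : p.2.1 ≤ n := le_trans (Nat.le_mul_of_pos_right _ h4) (by omega)
    have hy : p.2.2 ≤ n := le_trans (Nat.le_mul_of_pos_left _ h3) (by omega)
    exact ⟨⟨⟨by omega, by omega⟩, by omega, by omega⟩, h1, h2, h3, h4, h5⟩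

/-- swap symmetry on filtered subsets of Q -/
lemma Q_swap {n : ℕ} (P : (ℕ×ℕ)×(ℕ×ℕ) → Prop) [DecidablePred P] (F : (ℕ×ℕ)×(ℕ×ℕ) → ℚ) :
    ∑ p ∈ (Q n).filter P, F p = ∑ p ∈ (Q n).filter (fun p => P (p.2, p.1)), F (p.2, p.1) := by
  apply Finset.sum_nbij' (fun p => (p.2, p.1)) (fun p => (p.2, p.1)) <;>
    simp only [Finset.mem_filter, mem_Q] <;> intros <;> simp_all <;> omega

/-- Liouville's bijection: (a,x,b,y) with a>b ↦ (a-b, x, b, y+x), inverse (a+b,x,b,y-x). -/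
lemma Q_bij {n : ℕ} (F : (ℕ×ℕ)×(ℕ×ℕ) → ℚ) :
    ∑ p ∈ (Q n).filter (fun p => p.2.1 < p.1.1), F p
      = ∑ p ∈ (Q n).filter (fun p => p.1.2 < p.2.2),
          F ((p.1.1 + p.2.1, p.1.2), (p.2.1, p.2.2 - p.1.2)) := by
  apply Finset.sum_nbij' (fun p => ((p.1.1 - p.2.1, p.1.2), (p.2.1, p.2.2 + p.1.2)))
    (fun p => ((p.1.1 + p.2.1, p.1.2), (p.2.1, p.2.2 - p.1.2)))
  · rintro ⟨⟨a,x⟩,⟨b,y⟩⟩ hp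
    simp only [Finset.mem_filter, mem_Q] at hp ⊢
    obtain ⟨⟨h1,h2,h3,h4,h5⟩,h6⟩ := hp
    obtain ⟨c, rfl⟩ : ∃ c, a = b + c := ⟨a - b, by omega⟩
    refine ⟨⟨by omega, h2, h3, by omega, ?_⟩, by omega⟩
    simp only [Nat.add_sub_cancel_left]
    calc c*x + b*(y+x) = (b+c)*x + b*y := by ring
      _ = n := h5
  · rintro ⟨⟨a,x⟩,⟨b,y⟩⟩ hp
    simp only [Finset.mem_filter, mem_Q] at hp ⊢
    obtain ⟨⟨h1,h2,h3,h4,h5⟩,h6⟩ := hp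
    obtain ⟨c, rfl⟩ : ∃ c, y = x + c := ⟨y - x, by omega⟩
    refine ⟨⟨by omega, h2, h3, by omega, ?_⟩, by omega⟩
    simp only [Nat.add_sub_cancel_left]
    calc (a+b)*x + b*c = a*x + b*(x+c) := by ring
      _ = n := h5
  · rintro ⟨⟨a,x⟩,⟨b,y⟩⟩ hp
    simp only [Finset.mem_filter, mem_Q] at hp
    dsimp only
    rw [show a - b + b = a by omega, show y + x - x = y by omega]
  · rintro ⟨⟨a,x⟩,⟨b,y⟩⟩ hp
    simp only [Finset.mem_filter, mem_Q] at hp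
    dsimp only
    rw [show a + b - b = a by omega, show y - x + x = y by omega]
  · rintro ⟨⟨a,x⟩,⟨b,y⟩⟩ hp
    simp only [Finset.mem_filter, mem_Q] at hp
    dsimp only
    rw [show a - b + b = a by omega, show y + x - x = y by omega]

/-- trichotomy split of a sum -/
lemma tri_split {α : Type*} [DecidableEq α] (s : Finset α) (f : α → ℚ) (g h : α → ℕ) :
    ∑ p ∈ s, f p = ∑ p ∈ s.filter (fun p => h p < g p), f p
      + ∑ p ∈ s.filter (fun p => g p < h p), f p
      + ∑ p ∈ s.filter (fun p => g p = h p), f p := by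
  rw [← Finset.sum_filter_add_sum_filter_not s (fun p => h p < g p) f]
  rw [← Finset.sum_filter_add_sum_filter_not (s.filter (fun p => ¬ h p < g p)) (fun p => g p < h p) f]
  rw [Finset.filter_filter, Finset.filter_filter]
  rw [add_assoc]
  congr 2
  · exact Finset.sum_congr (Finset.filter_congr (by intros; simp; omega)) (fun _ _ => rfl)
  · exact Finset.sum_congr (Finset.filter_congr (by intros; simp; omega)) (fun _ _ => rfl)

lemma pos_of_mul {a b : ℕ} (h : 0 < a * b) : 0 < a ∧ 0 < b := by
  rcases Nat.eq_zero_or_pos a with rfl | ha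
  · simp at h
  rcases Nat.eq_zero_or_pos b with rfl | hb
  · simp at h
  exact ⟨ha, hb⟩

/-- sum over Q as convolution of divisor sums -/
lemma Q_conv {n : ℕ} (F : (ℕ×ℕ)×(ℕ×ℕ) → ℚ) :
    ∑ p ∈ Q n, F p
      = ∑ d₁ ∈ Finset.Ioo 0 n, ∑ u ∈ Nat.divisorsAntidiagonal d₁,
          ∑ v ∈ Nat.divisorsAntidiagonal (n - d₁), F (u, v) := by
  have : ∀ d₁ ∈ Finset.Ioo 0 n, ∑ u ∈ Nat.divisorsAntidiagonal d₁,
          ∑ v ∈ Nat.divisorsAntidiagonal (n - d₁), F (u, v)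
        = ∑ w ∈ Nat.divisorsAntidiagonal d₁ ×ˢ Nat.divisorsAntidiagonal (n - d₁), F w := by
    intros; rw [Finset.sum_product]
  rw [Finset.sum_congr rfl this,
    ← Finset.sum_sigma (Finset.Ioo 0 n)
      (fun d₁ => Nat.divisorsAntidiagonal d₁ ×ˢ Nat.divisorsAntidiagonal (n - d₁))
      (fun x => F x.2)]
  apply Finset.sum_nbij' (fun p => (⟨p.1.1 * p.1.2, p⟩ : Σ _ : ℕ, (ℕ×ℕ)×(ℕ×ℕ)))
    (fun w => w.2)
  · rintro ⟨⟨a,x⟩,⟨b,y⟩⟩ hp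
    simp only [mem_Q] at hp
    obtain ⟨h1,h2,h3,h4,h5⟩ := hp
    have hby : 0 < b * y := Nat.mul_pos h3 h4
    have hax : 0 < a * x := Nat.mul_pos h1 h2
    rw [Finset.mem_sigma, Finset.mem_product, Finset.mem_Ioo,
      Nat.mem_divisorsAntidiagonal, Nat.mem_divisorsAntidiagonal]
    dsimp only
    refine ⟨⟨by omega, by omega⟩, ⟨rfl, by omega⟩, by omega, by omega⟩
  · rintro ⟨d₁, ⟨⟨a,x⟩,⟨b,y⟩⟩⟩ hw
    simp only [Finset.mem_sigma, Finset.mem_Ioo, Finset.mem_product,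
      Nat.mem_divisorsAntidiagonal] at hw
    obtain ⟨⟨hd1, hd2⟩, ⟨hax, _⟩, hby, hn⟩ := hw
    simp only [mem_Q]
    have hax0 : 0 < a * x := by omega
    have hby0 : 0 < b * y := by omega
    obtain ⟨h1, h2⟩ := pos_of_mul hax0
    obtain ⟨h3, h4⟩ := pos_of_mul hby0
    exact ⟨h1, h2, h3, h4, by omega⟩
  · rintro ⟨⟨a,x⟩,⟨b,y⟩⟩ hp; rfl
  · rintro ⟨d₁, ⟨⟨a,x⟩,⟨b,y⟩⟩⟩ hw
    simp only [Finset.mem_sigma, Finset.mem_Ioo, Finset.mem_product,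
      Nat.mem_divisorsAntidiagonal] at hw
    obtain ⟨-, ⟨hax, -⟩, -⟩ := hw
    subst hax
    rfl
  · intros; rfl

/-- diagonal a = b : parametrized by divisor pairs (d,s) with d*s=n and 0<x<s -/
lemma Q_diag_ab {n : ℕ} (F : (ℕ×ℕ)×(ℕ×ℕ) → ℚ) :
    ∑ p ∈ (Q n).filter (fun p => p.1.1 = p.2.1), F p
      = ∑ u ∈ Nat.divisorsAntidiagonal n, ∑ x ∈ Finset.Ioo 0 u.2,
          F ((u.1, x), (u.1, u.2 - x)) := by
  rw [← Finset.sum_sigma (Nat.divisorsAntidiagonal n) (fun u => Finset.Ioo 0 u.2)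
      (fun w => F ((w.1.1, w.2), (w.1.1, w.1.2 - w.2)))]
  apply Finset.sum_nbij' (fun p => (⟨(p.1.1, p.1.2 + p.2.2), p.1.2⟩ : Σ _ : ℕ×ℕ, ℕ))
    (fun w => ((w.1.1, w.2), (w.1.1, w.1.2 - w.2)))
  · rintro ⟨⟨a,x⟩,⟨b,y⟩⟩ hp
    simp only [Finset.mem_filter, mem_Q] at hp
    obtain ⟨⟨h1,h2,h3,h4,h5⟩,h6⟩ := hp
    subst h6
    rw [Finset.mem_sigma, Nat.mem_divisorsAntidiagonal, Finset.mem_Ioo]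
    dsimp only
    have hax := Nat.mul_pos h1 h2
    have hay := Nat.mul_pos h1 h4
    rw [Nat.mul_add]
    exact ⟨⟨h5, by omega⟩, h2, by omega⟩
  · rintro ⟨⟨d,s⟩, x⟩ hw
    simp only [Finset.mem_sigma, Nat.mem_divisorsAntidiagonal, Finset.mem_Ioo] at hw
    obtain ⟨⟨hds, hn⟩, hx1, hx2⟩ := hw
    simp only [Finset.mem_filter, mem_Q]
    have hd : 0 < d := (pos_of_mul (by omega : 0 < d * s)).1
    refine ⟨⟨hd, hx1, hd, by omega, ?_⟩, trivial⟩
    rw [← Nat.mul_add, show x + (s - x) = s by omega]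
    exact hds
  · rintro ⟨⟨a,x⟩,⟨b,y⟩⟩ hp
    simp only [Finset.mem_filter, mem_Q] at hp
    obtain ⟨⟨h1,h2,h3,h4,h5⟩,h6⟩ := hp
    try dsimp only at h6 ⊢
    rw [h6, show x + y - x = y by omega]
  · rintro ⟨⟨d,s⟩, x⟩ hw
    simp only [Finset.mem_sigma, Nat.mem_divisorsAntidiagonal, Finset.mem_Ioo] at hw
    dsimp only
    rw [show x + (s - x) = s by omega]
  · rintro ⟨⟨a,x⟩,⟨b,y⟩⟩ hp
    simp only [Finset.mem_filter, mem_Q] at hp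
    obtain ⟨⟨h1,h2,h3,h4,h5⟩,h6⟩ := hp
    try dsimp only at h6 ⊢
    rw [h6, show x + y - x = y by omega]

/-- diagonal x = y : parametrized by divisor pairs (x,s) with x*s=n and 0<a<s -/
lemma Q_diag_xy {n : ℕ} (F : (ℕ×ℕ)×(ℕ×ℕ) → ℚ) :
    ∑ p ∈ (Q n).filter (fun p => p.1.2 = p.2.2), F p
      = ∑ u ∈ Nat.divisorsAntidiagonal n, ∑ a ∈ Finset.Ioo 0 u.2,
          F ((a, u.1), (u.2 - a, u.1)) := by
  rw [← Finset.sum_sigma (Nat.divisorsAntidiagonal n) (fun u => Finset.Ioo 0 u.2)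
      (fun w => F ((w.2, w.1.1), (w.1.2 - w.2, w.1.1)))]
  apply Finset.sum_nbij' (fun p => (⟨(p.1.2, p.1.1 + p.2.1), p.1.1⟩ : Σ _ : ℕ×ℕ, ℕ))
    (fun w => ((w.2, w.1.1), (w.1.2 - w.2, w.1.1)))
  · rintro ⟨⟨a,x⟩,⟨b,y⟩⟩ hp
    simp only [Finset.mem_filter, mem_Q] at hp
    obtain ⟨⟨h1,h2,h3,h4,h5⟩,h6⟩ := hp
    subst h6
    rw [Finset.mem_sigma, Nat.mem_divisorsAntidiagonal, Finset.mem_Ioo]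
    dsimp only
    have hax := Nat.mul_pos h1 h2
    have hbx := Nat.mul_pos h3 h2
    refine ⟨⟨?_, by omega⟩, h1, by omega⟩
    calc x * (a + b) = a * x + b * x := by ring
      _ = n := h5
  · rintro ⟨⟨x,s⟩, a⟩ hw
    simp only [Finset.mem_sigma, Nat.mem_divisorsAntidiagonal, Finset.mem_Ioo] at hw
    obtain ⟨⟨hds, hn⟩, hx1, hx2⟩ := hw
    simp only [Finset.mem_filter, mem_Q]
    have hx : 0 < x := (pos_of_mul (by omega : 0 < x * s)).1
    refine ⟨⟨hx1, hx, by omega, hx, ?_⟩, trivial⟩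
    calc a * x + (s - a) * x = (a + (s - a)) * x := by ring
      _ = s * x := by rw [show a + (s - a) = s by omega]
      _ = n := by rw [Nat.mul_comm]; exact hds
  · rintro ⟨⟨a,x⟩,⟨b,y⟩⟩ hp
    simp only [Finset.mem_filter, mem_Q] at hp
    obtain ⟨⟨h1,h2,h3,h4,h5⟩,h6⟩ := hp
    try dsimp only at h6 ⊢
    rw [h6, show a + b - a = b by omega]
  · rintro ⟨⟨x,s⟩, a⟩ hw
    simp only [Finset.mem_sigma, Nat.mem_divisorsAntidiagonal, Finset.mem_Ioo] at hw
    dsimp only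
    rw [show a + (s - a) = s by omega]
  · rintro ⟨⟨a,x⟩,⟨b,y⟩⟩ hp
    simp only [Finset.mem_filter, mem_Q] at hp
    obtain ⟨⟨h1,h2,h3,h4,h5⟩,h6⟩ := hp
    try dsimp only at h6 ⊢
    rw [h6, show a + b - a = b by omega]

/-- unfiltered swap -/
lemma Q_swap' {n : ℕ} (F : (ℕ×ℕ)×(ℕ×ℕ) → ℚ) :
    ∑ p ∈ Q n, F p = ∑ p ∈ Q n, F (p.2, p.1) := by
  apply Finset.sum_nbij' (fun p => (p.2, p.1)) (fun p => (p.2, p.1)) <;>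
    simp only [mem_Q] <;> intros <;> simp_all <;> omega

lemma sum_range_id' (s : ℕ) : ∑ a ∈ Finset.range s, (a : ℚ) = s * (s - 1) / 2 := by
  induction s with
  | zero => simp
  | succ k ih => rw [Finset.sum_range_succ, ih]; push_cast; ring

lemma sum_range_sq' (s : ℕ) : ∑ a ∈ Finset.range s, (a : ℚ)^2
    = s * (s - 1) * (2 * s - 1) / 6 := by
  induction s with
  | zero => simp
  | succ k ih => rw [Finset.sum_range_succ, ih]; push_cast; ring

lemma Ioo_eq_erase (s : ℕ) : Finset.Ioo 0 s = (Finset.range s).erase 0 := by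
  rw [Finset.range_eq_Ico, Finset.Ico_erase_left]

lemma sum_Ioo_id (s : ℕ) : ∑ a ∈ Finset.Ioo 0 s, (a : ℚ) = s * (s - 1) / 2 := by
  rw [Ioo_eq_erase, Finset.sum_erase _ (by simp), sum_range_id']

lemma sum_Ioo_sq (s : ℕ) : ∑ a ∈ Finset.Ioo 0 s, (a : ℚ)^2
    = s * (s - 1) * (2 * s - 1) / 6 := by
  rw [Ioo_eq_erase, Finset.sum_erase _ (by simp), sum_range_sq']

lemma sum_Ioo_mul (s : ℕ) : ∑ a ∈ Finset.Ioo 0 s, (a : ℚ) * ((s - a : ℕ) : ℚ)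
    = ((s : ℚ)^3 - s) / 6 := by
  have h : ∀ a ∈ Finset.Ioo 0 s, (a : ℚ) * ((s - a : ℕ) : ℚ)
      = (s : ℚ) * a - (a : ℚ)^2 := by
    intro a ha
    rw [Finset.mem_Ioo] at ha
    rw [Nat.cast_sub (le_of_lt ha.2)]
    ring
  rw [Finset.sum_congr rfl h, Finset.sum_sub_distrib, ← Finset.mul_sum, sum_Ioo_id, sum_Ioo_sq]
  ring

/-- Besge's formula in raw form -/
lemma besge (n : ℕ) (hn : 0 < n) :
    ∑ p ∈ Q n, ((p.1.1 : ℚ) * p.2.1)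
      = ∑ e ∈ n.divisors, ((5 * (e:ℚ)^3 + e) / 12 - (n:ℚ) * e / 2) := by
  classical
  set fab : (ℕ×ℕ)×(ℕ×ℕ) → ℚ := fun p => (p.1.1 : ℚ) * p.2.1 with hfab
  set fa2 : (ℕ×ℕ)×(ℕ×ℕ) → ℚ := fun p => (p.1.1 : ℚ)^2 with hfa2
  set fb2 : (ℕ×ℕ)×(ℕ×ℕ) → ℚ := fun p => (p.2.1 : ℚ)^2 with hfb2
  -- trichotomy splits
  have e1 := tri_split (Q n) fab (fun p => p.1.1) (fun p => p.2.1)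
  have e2 := tri_split (Q n) fab (fun p => p.1.2) (fun p => p.2.2)
  have e3 := tri_split (Q n) fa2 (fun p => p.1.1) (fun p => p.2.1)
  have e4 := tri_split (Q n) fa2 (fun p => p.1.2) (fun p => p.2.2)
  -- swaps
  have s1 : ∑ p ∈ (Q n).filter (fun p => p.1.1 < p.2.1), fab p
      = ∑ p ∈ (Q n).filter (fun p => p.2.1 < p.1.1), fab p := by
    rw [Q_swap (fun p => p.1.1 < p.2.1) fab]
    exact Finset.sum_congr rfl (fun p _ => by simp [hfab]; ring)
  have s2 : ∑ p ∈ (Q n).filter (fun p => p.2.2 < p.1.2), fab p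
      = ∑ p ∈ (Q n).filter (fun p => p.1.2 < p.2.2), fab p := by
    rw [Q_swap (fun p => p.2.2 < p.1.2) fab]
    exact Finset.sum_congr rfl (fun p _ => by simp [hfab]; ring)
  have s3 : ∑ p ∈ (Q n).filter (fun p => p.1.1 < p.2.1), fa2 p
      = ∑ p ∈ (Q n).filter (fun p => p.2.1 < p.1.1), fb2 p := by
    rw [Q_swap (fun p => p.1.1 < p.2.1) fa2]
  have s4 : ∑ p ∈ (Q n).filter (fun p => p.2.2 < p.1.2), fa2 p
      = ∑ p ∈ (Q n).filter (fun p => p.1.2 < p.2.2), fb2 p := by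
    rw [Q_swap (fun p => p.2.2 < p.1.2) fa2]
  -- bijections
  have b1 : ∑ p ∈ (Q n).filter (fun p => p.2.1 < p.1.1), fab p
      = ∑ p ∈ (Q n).filter (fun p => p.1.2 < p.2.2), fab p
        + ∑ p ∈ (Q n).filter (fun p => p.1.2 < p.2.2), fb2 p := by
    rw [Q_bij fab, ← Finset.sum_add_distrib]
    exact Finset.sum_congr rfl (fun p _ => by simp [hfab, hfb2]; push_cast; ring)
  have b2 : ∑ p ∈ (Q n).filter (fun p => p.2.1 < p.1.1), fa2 p
      = ∑ p ∈ (Q n).filter (fun p => p.1.2 < p.2.2), fa2 p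
        + ∑ p ∈ (Q n).filter (fun p => p.1.2 < p.2.2), fb2 p
        + 2 * ∑ p ∈ (Q n).filter (fun p => p.1.2 < p.2.2), fab p := by
    rw [Q_bij fa2, Finset.mul_sum, ← Finset.sum_add_distrib, ← Finset.sum_add_distrib]
    exact Finset.sum_congr rfl (fun p _ => by simp [hfa2, hfb2, hfab]; push_cast; ring)
  have b3 : ∑ p ∈ (Q n).filter (fun p => p.2.1 < p.1.1), fb2 p
      = ∑ p ∈ (Q n).filter (fun p => p.1.2 < p.2.2), fb2 p := by
    rw [Q_bij fb2]
  -- diagonal evaluations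
  have d1 : ∑ p ∈ (Q n).filter (fun p => p.1.1 = p.2.1), fab p
      = ∑ e ∈ n.divisors, ((n:ℚ) * e - (e:ℚ)^2) := by
    rw [Q_diag_ab fab,
      ← Nat.sum_divisorsAntidiagonal (fun i j => ((n:ℚ) * i - (i:ℚ)^2)) (n := n)]
    apply Finset.sum_congr rfl
    rintro ⟨e, s⟩ hu
    rw [Nat.mem_divisorsAntidiagonal] at hu
    obtain ⟨hes, hn0⟩ := hu
    dsimp only at hes ⊢
    have hs : 0 < s := (pos_of_mul (by omega : 0 < e * s)).2
    have hcast : (e : ℚ) * (s : ℚ) = (n : ℚ) := by rw [← Nat.cast_mul, hes]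
    simp only [hfab]
    rw [Finset.sum_const, Nat.card_Ioo, nsmul_eq_mul]
    have h1 : ((s - 0 - 1 : ℕ) : ℚ) = (s : ℚ) - 1 := by
      rw [Nat.sub_zero, Nat.cast_sub hs]
      norm_num
    rw [h1]
    linear_combination (e : ℚ) * hcast
  have d2 : ∑ p ∈ (Q n).filter (fun p => p.1.1 = p.2.1), fa2 p
      = ∑ e ∈ n.divisors, ((n:ℚ) * e - (e:ℚ)^2) := by
    rw [Q_diag_ab fa2,
      ← Nat.sum_divisorsAntidiagonal (fun i j => ((n:ℚ) * i - (i:ℚ)^2)) (n := n)]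
    apply Finset.sum_congr rfl
    rintro ⟨e, s⟩ hu
    rw [Nat.mem_divisorsAntidiagonal] at hu
    obtain ⟨hes, hn0⟩ := hu
    dsimp only at hes ⊢
    have hs : 0 < s := (pos_of_mul (by omega : 0 < e * s)).2
    have hcast : (e : ℚ) * (s : ℚ) = (n : ℚ) := by rw [← Nat.cast_mul, hes]
    simp only [hfa2]
    rw [Finset.sum_const, Nat.card_Ioo, nsmul_eq_mul]
    have h1 : ((s - 0 - 1 : ℕ) : ℚ) = (s : ℚ) - 1 := by
      rw [Nat.sub_zero, Nat.cast_sub hs]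
      norm_num
    rw [h1]
    linear_combination (e : ℚ) * hcast
  have d3 : ∑ p ∈ (Q n).filter (fun p => p.1.2 = p.2.2), fab p
      = ∑ e ∈ n.divisors, (((e:ℚ)^3 - e) / 6) := by
    rw [Q_diag_xy fab,
      ← Nat.sum_divisorsAntidiagonal' (fun i j => (((j:ℚ)^3 - j) / 6)) (n := n)]
    apply Finset.sum_congr rfl
    rintro ⟨x, s⟩ hu
    simp only [hfab]
    exact sum_Ioo_mul s
  have d4 : ∑ p ∈ (Q n).filter (fun p => p.1.2 = p.2.2), fa2 p
      = ∑ e ∈ n.divisors, ((e:ℚ) * ((e:ℚ) - 1) * (2 * e - 1) / 6) := by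
    rw [Q_diag_xy fa2,
      ← Nat.sum_divisorsAntidiagonal' (fun i j => ((j:ℚ) * ((j:ℚ) - 1) * (2 * j - 1) / 6)) (n := n)]
    apply Finset.sum_congr rfl
    rintro ⟨x, s⟩ hu
    simp only [hfa2]
    exact sum_Ioo_sq s
  -- solve the linear system
  have key : ∑ p ∈ Q n, fab p
      = ∑ p ∈ (Q n).filter (fun p => p.1.2 = p.2.2), fa2 p
        - ∑ p ∈ (Q n).filter (fun p => p.1.1 = p.2.1), fa2 p
        + (∑ p ∈ (Q n).filter (fun p => p.1.2 = p.2.2), fab p) / 2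
        + (∑ p ∈ (Q n).filter (fun p => p.1.1 = p.2.1), fab p) / 2 := by
    linarith [e1, e2, e3, e4, s1, s2, s3, s4, b1, b2, b3]
  rw [key, d1, d2, d3, d4, Finset.sum_div, Finset.sum_div, ← Finset.sum_sub_distrib,
    ← Finset.sum_add_distrib, ← Finset.sum_add_distrib]
  apply Finset.sum_congr rfl
  intro e _
  ring

lemma sig1 (m : ℕ) : ∑ u ∈ Nat.divisorsAntidiagonal m, ((u.1 : ℚ)) = sigmaQ 1 m := by
  rw [Nat.sum_divisorsAntidiagonal (fun i j => (i : ℚ)) (n := m), sigmaQ]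
  exact Finset.sum_congr rfl (fun i _ => (pow_one _).symm)

lemma sig2 (m : ℕ) : ∑ u ∈ Nat.divisorsAntidiagonal m, ((u.1 : ℚ)^2 * u.2)
    = m * sigmaQ 1 m := by
  rw [← sig1 m, Finset.mul_sum]
  apply Finset.sum_congr rfl
  rintro ⟨a, x⟩ hu
  rw [Nat.mem_divisorsAntidiagonal] at hu
  obtain ⟨hax, -⟩ := hu
  dsimp only at hax ⊢
  have : (a : ℚ) * x = m := by rw [← Nat.cast_mul, hax]
  linear_combination (a : ℚ) * this

/-- `∑_{d₁+d₂=d, d₁,d₂≥1} d₁·σ₁(d₁)σ₁(d₂) = (-d²/4 + d/24)·σ₁(d) + (5/24)·d·σ₃(d)`. -/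
theorem convolution_sigma1_weighted (d : ℕ) (hd : 0 < d) :
    ∑ d₁ ∈ Finset.Ioo 0 d, (d₁ : ℚ) * sigmaQ 1 d₁ * sigmaQ 1 (d - d₁) =
      (-(d : ℚ) ^ 2 / 4 + (d : ℚ) / 24) * sigmaQ 1 d + (5 / 24) * (d : ℚ) * sigmaQ 3 d := by
  classical
  set F : (ℕ×ℕ)×(ℕ×ℕ) → ℚ := fun p => (p.1.1 : ℚ)^2 * p.1.2 * p.2.1 with hF
  -- step 1 : LHS = ∑ over Q d of F
  have step1 : ∑ d₁ ∈ Finset.Ioo 0 d, (d₁ : ℚ) * sigmaQ 1 d₁ * sigmaQ 1 (d - d₁)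
      = ∑ p ∈ Q d, F p := by
    rw [Q_conv F]
    refine (Finset.sum_congr rfl fun d₁ _ => ?_).symm
    calc ∑ u ∈ Nat.divisorsAntidiagonal d₁, ∑ v ∈ Nat.divisorsAntidiagonal (d - d₁),
            F (u, v)
        = ∑ u ∈ Nat.divisorsAntidiagonal d₁,
            ((u.1 : ℚ)^2 * u.2 * ∑ v ∈ Nat.divisorsAntidiagonal (d - d₁), (v.1 : ℚ)) := by
          apply Finset.sum_congr rfl
          intro u _
          rw [Finset.mul_sum]
      _ = (∑ u ∈ Nat.divisorsAntidiagonal d₁, ((u.1 : ℚ)^2 * u.2))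
            * ∑ v ∈ Nat.divisorsAntidiagonal (d - d₁), (v.1 : ℚ) := by
          rw [Finset.sum_mul]
      _ = (d₁ : ℚ) * sigmaQ 1 d₁ * sigmaQ 1 (d - d₁) := by rw [sig2, sig1]
  -- step 2 : 2 * ∑ F = d * ∑ ab
  have step2 : ∑ p ∈ Q d, F p + ∑ p ∈ Q d, F p
      = (d : ℚ) * ∑ p ∈ Q d, ((p.1.1 : ℚ) * p.2.1) := by
    nth_rewrite 2 [Q_swap' F]
    rw [Finset.mul_sum, ← Finset.sum_add_distrib]
    apply Finset.sum_congr rfl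
    rintro ⟨⟨a,x⟩,⟨b,y⟩⟩ hp
    rw [mem_Q] at hp
    obtain ⟨-, -, -, -, h5⟩ := hp
    dsimp only at h5 ⊢
    have hcast : (a : ℚ) * x + (b : ℚ) * y = d := by
      push_cast [← h5]; ring
    simp only [hF]
    linear_combination ((a : ℚ) * b) * hcast
  -- combine with Besge
  have hB := besge d hd
  rw [step1]
  have hFval : ∑ p ∈ Q d, F p
      = (d : ℚ) / 2 * ∑ e ∈ d.divisors, ((5 * (e:ℚ)^3 + e) / 12 - (d:ℚ) * e / 2) := by
    rw [← hB]
    linarith [step2]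
  rw [hFval, sigmaQ, sigmaQ, Finset.mul_sum, Finset.mul_sum, Finset.mul_sum,
    ← Finset.sum_add_distrib]
  apply Finset.sum_congr rfl
  intro e _
  ring
end

section
/- For every positive integer d, Σ_{d₁+d₂+d₃=d, dᵢ≥1} σ₁(d₁)σ₁(d₂)σ₁(d₃) = (d²/8 - d/16 + 1/192)·σ₁(d) + (-5d/32 + 5/96)·σ₃(d) + (7/192)·σ₅(d). -/
open Finset


abbrev Pt := ℕ × ℕ × ℕ × ℕ

def Qs (n : ℕ) : Finset Pt :=
  ((Finset.Icc 1 n) ×ˢ (Finset.Icc 1 n) ×ˢ (Finset.Icc 1 n) ×ˢ (Finset.Icc 1 n)).filter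
    fun p => p.1 * p.2.2.1 + p.2.1 * p.2.2.2 = n

lemma mem_Qs {n : ℕ} {p : Pt} :
    p ∈ Qs n ↔ 0 < p.1 ∧ 0 < p.2.1 ∧ 0 < p.2.2.1 ∧ 0 < p.2.2.2 ∧
      p.1 * p.2.2.1 + p.2.1 * p.2.2.2 = n := by
  obtain ⟨a, b, x, y⟩ := p
  simp only [Qs, Finset.mem_filter, Finset.mem_product, Finset.mem_Icc]
  constructor
  · rintro ⟨⟨⟨ha1, _⟩, ⟨hb1, _⟩, ⟨hx1, _⟩, ⟨hy1, _⟩⟩, he⟩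
    exact ⟨ha1, hb1, hx1, hy1, he⟩
  · rintro ⟨ha, hb, hx, hy, he⟩
    have h1 : a * x ≤ n := by omega
    have h2 : b * y ≤ n := by omega
    have h3 : a ≤ a * x := Nat.le_mul_of_pos_right a hx
    have h4 : x ≤ a * x := Nat.le_mul_of_pos_left x ha
    have h5 : b ≤ b * y := Nat.le_mul_of_pos_right b hy
    have h6 : y ≤ b * y := Nat.le_mul_of_pos_left y hb
    exact ⟨⟨⟨ha, by omega⟩, ⟨hb, by omega⟩, ⟨hx, by omega⟩, ⟨hy, by omega⟩⟩, he⟩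

def Ufil (n : ℕ) : Finset Pt := (Qs n).filter fun p => p.2.1 < p.1
def Vfil (n : ℕ) : Finset Pt := (Qs n).filter fun p => p.2.2.1 < p.2.2.2
def MM (n : ℕ) (f : Pt → ℚ) : ℚ := ∑ p ∈ Qs n, f p
def UU (n : ℕ) (f : Pt → ℚ) : ℚ := ∑ p ∈ Ufil n, f p
def VV (n : ℕ) (f : Pt → ℚ) : ℚ := ∑ p ∈ Vfil n, f p

lemma mem_Ufil {n : ℕ} {a b x y : ℕ} :
    ((a, b, x, y) : Pt) ∈ Ufil n ↔
      (0 < a ∧ 0 < b ∧ 0 < x ∧ 0 < y ∧ a * x + b * y = n) ∧ b < a := by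
  rw [Ufil, Finset.mem_filter, mem_Qs]

lemma mem_Vfil {n : ℕ} {a b x y : ℕ} :
    ((a, b, x, y) : Pt) ∈ Vfil n ↔
      (0 < a ∧ 0 < b ∧ 0 < x ∧ 0 < y ∧ a * x + b * y = n) ∧ x < y := by
  rw [Vfil, Finset.mem_filter, mem_Qs]

lemma tau_swap (n : ℕ) (f : Pt → ℚ) :
    MM n f = MM n (fun p => f (p.2.2.1, p.2.2.2, p.1, p.2.1)) := by
  refine Finset.sum_nbij' (fun p => (p.2.2.1, p.2.2.2, p.1, p.2.1))
    (fun p => (p.2.2.1, p.2.2.2, p.1, p.2.1)) ?_ ?_ ?_ ?_ ?_ <;>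
    (intro p hp; obtain ⟨a, b, x, y⟩ := p)
  · rw [mem_Qs] at hp ⊢
    obtain ⟨h1, h2, h3, h4, h5⟩ := hp
    exact ⟨h3, h4, h1, h2, by dsimp only at h5 ⊢; rw [mul_comm x a, mul_comm y b]; exact h5⟩
  · rw [mem_Qs] at hp ⊢
    obtain ⟨h1, h2, h3, h4, h5⟩ := hp
    exact ⟨h3, h4, h1, h2, by dsimp only at h5 ⊢; rw [mul_comm x a, mul_comm y b]; exact h5⟩
  · rfl
  · rfl
  · rfl

lemma star_bij (n : ℕ) (f : Pt → ℚ) :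
    UU n f = ∑ p ∈ Vfil n, f (p.1 + p.2.1, p.2.1, p.2.2.1, p.2.2.2 - p.2.2.1) := by
  refine Finset.sum_nbij' (fun p => (p.1 - p.2.1, p.2.1, p.2.2.1, p.2.2.2 + p.2.2.1))
    (fun p => (p.1 + p.2.1, p.2.1, p.2.2.1, p.2.2.2 - p.2.2.1)) ?_ ?_ ?_ ?_ ?_ <;>
    (intro p hp; obtain ⟨a, b, x, y⟩ := p; dsimp only)
  · rw [mem_Ufil] at hp
    obtain ⟨⟨ha, hb, hx, hy, he⟩, hba⟩ := hp
    rw [mem_Vfil]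
    refine ⟨⟨by omega, hb, hx, by omega, ?_⟩, by omega⟩
    have h1 : a - b + b = a := by omega
    calc (a - b) * x + b * (y + x) = (a - b + b) * x + b * y := by ring
      _ = n := by rw [h1]; exact he
  · rw [mem_Vfil] at hp
    obtain ⟨⟨ha, hb, hx, hy, he⟩, hxy⟩ := hp
    rw [mem_Ufil]
    refine ⟨⟨by omega, hb, hx, by omega, ?_⟩, by omega⟩
    have h1 : x + (y - x) = y := by omega
    calc (a + b) * x + b * (y - x) = a * x + b * (x + (y - x)) := by ring
      _ = n := by rw [h1]; exact he
  · rw [mem_Ufil] at hp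
    have h1 : a - b + b = a := by omega
    have h2 : y + x - x = y := by omega
    rw [h1, h2]
  · rw [mem_Vfil] at hp
    have h1 : a + b - b = a := by omega
    have h2 : y - x + x = y := by omega
    rw [h1, h2]
  · rw [mem_Ufil] at hp
    have h1 : a - b + b = a := by omega
    have h2 : y + x - x = y := by omega
    rw [h1, h2]

lemma star2_bij (n : ℕ) (f : Pt → ℚ) :
    VV n f = ∑ p ∈ Ufil n, f (p.1 - p.2.1, p.2.1, p.2.2.1, p.2.2.2 + p.2.2.1) := by
  refine Finset.sum_nbij' (fun p => (p.1 + p.2.1, p.2.1, p.2.2.1, p.2.2.2 - p.2.2.1))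
    (fun p => (p.1 - p.2.1, p.2.1, p.2.2.1, p.2.2.2 + p.2.2.1)) ?_ ?_ ?_ ?_ ?_ <;>
    (intro p hp; obtain ⟨a, b, x, y⟩ := p; dsimp only)
  · rw [mem_Vfil] at hp
    obtain ⟨⟨ha, hb, hx, hy, he⟩, hxy⟩ := hp
    rw [mem_Ufil]
    refine ⟨⟨by omega, hb, hx, by omega, ?_⟩, by omega⟩
    have h1 : x + (y - x) = y := by omega
    calc (a + b) * x + b * (y - x) = a * x + b * (x + (y - x)) := by ring
      _ = n := by rw [h1]; exact he
  · rw [mem_Ufil] at hp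
    obtain ⟨⟨ha, hb, hx, hy, he⟩, hba⟩ := hp
    rw [mem_Vfil]
    refine ⟨⟨by omega, hb, hx, by omega, ?_⟩, by omega⟩
    have h1 : a - b + b = a := by omega
    calc (a - b) * x + b * (y + x) = (a - b + b) * x + b * y := by ring
      _ = n := by rw [h1]; exact he
  · rw [mem_Vfil] at hp
    have h1 : a + b - b = a := by omega
    have h2 : y - x + x = y := by omega
    rw [h1, h2]
  · rw [mem_Ufil] at hp
    have h1 : a - b + b = a := by omega
    have h2 : y + x - x = y := by omega
    rw [h1, h2]
  · rw [mem_Vfil] at hp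
    have h1 : a + b - b = a := by omega
    have h2 : y - x + x = y := by omega
    rw [h1, h2]

lemma sum_trichotomy (F : Finset Pt) (u v : Pt → ℕ) (f : Pt → ℚ) :
    ∑ p ∈ F, f p = (∑ p ∈ F.filter (fun p => u p < v p), f p)
      + (∑ p ∈ F.filter (fun p => u p = v p), f p)
      + (∑ p ∈ F.filter (fun p => v p < u p), f p) := by
  have e1 : (F.filter fun p => ¬ u p < v p).filter (fun p => u p = v p)
      = F.filter (fun p => u p = v p) := by
    rw [Finset.filter_filter]
    apply Finset.filter_congr
    intro p _
    constructor
    · rintro ⟨_, h⟩; exact h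
    · intro h; exact ⟨by omega, h⟩
  have e2 : (F.filter fun p => ¬ u p < v p).filter (fun p => ¬ u p = v p)
      = F.filter (fun p => v p < u p) := by
    rw [Finset.filter_filter]
    apply Finset.filter_congr
    intro p _
    constructor
    · rintro ⟨h1, h2⟩; omega
    · intro h; omega
  rw [← Finset.sum_filter_add_sum_filter_not F (fun p => u p < v p) f,
    ← Finset.sum_filter_add_sum_filter_not (F.filter fun p => ¬ u p < v p)
      (fun p => u p = v p) f, e1, e2, add_assoc]

lemma sum_sswap_lt (n : ℕ) (f : Pt → ℚ) :
    ∑ p ∈ (Qs n).filter (fun p => p.1 < p.2.1), f p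
      = ∑ p ∈ Ufil n, f (p.2.1, p.1, p.2.2.2, p.2.2.1) := by
  refine Finset.sum_nbij' (fun p => (p.2.1, p.1, p.2.2.2, p.2.2.1))
    (fun p => (p.2.1, p.1, p.2.2.2, p.2.2.1)) ?_ ?_ ?_ ?_ ?_ <;>
    (intro p hp; obtain ⟨a, b, x, y⟩ := p; dsimp only)
  · rw [Finset.mem_filter, mem_Qs] at hp
    rw [Ufil, Finset.mem_filter, mem_Qs]
    obtain ⟨⟨h1, h2, h3, h4, h5⟩, h6⟩ := hp
    dsimp only at h1 h2 h3 h4 h5 h6 ⊢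
    exact ⟨⟨h2, h1, h4, h3, by rw [add_comm]; exact h5⟩, h6⟩
  · rw [Ufil, Finset.mem_filter, mem_Qs] at hp
    rw [Finset.mem_filter, mem_Qs]
    obtain ⟨⟨h1, h2, h3, h4, h5⟩, h6⟩ := hp
    dsimp only at h1 h2 h3 h4 h5 h6 ⊢
    exact ⟨⟨h2, h1, h4, h3, by rw [add_comm]; exact h5⟩, h6⟩

lemma sum_sswap_ltx (n : ℕ) (f : Pt → ℚ) :
    ∑ p ∈ (Qs n).filter (fun p => p.2.2.2 < p.2.2.1), f p
      = ∑ p ∈ Vfil n, f (p.2.1, p.1, p.2.2.2, p.2.2.1) := by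
  refine Finset.sum_nbij' (fun p => (p.2.1, p.1, p.2.2.2, p.2.2.1))
    (fun p => (p.2.1, p.1, p.2.2.2, p.2.2.1)) ?_ ?_ ?_ ?_ ?_ <;>
    (intro p hp; obtain ⟨a, b, x, y⟩ := p; dsimp only)
  · rw [Finset.mem_filter, mem_Qs] at hp
    rw [Vfil, Finset.mem_filter, mem_Qs]
    obtain ⟨⟨h1, h2, h3, h4, h5⟩, h6⟩ := hp
    dsimp only at h1 h2 h3 h4 h5 h6 ⊢
    exact ⟨⟨h2, h1, h4, h3, by rw [add_comm]; exact h5⟩, h6⟩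
  · rw [Vfil, Finset.mem_filter, mem_Qs] at hp
    rw [Finset.mem_filter, mem_Qs]
    obtain ⟨⟨h1, h2, h3, h4, h5⟩, h6⟩ := hp
    dsimp only at h1 h2 h3 h4 h5 h6 ⊢
    exact ⟨⟨h2, h1, h4, h3, by rw [add_comm]; exact h5⟩, h6⟩

lemma diag_a (n : ℕ) (f : Pt → ℚ) :
    ∑ p ∈ (Qs n).filter (fun p => p.2.1 = p.1), f p
      = ∑ d ∈ n.divisors, ∑ x ∈ Finset.Ioo 0 (n / d), f (d, d, x, n / d - x) := by
  rw [Finset.sum_sigma']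
  refine Finset.sum_nbij' (fun p => (⟨p.1, p.2.2.1⟩ : (_ : ℕ) × ℕ))
    (fun q => (q.1, q.1, q.2, n / q.1 - q.2)) ?_ ?_ ?_ ?_ ?_
  · intro p hp; obtain ⟨a, b, x, y⟩ := p
    rw [Finset.mem_filter, mem_Qs] at hp
    obtain ⟨⟨ha, hb, hx, hy, he⟩, hab⟩ := hp
    dsimp only at ha hb hx hy he hab ⊢
    subst hab
    have hq : b * (x + y) = n := by rw [Nat.mul_add]; exact he
    have hdvd : b ∣ n := ⟨x + y, hq.symm⟩
    have hpos : 0 < n := by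
      have := Nat.mul_pos hb (show 0 < x + y by omega); omega
    have hnd : n / b = x + y := by rw [← hq, Nat.mul_div_cancel_left _ hb]
    rw [Finset.mem_sigma, Nat.mem_divisors, Finset.mem_Ioo]
    dsimp only
    exact ⟨⟨hdvd, by omega⟩, by omega, by omega⟩
  · intro q hq; obtain ⟨d, x⟩ := q
    rw [Finset.mem_sigma, Nat.mem_divisors, Finset.mem_Ioo] at hq
    obtain ⟨⟨hdvd, hne⟩, hx0, hxq⟩ := hq
    dsimp only at hx0 hxq ⊢
    have hd : 0 < d := by
      rcases Nat.eq_zero_or_pos d with h | h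
      · exfalso; exact hne (by simpa [h] using hdvd)
      · exact h
    have hmul : d * (n / d) = n := Nat.mul_div_cancel' hdvd
    rw [Finset.mem_filter, mem_Qs]
    dsimp only
    refine ⟨⟨hd, hd, hx0, by omega, ?_⟩, rfl⟩
    calc d * x + d * (n / d - x) = d * (x + (n / d - x)) := by ring
      _ = n := by rw [show x + (n / d - x) = n / d by omega]; exact hmul
  · intro p hp; obtain ⟨a, b, x, y⟩ := p
    rw [Finset.mem_filter, mem_Qs] at hp
    obtain ⟨⟨ha, hb, hx, hy, he⟩, hab⟩ := hp
    dsimp only at ha hb hx hy he hab ⊢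
    subst hab
    have hq : b * (x + y) = n := by rw [Nat.mul_add]; exact he
    have hnd : n / b = x + y := by rw [← hq, Nat.mul_div_cancel_left _ hb]
    rw [show n / b - x = y by omega]
  · intro q hq; obtain ⟨d, x⟩ := q; rfl
  · intro p hp; obtain ⟨a, b, x, y⟩ := p
    rw [Finset.mem_filter, mem_Qs] at hp
    obtain ⟨⟨ha, hb, hx, hy, he⟩, hab⟩ := hp
    dsimp only at ha hb hx hy he hab ⊢
    subst hab
    have hq : b * (x + y) = n := by rw [Nat.mul_add]; exact he
    have hnd : n / b = x + y := by rw [← hq, Nat.mul_div_cancel_left _ hb]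
    rw [show n / b - x = y by omega]

lemma diag_x (n : ℕ) (f : Pt → ℚ) :
    ∑ p ∈ (Qs n).filter (fun p => p.2.2.1 = p.2.2.2), f p
      = ∑ d ∈ n.divisors, ∑ a ∈ Finset.Ioo 0 (n / d), f (a, n / d - a, d, d) := by
  rw [Finset.sum_sigma']
  refine Finset.sum_nbij' (fun p => (⟨p.2.2.1, p.1⟩ : (_ : ℕ) × ℕ))
    (fun q => (q.2, n / q.1 - q.2, q.1, q.1)) ?_ ?_ ?_ ?_ ?_
  · intro p hp; obtain ⟨a, b, x, y⟩ := p
    rw [Finset.mem_filter, mem_Qs] at hp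
    obtain ⟨⟨ha, hb, hx, hy, he⟩, hxy⟩ := hp
    dsimp only at ha hb hx hy he hxy ⊢
    subst hxy
    have hq : (a + b) * x = n := by rw [Nat.add_mul]; exact he
    have hdvd : x ∣ n := ⟨a + b, by rw [← hq]; ring⟩
    have hpos : 0 < n := by
      have := Nat.mul_pos (show 0 < a + b by omega) hx; omega
    have hnd : n / x = a + b := by
      rw [← hq, Nat.mul_comm, Nat.mul_div_cancel_left _ hx]
    rw [Finset.mem_sigma, Nat.mem_divisors, Finset.mem_Ioo]
    dsimp only
    exact ⟨⟨hdvd, by omega⟩, by omega, by omega⟩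
  · intro q hq; obtain ⟨d, a⟩ := q
    rw [Finset.mem_sigma, Nat.mem_divisors, Finset.mem_Ioo] at hq
    obtain ⟨⟨hdvd, hne⟩, ha0, haq⟩ := hq
    dsimp only at ha0 haq ⊢
    have hd : 0 < d := by
      rcases Nat.eq_zero_or_pos d with h | h
      · exfalso; exact hne (by simpa [h] using hdvd)
      · exact h
    have hmul : d * (n / d) = n := Nat.mul_div_cancel' hdvd
    rw [Finset.mem_filter, mem_Qs]
    dsimp only
    refine ⟨⟨ha0, by omega, hd, hd, ?_⟩, rfl⟩
    calc a * d + (n / d - a) * d = (a + (n / d - a)) * d := by ring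
      _ = n := by
        rw [show a + (n / d - a) = n / d by omega, Nat.mul_comm]; exact hmul
  · intro p hp; obtain ⟨a, b, x, y⟩ := p
    rw [Finset.mem_filter, mem_Qs] at hp
    obtain ⟨⟨ha, hb, hx, hy, he⟩, hxy⟩ := hp
    dsimp only at ha hb hx hy he hxy ⊢
    subst hxy
    have hq : (a + b) * x = n := by rw [Nat.add_mul]; exact he
    have hnd : n / x = a + b := by
      rw [← hq, Nat.mul_comm, Nat.mul_div_cancel_left _ hx]
    rw [show n / x - a = b by omega]
  · intro q hq; obtain ⟨d, a⟩ := q; rfl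
  · intro p hp; obtain ⟨a, b, x, y⟩ := p
    rw [Finset.mem_filter, mem_Qs] at hp
    obtain ⟨⟨ha, hb, hx, hy, he⟩, hxy⟩ := hp
    dsimp only at ha hb hx hy he hxy ⊢
    subst hxy
    have hq : (a + b) * x = n := by rw [Nat.add_mul]; exact he
    have hnd : n / x = a + b := by
      rw [← hq, Nat.mul_comm, Nat.mul_div_cancel_left _ hx]
    rw [show n / x - a = b by omega]

lemma MM_conv (n k l : ℕ) :
    MM n (fun p => (p.1 : ℚ) ^ k * (p.2.1 : ℚ) ^ l)
      = ∑ m ∈ Finset.Ioo 0 n, sigmaQ k m * sigmaQ l (n - m) := by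
  have hrhs : ∀ m ∈ Finset.Ioo 0 n, sigmaQ k m * sigmaQ l (n - m)
      = ∑ q ∈ m.divisors ×ˢ (n - m).divisors, (q.1 : ℚ) ^ k * (q.2 : ℚ) ^ l := by
    intro m _
    rw [sigmaQ, sigmaQ, Finset.sum_mul_sum, Finset.sum_product]
  rw [Finset.sum_congr rfl hrhs, Finset.sum_sigma']
  refine (Finset.sum_nbij' (fun q => ((q.2.1, q.2.2, q.1 / q.2.1, (n - q.1) / q.2.2) : Pt))
    (fun p => (⟨p.1 * p.2.2.1, (p.1, p.2.1)⟩ : (_ : ℕ) × (ℕ × ℕ))) ?_ ?_ ?_ ?_ ?_).symm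
  · intro q hq; obtain ⟨m, a, b⟩ := q
    rw [Finset.mem_sigma, Finset.mem_Ioo, Finset.mem_product, Nat.mem_divisors,
      Nat.mem_divisors] at hq
    dsimp only at hq ⊢
    obtain ⟨⟨hm0, hmn⟩, ⟨hadvd, hane⟩, hbdvd, hbne⟩ := hq
    have ha : 0 < a := Nat.pos_of_dvd_of_pos hadvd hm0
    have hb : 0 < b := Nat.pos_of_dvd_of_pos hbdvd (by omega)
    have hx : 0 < m / a := Nat.div_pos (Nat.le_of_dvd hm0 hadvd) ha
    have hy : 0 < (n - m) / b := Nat.div_pos (Nat.le_of_dvd (by omega) hbdvd) hb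
    rw [mem_Qs]
    dsimp only
    refine ⟨ha, hb, hx, hy, ?_⟩
    rw [Nat.mul_div_cancel' hadvd, Nat.mul_div_cancel' hbdvd]
    omega
  · intro p hp; obtain ⟨a, b, x, y⟩ := p
    rw [mem_Qs] at hp
    obtain ⟨ha, hb, hx, hy, he⟩ := hp
    dsimp only at ha hb hx hy he ⊢
    have hax : 0 < a * x := Nat.mul_pos ha hx
    have hby : 0 < b * y := Nat.mul_pos hb hy
    rw [Finset.mem_sigma, Finset.mem_Ioo, Finset.mem_product, Nat.mem_divisors,
      Nat.mem_divisors]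
    dsimp only
    refine ⟨⟨by omega, by omega⟩, ⟨⟨x, rfl⟩, by omega⟩, ⟨y, by omega⟩, by omega⟩
  · intro q hq; obtain ⟨m, a, b⟩ := q
    rw [Finset.mem_sigma, Finset.mem_Ioo, Finset.mem_product, Nat.mem_divisors,
      Nat.mem_divisors] at hq
    dsimp only at hq ⊢
    obtain ⟨⟨hm0, hmn⟩, ⟨hadvd, hane⟩, hbdvd, hbne⟩ := hq
    rw [Nat.mul_div_cancel' hadvd]
  · intro p hp; obtain ⟨a, b, x, y⟩ := p
    rw [mem_Qs] at hp
    obtain ⟨ha, hb, hx, hy, he⟩ := hp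
    dsimp only at ha hb hx hy he ⊢
    have hby : 0 < b * y := Nat.mul_pos hb hy
    rw [Nat.mul_div_cancel_left x ha, show n - a * x = b * y by omega,
      Nat.mul_div_cancel_left y hb]
  · intro q hq; rfl

lemma ioo_sum (g : ℕ → ℚ) (h0 : g 0 = 0) (q : ℕ) :
    ∑ x ∈ Finset.Ioo 0 q, g x = ∑ x ∈ Finset.range q, g x := by
  cases q with
  | zero => simp
  | succ q =>
    have h : Finset.range (q + 1) = insert 0 (Finset.Ioo 0 (q + 1)) := by
      ext z
      simp only [Finset.mem_range, Finset.mem_insert, Finset.mem_Ioo]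
      omega
    rw [h, Finset.sum_insert (by simp), h0, zero_add]

lemma rsum1 (q : ℕ) : ∑ x ∈ Finset.range q, (x : ℚ) = ((q : ℚ) ^ 2 - q) / 2 := by
  induction q with
  | zero => simp
  | succ q ih => rw [Finset.sum_range_succ, ih]; push_cast; ring

lemma rsum2 (q : ℕ) : ∑ x ∈ Finset.range q, (x : ℚ) ^ 2
    = (2 * (q : ℚ) ^ 3 - 3 * q ^ 2 + q) / 6 := by
  induction q with
  | zero => simp
  | succ q ih => rw [Finset.sum_range_succ, ih]; push_cast; ring

lemma rsum3 (q : ℕ) : ∑ x ∈ Finset.range q, (x : ℚ) ^ 3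
    = ((q : ℚ) ^ 4 - 2 * q ^ 3 + q ^ 2) / 4 := by
  induction q with
  | zero => simp
  | succ q ih => rw [Finset.sum_range_succ, ih]; push_cast; ring

lemma rsum4 (q : ℕ) : ∑ x ∈ Finset.range q, (x : ℚ) ^ 4
    = (6 * (q : ℚ) ^ 5 - 15 * q ^ 4 + 10 * q ^ 3 - q) / 30 := by
  induction q with
  | zero => simp
  | succ q ih => rw [Finset.sum_range_succ, ih]; push_cast; ring

lemma isum1 (q : ℕ) : ∑ x ∈ Finset.Ioo 0 q, (x : ℚ) = ((q : ℚ) ^ 2 - q) / 2 :=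
  (ioo_sum _ (by norm_num) q).trans (rsum1 q)
lemma isum2 (q : ℕ) : ∑ x ∈ Finset.Ioo 0 q, (x : ℚ) ^ 2
    = (2 * (q : ℚ) ^ 3 - 3 * q ^ 2 + q) / 6 :=
  (ioo_sum _ (by norm_num) q).trans (rsum2 q)
lemma isum3 (q : ℕ) : ∑ x ∈ Finset.Ioo 0 q, (x : ℚ) ^ 3
    = ((q : ℚ) ^ 4 - 2 * q ^ 3 + q ^ 2) / 4 :=
  (ioo_sum _ (by norm_num) q).trans (rsum3 q)
lemma isum4 (q : ℕ) : ∑ x ∈ Finset.Ioo 0 q, (x : ℚ) ^ 4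
    = (6 * (q : ℚ) ^ 5 - 15 * q ^ 4 + 10 * q ^ 3 - q) / 30 :=
  (ioo_sum _ (by norm_num) q).trans (rsum4 q)

lemma reflect_Ioo (q : ℕ) (g : ℕ → ℚ) :
    ∑ x ∈ Finset.Ioo 0 q, g (q - x) = ∑ x ∈ Finset.Ioo 0 q, g x := by
  refine Finset.sum_nbij' (fun x => q - x) (fun x => q - x) ?_ ?_ ?_ ?_ ?_ <;>
      intro x hx <;> simp only [Finset.mem_Ioo] at hx ⊢ <;>
      first
        | omega
        | rfl

-- inner sums
lemma inner_x_qx (q : ℕ) : ∑ x ∈ Finset.Ioo 0 q, ((x : ℚ) * ((q - x : ℕ) : ℚ))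
    = ((q : ℚ) ^ 3 - q) / 6 := by
  have hpt : ∀ x ∈ Finset.Ioo 0 q, (x : ℚ) * ((q - x : ℕ) : ℚ)
      = (q : ℚ) * (x : ℚ) - (x : ℚ) ^ 2 := by
    intro x hx
    rw [Finset.mem_Ioo] at hx
    rw [Nat.cast_sub hx.2.le]
    ring
  rw [Finset.sum_congr rfl hpt, Finset.sum_sub_distrib, ← Finset.mul_sum, isum1, isum2]
  ring

lemma inner_qx2 (q : ℕ) : ∑ x ∈ Finset.Ioo 0 q, (((q - x : ℕ) : ℚ)) ^ 2
    = (2 * (q : ℚ) ^ 3 - 3 * q ^ 2 + q) / 6 :=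
  ((reflect_Ioo q (fun m => (m : ℚ) ^ 2)).trans (isum2 q))

lemma inner_qx4 (q : ℕ) : ∑ x ∈ Finset.Ioo 0 q, (((q - x : ℕ) : ℚ)) ^ 4
    = (6 * (q : ℚ) ^ 5 - 15 * q ^ 4 + 10 * q ^ 3 - q) / 30 :=
  ((reflect_Ioo q (fun m => (m : ℚ) ^ 4)).trans (isum4 q))

lemma inner_x_qx3 (q : ℕ) : ∑ x ∈ Finset.Ioo 0 q, ((x : ℚ) * ((q - x : ℕ) : ℚ) ^ 3)
    = (3 * (q : ℚ) ^ 5 - 5 * q ^ 3 + 2 * q) / 60 := by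
  have hpt : ∀ x ∈ Finset.Ioo 0 q, (x : ℚ) * ((q - x : ℕ) : ℚ) ^ 3
      = (q : ℚ) ^ 3 * (x : ℚ) - 3 * (q : ℚ) ^ 2 * (x : ℚ) ^ 2
        + 3 * (q : ℚ) * (x : ℚ) ^ 3 - (x : ℚ) ^ 4 := by
    intro x hx
    rw [Finset.mem_Ioo] at hx
    rw [Nat.cast_sub hx.2.le]
    ring
  rw [Finset.sum_congr rfl hpt, Finset.sum_sub_distrib, Finset.sum_add_distrib,
    Finset.sum_sub_distrib, ← Finset.mul_sum, ← Finset.mul_sum, ← Finset.mul_sum,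
    isum1, isum2, isum3, isum4]
  ring

lemma inner_x2_qx2 (q : ℕ) : ∑ x ∈ Finset.Ioo 0 q, ((x : ℚ) ^ 2 * ((q - x : ℕ) : ℚ) ^ 2)
    = ((q : ℚ) ^ 5 - q) / 30 := by
  have hpt : ∀ x ∈ Finset.Ioo 0 q, (x : ℚ) ^ 2 * ((q - x : ℕ) : ℚ) ^ 2
      = (q : ℚ) ^ 2 * (x : ℚ) ^ 2 - 2 * (q : ℚ) * (x : ℚ) ^ 3 + (x : ℚ) ^ 4 := by
    intro x hx
    rw [Finset.mem_Ioo] at hx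
    rw [Nat.cast_sub hx.2.le]
    ring
  rw [Finset.sum_congr rfl hpt, Finset.sum_add_distrib, Finset.sum_sub_distrib,
    ← Finset.mul_sum, ← Finset.mul_sum, isum2, isum3, isum4]
  ring

-- divisor sum helpers
lemma div_pos_of_mem {n d : ℕ} (hn : 0 < n) (hd : d ∈ n.divisors) : 0 < n / d := by
  rw [Nat.mem_divisors] at hd
  exact Nat.div_pos (Nat.le_of_dvd hn hd.1) (Nat.pos_of_dvd_of_pos hd.1 hn)

lemma cast_mul_div {n d : ℕ} (hd : d ∈ n.divisors) :
    (d : ℚ) * ((n / d : ℕ) : ℚ) = (n : ℚ) := by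
  rw [Nat.mem_divisors] at hd
  exact_mod_cast congrArg (Nat.cast : ℕ → ℚ) (Nat.mul_div_cancel' hd.1)

lemma div_sum_const (n : ℕ) (hn : 0 < n) (k : ℕ) :
    ∑ d ∈ n.divisors, ((n / d - 1 : ℕ) : ℚ) * ((d : ℚ) ^ (k + 1))
      = (n : ℚ) * sigmaQ k n - sigmaQ (k + 1) n := by
  have hpt : ∀ d ∈ n.divisors, ((n / d - 1 : ℕ) : ℚ) * ((d : ℚ) ^ (k + 1))
      = (n : ℚ) * (d : ℚ) ^ k - (d : ℚ) ^ (k + 1) := by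
    intro d hd
    have h1 : 0 < n / d := div_pos_of_mem hn hd
    have h2 : (d : ℚ) * ((n / d : ℕ) : ℚ) = (n : ℚ) := cast_mul_div hd
    rw [Nat.cast_sub h1]
    push_cast
    linear_combination ((d : ℚ)) ^ k * h2
  rw [Finset.sum_congr rfl hpt, Finset.sum_sub_distrib, ← Finset.mul_sum, sigmaQ, sigmaQ]

lemma div_sum_pows (n : ℕ) (c5 c4 c3 c2 c1 : ℚ) :
    ∑ d ∈ n.divisors, (c5 * ((n / d : ℕ) : ℚ) ^ 5 + c4 * ((n / d : ℕ) : ℚ) ^ 4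
      + c3 * ((n / d : ℕ) : ℚ) ^ 3 + c2 * ((n / d : ℕ) : ℚ) ^ 2 + c1 * ((n / d : ℕ) : ℚ))
      = c5 * sigmaQ 5 n + c4 * sigmaQ 4 n + c3 * sigmaQ 3 n + c2 * sigmaQ 2 n
        + c1 * sigmaQ 1 n := by
  have h := Nat.sum_div_divisors (α := ℚ) n
    (fun m => c5 * (m : ℚ) ^ 5 + c4 * (m : ℚ) ^ 4 + c3 * (m : ℚ) ^ 3 + c2 * (m : ℚ) ^ 2
      + c1 * (m : ℚ))
  rw [h]
  simp only [sigmaQ, Finset.sum_add_distrib, Finset.mul_sum, pow_one]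

-- decompositions
lemma decA (n : ℕ) (f : Pt → ℚ) :
    MM n f = UU n f
      + (∑ d ∈ n.divisors, ∑ x ∈ Finset.Ioo 0 (n / d), f (d, d, x, n / d - x))
      + UU n (fun p => f (p.2.1, p.1, p.2.2.2, p.2.2.1)) := by
  rw [MM, sum_trichotomy (Qs n) (fun p => p.2.1) (fun p => p.1) f,
    diag_a n f, sum_sswap_lt n f]
  rfl

lemma decX (n : ℕ) (f : Pt → ℚ) :
    MM n f = VV n f
      + (∑ d ∈ n.divisors, ∑ a ∈ Finset.Ioo 0 (n / d), f (a, n / d - a, d, d))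
      + VV n (fun p => f (p.2.1, p.1, p.2.2.2, p.2.2.1)) := by
  rw [MM, sum_trichotomy (Qs n) (fun p => p.2.2.1) (fun p => p.2.2.2) f,
    diag_x n f, sum_sswap_ltx n f]
  rfl

-- monomials
def fab : Pt → ℚ := fun p => (p.1 : ℚ) * (p.2.1 : ℚ)
def fa2 : Pt → ℚ := fun p => (p.1 : ℚ) ^ 2
def fb2 : Pt → ℚ := fun p => (p.2.1 : ℚ) ^ 2

theorem besge_s5 (n : ℕ) (hn : 0 < n) :
    ∑ m ∈ Finset.Ioo 0 n, sigmaQ 1 m * sigmaQ 1 (n - m)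
      = 5 / 12 * sigmaQ 3 n + (1 / 12 - (n : ℚ) / 2) * sigmaQ 1 n := by
  have hconv : MM n fab = ∑ m ∈ Finset.Ioo 0 n, sigmaQ 1 m * sigmaQ 1 (n - m) := by
    have h := MM_conv n 1 1
    simp only [pow_one] at h; exact h
  -- DA of fab / fb2 (both constant d^2 inner)
  have hDAab : ∑ d ∈ n.divisors, ∑ x ∈ Finset.Ioo 0 (n / d), fab (d, d, x, n / d - x)
      = (n : ℚ) * sigmaQ 1 n - sigmaQ 2 n := by
    have hin : ∀ d ∈ n.divisors, ∑ x ∈ Finset.Ioo 0 (n / d), fab (d, d, x, n / d - x)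
        = ((n / d - 1 : ℕ) : ℚ) * ((d : ℚ) ^ (1 + 1)) := by
      intro d _
      rw [show (∑ x ∈ Finset.Ioo 0 (n / d), fab (d, d, x, n / d - x))
          = ∑ _x ∈ Finset.Ioo 0 (n / d), ((d : ℚ) * (d : ℚ)) from rfl,
        Finset.sum_const, Nat.card_Ioo, Nat.sub_zero, nsmul_eq_mul]
      ring
    rw [Finset.sum_congr rfl hin]
    exact div_sum_const n hn 1
  have hDAb2 : ∑ d ∈ n.divisors, ∑ x ∈ Finset.Ioo 0 (n / d), fb2 (d, d, x, n / d - x)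
      = (n : ℚ) * sigmaQ 1 n - sigmaQ 2 n := by
    have hin : ∀ d ∈ n.divisors, ∑ x ∈ Finset.Ioo 0 (n / d), fb2 (d, d, x, n / d - x)
        = ((n / d - 1 : ℕ) : ℚ) * ((d : ℚ) ^ (1 + 1)) := by
      intro d _
      rw [show (∑ x ∈ Finset.Ioo 0 (n / d), fb2 (d, d, x, n / d - x))
          = ∑ _x ∈ Finset.Ioo 0 (n / d), ((d : ℚ) ^ 2) from rfl,
        Finset.sum_const, Nat.card_Ioo, Nat.sub_zero, nsmul_eq_mul]
    rw [Finset.sum_congr rfl hin]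
    exact div_sum_const n hn 1
  -- DX of fab : inner a*(q-a)
  have hDXab : ∑ d ∈ n.divisors, ∑ a ∈ Finset.Ioo 0 (n / d), fab (a, n / d - a, d, d)
      = 0 * sigmaQ 5 n + 0 * sigmaQ 4 n + (1 / 6) * sigmaQ 3 n + 0 * sigmaQ 2 n
        + (-1 / 6) * sigmaQ 1 n := by
    have hin : ∀ d ∈ n.divisors, ∑ a ∈ Finset.Ioo 0 (n / d), fab (a, n / d - a, d, d)
        = 0 * ((n / d : ℕ) : ℚ) ^ 5 + 0 * ((n / d : ℕ) : ℚ) ^ 4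
          + (1 / 6) * ((n / d : ℕ) : ℚ) ^ 3 + 0 * ((n / d : ℕ) : ℚ) ^ 2
          + (-1 / 6) * ((n / d : ℕ) : ℚ) := by
      intro d _
      rw [show (∑ a ∈ Finset.Ioo 0 (n / d), fab (a, n / d - a, d, d))
          = ∑ a ∈ Finset.Ioo 0 (n / d), ((a : ℚ) * (((n / d) - a : ℕ) : ℚ)) from rfl,
        inner_x_qx]
      ring
    rw [Finset.sum_congr rfl hin]
    exact div_sum_pows n 0 0 (1 / 6) 0 (-1 / 6)
  -- DX of fb2 : inner (q-a)^2
  have hDXb2 : ∑ d ∈ n.divisors, ∑ a ∈ Finset.Ioo 0 (n / d), fb2 (a, n / d - a, d, d)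
      = 0 * sigmaQ 5 n + 0 * sigmaQ 4 n + (2 / 6) * sigmaQ 3 n + (-3 / 6) * sigmaQ 2 n
        + (1 / 6) * sigmaQ 1 n := by
    have hin : ∀ d ∈ n.divisors, ∑ a ∈ Finset.Ioo 0 (n / d), fb2 (a, n / d - a, d, d)
        = 0 * ((n / d : ℕ) : ℚ) ^ 5 + 0 * ((n / d : ℕ) : ℚ) ^ 4
          + (2 / 6) * ((n / d : ℕ) : ℚ) ^ 3 + (-3 / 6) * ((n / d : ℕ) : ℚ) ^ 2
          + (1 / 6) * ((n / d : ℕ) : ℚ) := by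
      intro d _
      rw [show (∑ a ∈ Finset.Ioo 0 (n / d), fb2 (a, n / d - a, d, d))
          = ∑ a ∈ Finset.Ioo 0 (n / d), ((((n / d) - a : ℕ) : ℚ) ^ 2) from rfl,
        inner_qx2]
      ring
    rw [Finset.sum_congr rfl hin]
    exact div_sum_pows n 0 0 (2 / 6) (-3 / 6) (1 / 6)
  -- equations
  have h1 := decA n fab
  rw [show (fun p => fab (p.2.1, p.1, p.2.2.2, p.2.2.1)) = fab from
    funext fun p => mul_comm _ _, hDAab] at h1
  have h2 := decX n fab
  rw [show (fun p => fab (p.2.1, p.1, p.2.2.2, p.2.2.1)) = fab from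
    funext fun p => mul_comm _ _, hDXab] at h2
  have h3 := decA n fb2
  rw [show (fun p => fb2 (p.2.1, p.1, p.2.2.2, p.2.2.1)) = fa2 from rfl, hDAb2] at h3
  have h4 := decX n fb2
  rw [show (fun p => fb2 (p.2.1, p.1, p.2.2.2, p.2.2.1)) = fa2 from rfl, hDXb2] at h4
  have h5 : UU n fb2 = VV n fb2 := by
    rw [star_bij n fb2]; rfl
  have h6 : UU n fab = VV n fab + VV n fb2 := by
    rw [star_bij n fab]
    have hpt : ∀ p ∈ Vfil n,
        fab (p.1 + p.2.1, p.2.1, p.2.2.1, p.2.2.2 - p.2.2.1) = fab p + fb2 p := by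
      intro p _
      show ((p.1 + p.2.1 : ℕ) : ℚ) * (p.2.1 : ℚ) = _
      push_cast
      show _ = (p.1 : ℚ) * (p.2.1 : ℚ) + (p.2.1 : ℚ) ^ 2
      ring
    rw [Finset.sum_congr rfl hpt, Finset.sum_add_distrib]
    rfl
  have h7 : UU n fa2 = VV n fa2 + 2 * VV n fab + VV n fb2 := by
    rw [star_bij n fa2]
    have hpt : ∀ p ∈ Vfil n,
        fa2 (p.1 + p.2.1, p.2.1, p.2.2.1, p.2.2.2 - p.2.2.1)
          = fa2 p + 2 * fab p + fb2 p := by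
      intro p _
      show ((p.1 + p.2.1 : ℕ) : ℚ) ^ 2 = _
      push_cast
      show _ = (p.1 : ℚ) ^ 2 + 2 * ((p.1 : ℚ) * (p.2.1 : ℚ)) + (p.2.1 : ℚ) ^ 2
      ring
    rw [Finset.sum_congr rfl hpt, Finset.sum_add_distrib, Finset.sum_add_distrib,
      ← Finset.mul_sum]
    rfl
  linear_combination (-1 : ℚ) * hconv + (1 / 2 : ℚ) * h1 + (1 / 2 : ℚ) * h2 - h3 + h4
    - h5 + h6 - h7

def fy4 : Pt → ℚ := fun p => (p.2.2.2 : ℚ) ^ 4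
def fx4 : Pt → ℚ := fun p => (p.2.2.1 : ℚ) ^ 4
def fxy3 : Pt → ℚ := fun p => (p.2.2.1 : ℚ) * (p.2.2.2 : ℚ) ^ 3
def fx3y : Pt → ℚ := fun p => (p.2.2.1 : ℚ) ^ 3 * (p.2.2.2 : ℚ)
def fx2y2 : Pt → ℚ := fun p => (p.2.2.1 : ℚ) ^ 2 * (p.2.2.2 : ℚ) ^ 2
def fab3 : Pt → ℚ := fun p => (p.1 : ℚ) * (p.2.1 : ℚ) ^ 3

theorem conv13 (n : ℕ) (hn : 0 < n) :
    ∑ m ∈ Finset.Ioo 0 n, sigmaQ 1 m * sigmaQ 3 (n - m)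
      = 7 / 80 * sigmaQ 5 n + (1 / 24 - (n : ℚ) / 8) * sigmaQ 3 n
        - 1 / 240 * sigmaQ 1 n := by
  have hconv : MM n fab3 = ∑ m ∈ Finset.Ioo 0 n, sigmaQ 1 m * sigmaQ 3 (n - m) := by
    have h := MM_conv n 1 3
    simp only [pow_one] at h; exact h
  -- Δ evaluations
  have hDAy4 : ∑ d ∈ n.divisors, ∑ x ∈ Finset.Ioo 0 (n / d), fy4 (d, d, x, n / d - x)
      = (6 / 30) * sigmaQ 5 n + (-15 / 30) * sigmaQ 4 n + (10 / 30) * sigmaQ 3 n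
        + 0 * sigmaQ 2 n + (-1 / 30) * sigmaQ 1 n := by
    have hin : ∀ d ∈ n.divisors, ∑ x ∈ Finset.Ioo 0 (n / d), fy4 (d, d, x, n / d - x)
        = (6 / 30) * ((n / d : ℕ) : ℚ) ^ 5 + (-15 / 30) * ((n / d : ℕ) : ℚ) ^ 4
          + (10 / 30) * ((n / d : ℕ) : ℚ) ^ 3 + 0 * ((n / d : ℕ) : ℚ) ^ 2
          + (-1 / 30) * ((n / d : ℕ) : ℚ) := by
      intro d _
      rw [show (∑ x ∈ Finset.Ioo 0 (n / d), fy4 (d, d, x, n / d - x))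
          = ∑ x ∈ Finset.Ioo 0 (n / d), (((n / d) - x : ℕ) : ℚ) ^ 4 from rfl, inner_qx4]
      ring
    rw [Finset.sum_congr rfl hin]
    exact div_sum_pows n (6 / 30) (-15 / 30) (10 / 30) 0 (-1 / 30)
  have hDXy4 : ∑ d ∈ n.divisors, ∑ a ∈ Finset.Ioo 0 (n / d), fy4 (a, n / d - a, d, d)
      = (n : ℚ) * sigmaQ 3 n - sigmaQ 4 n := by
    have hin : ∀ d ∈ n.divisors, ∑ a ∈ Finset.Ioo 0 (n / d), fy4 (a, n / d - a, d, d)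
        = ((n / d - 1 : ℕ) : ℚ) * ((d : ℚ) ^ (3 + 1)) := by
      intro d _
      rw [show (∑ a ∈ Finset.Ioo 0 (n / d), fy4 (a, n / d - a, d, d))
          = ∑ _a ∈ Finset.Ioo 0 (n / d), ((d : ℚ) ^ 4) from rfl,
        Finset.sum_const, Nat.card_Ioo, Nat.sub_zero, nsmul_eq_mul]
    rw [Finset.sum_congr rfl hin]
    exact div_sum_const n hn 3
  have hDAxy3 : ∑ d ∈ n.divisors, ∑ x ∈ Finset.Ioo 0 (n / d), fxy3 (d, d, x, n / d - x)
      = (3 / 60) * sigmaQ 5 n + 0 * sigmaQ 4 n + (-5 / 60) * sigmaQ 3 n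
        + 0 * sigmaQ 2 n + (2 / 60) * sigmaQ 1 n := by
    have hin : ∀ d ∈ n.divisors, ∑ x ∈ Finset.Ioo 0 (n / d), fxy3 (d, d, x, n / d - x)
        = (3 / 60) * ((n / d : ℕ) : ℚ) ^ 5 + 0 * ((n / d : ℕ) : ℚ) ^ 4
          + (-5 / 60) * ((n / d : ℕ) : ℚ) ^ 3 + 0 * ((n / d : ℕ) : ℚ) ^ 2
          + (2 / 60) * ((n / d : ℕ) : ℚ) := by
      intro d _
      rw [show (∑ x ∈ Finset.Ioo 0 (n / d), fxy3 (d, d, x, n / d - x))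
          = ∑ x ∈ Finset.Ioo 0 (n / d), ((x : ℚ) * (((n / d) - x : ℕ) : ℚ) ^ 3) from rfl,
        inner_x_qx3]
      ring
    rw [Finset.sum_congr rfl hin]
    exact div_sum_pows n (3 / 60) 0 (-5 / 60) 0 (2 / 60)
  have hDXxy3 : ∑ d ∈ n.divisors, ∑ a ∈ Finset.Ioo 0 (n / d), fxy3 (a, n / d - a, d, d)
      = (n : ℚ) * sigmaQ 3 n - sigmaQ 4 n := by
    have hin : ∀ d ∈ n.divisors, ∑ a ∈ Finset.Ioo 0 (n / d), fxy3 (a, n / d - a, d, d)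
        = ((n / d - 1 : ℕ) : ℚ) * ((d : ℚ) ^ (3 + 1)) := by
      intro d _
      rw [show (∑ a ∈ Finset.Ioo 0 (n / d), fxy3 (a, n / d - a, d, d))
          = ∑ _a ∈ Finset.Ioo 0 (n / d), ((d : ℚ) * (d : ℚ) ^ 3) from rfl,
        Finset.sum_const, Nat.card_Ioo, Nat.sub_zero, nsmul_eq_mul]
      ring
    rw [Finset.sum_congr rfl hin]
    exact div_sum_const n hn 3
  have hDAx2y2 : ∑ d ∈ n.divisors, ∑ x ∈ Finset.Ioo 0 (n / d), fx2y2 (d, d, x, n / d - x)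
      = (1 / 30) * sigmaQ 5 n + 0 * sigmaQ 4 n + 0 * sigmaQ 3 n
        + 0 * sigmaQ 2 n + (-1 / 30) * sigmaQ 1 n := by
    have hin : ∀ d ∈ n.divisors, ∑ x ∈ Finset.Ioo 0 (n / d), fx2y2 (d, d, x, n / d - x)
        = (1 / 30) * ((n / d : ℕ) : ℚ) ^ 5 + 0 * ((n / d : ℕ) : ℚ) ^ 4
          + 0 * ((n / d : ℕ) : ℚ) ^ 3 + 0 * ((n / d : ℕ) : ℚ) ^ 2
          + (-1 / 30) * ((n / d : ℕ) : ℚ) := by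
      intro d _
      rw [show (∑ x ∈ Finset.Ioo 0 (n / d), fx2y2 (d, d, x, n / d - x))
          = ∑ x ∈ Finset.Ioo 0 (n / d), ((x : ℚ) ^ 2 * (((n / d) - x : ℕ) : ℚ) ^ 2) from
          rfl, inner_x2_qx2]
      ring
    rw [Finset.sum_congr rfl hin]
    exact div_sum_pows n (1 / 30) 0 0 0 (-1 / 30)
  have hDXx2y2 : ∑ d ∈ n.divisors, ∑ a ∈ Finset.Ioo 0 (n / d), fx2y2 (a, n / d - a, d, d)
      = (n : ℚ) * sigmaQ 3 n - sigmaQ 4 n := by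
    have hin : ∀ d ∈ n.divisors, ∑ a ∈ Finset.Ioo 0 (n / d), fx2y2 (a, n / d - a, d, d)
        = ((n / d - 1 : ℕ) : ℚ) * ((d : ℚ) ^ (3 + 1)) := by
      intro d _
      rw [show (∑ a ∈ Finset.Ioo 0 (n / d), fx2y2 (a, n / d - a, d, d))
          = ∑ _a ∈ Finset.Ioo 0 (n / d), ((d : ℚ) ^ 2 * (d : ℚ) ^ 2) from rfl,
        Finset.sum_const, Nat.card_Ioo, Nat.sub_zero, nsmul_eq_mul]
      ring
    rw [Finset.sum_congr rfl hin]
    exact div_sum_const n hn 3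
  -- equations
  have e1 := decA n fy4
  rw [show (fun p => fy4 (p.2.1, p.1, p.2.2.2, p.2.2.1)) = fx4 from rfl, hDAy4] at e1
  have e2 := decX n fy4
  rw [show (fun p => fy4 (p.2.1, p.1, p.2.2.2, p.2.2.1)) = fx4 from rfl, hDXy4] at e2
  have e3 := decA n fxy3
  rw [show (fun p => fxy3 (p.2.1, p.1, p.2.2.2, p.2.2.1)) = fx3y from
    funext fun p => mul_comm _ _, hDAxy3] at e3
  have e4 := decX n fxy3
  rw [show (fun p => fxy3 (p.2.1, p.1, p.2.2.2, p.2.2.1)) = fx3y from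
    funext fun p => mul_comm _ _, hDXxy3] at e4
  have e5 := decA n fx2y2
  rw [show (fun p => fx2y2 (p.2.1, p.1, p.2.2.2, p.2.2.1)) = fx2y2 from
    funext fun p => mul_comm _ _, hDAx2y2] at e5
  have e6 := decX n fx2y2
  rw [show (fun p => fx2y2 (p.2.1, p.1, p.2.2.2, p.2.2.1)) = fx2y2 from
    funext fun p => mul_comm _ _, hDXx2y2] at e6
  have e7 : UU n fy4 = VV n fy4 - 4 * VV n fxy3 + 6 * VV n fx2y2 - 4 * VV n fx3y
      + VV n fx4 := by
    rw [star_bij n fy4]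
    have hpt : ∀ p ∈ Vfil n,
        fy4 (p.1 + p.2.1, p.2.1, p.2.2.1, p.2.2.2 - p.2.2.1)
          = fy4 p - 4 * fxy3 p + 6 * fx2y2 p - 4 * fx3y p + fx4 p := by
      intro p hp
      rw [Vfil, Finset.mem_filter] at hp
      have hxy : p.2.2.1 ≤ p.2.2.2 := le_of_lt hp.2
      simp only [fy4, fxy3, fx2y2, fx3y, fx4]
      rw [Nat.cast_sub hxy]
      ring
    rw [Finset.sum_congr rfl hpt]
    simp only [Finset.sum_add_distrib, Finset.sum_sub_distrib, ← Finset.mul_sum]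
    rfl
  have e8 : UU n fxy3 = VV n fxy3 - 3 * VV n fx2y2 + 3 * VV n fx3y - VV n fx4 := by
    rw [star_bij n fxy3]
    have hpt : ∀ p ∈ Vfil n,
        fxy3 (p.1 + p.2.1, p.2.1, p.2.2.1, p.2.2.2 - p.2.2.1)
          = fxy3 p - 3 * fx2y2 p + 3 * fx3y p - fx4 p := by
      intro p hp
      rw [Vfil, Finset.mem_filter] at hp
      have hxy : p.2.2.1 ≤ p.2.2.2 := le_of_lt hp.2
      simp only [fxy3, fx2y2, fx3y, fx4]
      rw [Nat.cast_sub hxy]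
      ring
    rw [Finset.sum_congr rfl hpt]
    simp only [Finset.sum_add_distrib, Finset.sum_sub_distrib, ← Finset.mul_sum]
    rfl
  have e9 : UU n fx2y2 = VV n fx2y2 - 2 * VV n fx3y + VV n fx4 := by
    rw [star_bij n fx2y2]
    have hpt : ∀ p ∈ Vfil n,
        fx2y2 (p.1 + p.2.1, p.2.1, p.2.2.1, p.2.2.2 - p.2.2.1)
          = fx2y2 p - 2 * fx3y p + fx4 p := by
      intro p hp
      rw [Vfil, Finset.mem_filter] at hp
      have hxy : p.2.2.1 ≤ p.2.2.2 := le_of_lt hp.2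
      simp only [fx2y2, fx3y, fx4]
      rw [Nat.cast_sub hxy]
      ring
    rw [Finset.sum_congr rfl hpt]
    simp only [Finset.sum_add_distrib, Finset.sum_sub_distrib, ← Finset.mul_sum]
    rfl
  have e10 : VV n fy4 = UU n fy4 + 4 * UU n fxy3 + 6 * UU n fx2y2 + 4 * UU n fx3y
      + UU n fx4 := by
    rw [star2_bij n fy4]
    have hpt : ∀ p ∈ Ufil n,
        fy4 (p.1 - p.2.1, p.2.1, p.2.2.1, p.2.2.2 + p.2.2.1)
          = fy4 p + 4 * fxy3 p + 6 * fx2y2 p + 4 * fx3y p + fx4 p := by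
      intro p _
      simp only [fy4, fxy3, fx2y2, fx3y, fx4]
      push_cast
      ring
    rw [Finset.sum_congr rfl hpt]
    simp only [Finset.sum_add_distrib, ← Finset.mul_sum]
    rfl
  have e11 : VV n fxy3 = UU n fxy3 + 3 * UU n fx2y2 + 3 * UU n fx3y + UU n fx4 := by
    rw [star2_bij n fxy3]
    have hpt : ∀ p ∈ Ufil n,
        fxy3 (p.1 - p.2.1, p.2.1, p.2.2.1, p.2.2.2 + p.2.2.1)
          = fxy3 p + 3 * fx2y2 p + 3 * fx3y p + fx4 p := by
      intro p _
      simp only [fxy3, fx2y2, fx3y, fx4]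
      push_cast
      ring
    rw [Finset.sum_congr rfl hpt]
    simp only [Finset.sum_add_distrib, ← Finset.mul_sum]
    rfl
  have e12 : MM n fab3 = MM n fxy3 := by
    exact (tau_swap n fab3).trans (by rfl)
  linear_combination (-1 : ℚ) * hconv + (1 / 4 : ℚ) * e1 + (-1 / 4 : ℚ) * e2
    + (1 / 2 : ℚ) * e3 + (1 / 2 : ℚ) * e4 + (3 / 8 : ℚ) * e5 + (-3 / 8 : ℚ) * e6
    + (1 / 2 : ℚ) * e7 + e8 + (3 / 4 : ℚ) * e9 + (1 / 4 : ℚ) * e10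
    + (-1 / 2 : ℚ) * e11 + e12

/-- `∑_{d₁+d₂+d₃=d, dᵢ≥1} σ₁(d₁)σ₁(d₂)σ₁(d₃)
      = (d²/8 - d/16 + 1/192)·σ₁(d) + (-5d/32 + 5/96)·σ₃(d) + (7/192)·σ₅(d)`. -/
theorem triple_convolution_sigma1 (d : ℕ) (hd : 0 < d) :
    ∑ d₁ ∈ Finset.Ioo 0 d, ∑ d₂ ∈ Finset.Ioo 0 (d - d₁),
        sigmaQ 1 d₁ * sigmaQ 1 d₂ * sigmaQ 1 (d - d₁ - d₂) =
      ((d : ℚ) ^ 2 / 8 - (d : ℚ) / 16 + 1 / 192) * sigmaQ 1 d +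
        (-5 * (d : ℚ) / 32 + 5 / 96) * sigmaQ 3 d + (7 / 192) * sigmaQ 5 d := by
  have hinner : ∀ m ∈ Finset.Ioo 0 d,
      (∑ d₂ ∈ Finset.Ioo 0 (d - m), sigmaQ 1 m * sigmaQ 1 d₂ * sigmaQ 1 (d - m - d₂))
        = 5 / 12 * (sigmaQ 1 m * sigmaQ 3 (d - m))
          + 1 / 12 * (sigmaQ 1 m * sigmaQ 1 (d - m))
          - 1 / 2 * (((d - m : ℕ) : ℚ) * (sigmaQ 1 m * sigmaQ 1 (d - m))) := by
    intro m hm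
    rw [Finset.mem_Ioo] at hm
    have h1 : 0 < d - m := by omega
    rw [show (∑ d₂ ∈ Finset.Ioo 0 (d - m), sigmaQ 1 m * sigmaQ 1 d₂ * sigmaQ 1 (d - m - d₂))
        = sigmaQ 1 m * ∑ d₂ ∈ Finset.Ioo 0 (d - m), sigmaQ 1 d₂ * sigmaQ 1 (d - m - d₂)
        from by rw [Finset.mul_sum]; exact Finset.sum_congr rfl fun x _ => by ring]
    rw [besge_s5 (d - m) h1]
    ring
  rw [Finset.sum_congr rfl hinner]
  simp only [Finset.sum_add_distrib, Finset.sum_sub_distrib, ← Finset.mul_sum]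
  have hC := conv13 d hd
  have hW := besge_s5 d hd
  have hrefl : ∑ m ∈ Finset.Ioo 0 d, (((d - m : ℕ) : ℚ) * (sigmaQ 1 m * sigmaQ 1 (d - m)))
      = ∑ m ∈ Finset.Ioo 0 d, ((m : ℚ) * (sigmaQ 1 (d - m) * sigmaQ 1 m)) := by
    refine Finset.sum_nbij' (fun m => d - m) (fun m => d - m) ?_ ?_ ?_ ?_ ?_ <;>
      intro m hm <;> simp only [Finset.mem_Ioo] at hm ⊢ <;>
      first
        | omega
        | rw [show d - (d - m) = m from by omega]
  have hsum2 : (∑ m ∈ Finset.Ioo 0 d, (((d - m : ℕ) : ℚ) * (sigmaQ 1 m * sigmaQ 1 (d - m))))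
        + ∑ m ∈ Finset.Ioo 0 d, ((m : ℚ) * (sigmaQ 1 (d - m) * sigmaQ 1 m))
      = (d : ℚ) * ∑ m ∈ Finset.Ioo 0 d, sigmaQ 1 m * sigmaQ 1 (d - m) := by
    rw [← Finset.sum_add_distrib, Finset.mul_sum]
    refine Finset.sum_congr rfl fun m hm => ?_
    rw [Finset.mem_Ioo] at hm
    rw [Nat.cast_sub hm.2.le]
    ring
  linear_combination (5 / 12 : ℚ) * hC + (1 / 12 - (d : ℚ) / 4) * hW
    + (-1 / 4 : ℚ) * hrefl + (-1 / 4 : ℚ) * hsum2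
end

section
/- Let α = (1 2 ⋯ d) ∈ S_d be a d-cycle and let β = (1 j k) be a 3-cycle with j, k ∈ {2,…,d} distinct. Then the product βα is a d-cycle if and only if j < k. -/
open Equiv Equiv.Perm

private lemma formPerm3_apply {d : ℕ} (a j k x : Fin d) (h1 : a ≠ j) (h2 : a ≠ k) (h3 : j ≠ k) :
    [a,j,k].formPerm x = if x = a then j else if x = j then k else if x = k then a else x := by
  have : [a,j,k].formPerm = Equiv.swap a j * Equiv.swap j k := by simp [List.formPerm]
  rw [this]
  simp only [Perm.mul_apply]
  rcases eq_or_ne x a with rfl|hxa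
  · rw [swap_apply_of_ne_of_ne h1 h2, swap_apply_left, if_pos rfl]
  rcases eq_or_ne x j with rfl|hxj
  · rw [swap_apply_left, swap_apply_of_ne_of_ne (Ne.symm h2) (Ne.symm h3), if_neg hxa, if_pos rfl]
  rcases eq_or_ne x k with rfl|hxk
  · rw [swap_apply_right, swap_apply_right, if_neg hxa, if_neg hxj, if_pos rfl]
  · rw [swap_apply_of_ne_of_ne hxj hxk, swap_apply_of_ne_of_ne hxa hxj, if_neg hxa, if_neg hxj,
      if_neg hxk]

private lemma aux (n : ℕ) (j k : Fin (n+3))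
    (hj : j ≠ ⟨0, by omega⟩) (hk : k ≠ ⟨0, by omega⟩) (hjk : j ≠ k) :
    ((([(⟨0, by omega⟩ : Fin (n+3)), j, k].formPerm * finRotate (n+3)).IsCycle ∧
      ([(⟨0, by omega⟩ : Fin (n+3)), j, k].formPerm * finRotate (n+3)).support.card = n+3)) ↔
      j < k := by
  set a : Fin (n+3) := ⟨0, by omega⟩ with ha
  set σ : Perm (Fin (n+3)) := [a, j, k].formPerm * finRotate (n+3) with hσ
  have haval : (a:ℕ) = 0 := rfl
  have hJ1 : 1 ≤ (j:ℕ) := by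
    rcases Nat.eq_zero_or_pos (j:ℕ) with h|h
    · exact absurd (Fin.ext h) hj
    · exact h
  have hK1 : 1 ≤ (k:ℕ) := by
    rcases Nat.eq_zero_or_pos (k:ℕ) with h|h
    · exact absurd (Fin.ext h) hk
    · exact h
  have hJ2 : (j:ℕ) ≤ n+2 := by have := j.isLt; omega
  have hK2 : (k:ℕ) ≤ n+2 := by have := k.isLt; omega
  have hJK : (j:ℕ) ≠ (k:ℕ) := fun h => hjk (Fin.ext h)
  -- value of σ
  have sigma_val : ∀ x : Fin (n+3), ((σ x : Fin (n+3)) : ℕ) =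
      if (x:ℕ) + 1 = n+3 then (j:ℕ) else if (x:ℕ)+1 = (j:ℕ) then (k:ℕ)
      else if (x:ℕ)+1 = (k:ℕ) then 0 else (x:ℕ)+1 := by
    intro x
    have hx := x.isLt
    rw [hσ, Perm.mul_apply]
    have hy : ((finRotate (n+3) x : Fin (n+3)) : ℕ) = if (x:ℕ)+1 = n+3 then 0 else (x:ℕ)+1 := by
      rw [finRotate_succ_apply, Fin.add_def]
      simp only [Fin.val_one]
      split_ifs with h
      · rw [h]; simp
      · exact Nat.mod_eq_of_lt (by omega)
    rw [formPerm3_apply a j k _ hj.symm hk.symm hjk]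
    rcases eq_or_ne ((x:ℕ)+1) (n+3) with hcase|hcase
    · have hya : (finRotate (n+3)) x = a := Fin.ext (by rw [hy, if_pos hcase])
      rw [if_pos hya, if_pos hcase]
    · simp only [apply_ite (Fin.val), Fin.ext_iff, hy, if_neg hcase, haval]
      split_ifs <;> first | omega | exact (‹False›).elim
  constructor
  · -- cycle + full support → j < k
    rintro ⟨hc, hcard⟩
    by_contra hlt
    have hKJ : (k:ℕ) < (j:ℕ) := by
      rcases Fin.lt_or_lt_of_ne hjk with h|h
      · exact absurd h hlt
      · exact h
    have hsupp : σ.support = Finset.univ :=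
      Finset.eq_univ_of_card _ (by rw [hcard, Fintype.card_fin])
    have moved : ∀ x : Fin (n+3), σ x ≠ x := fun x =>
      mem_support.mp (hsupp ▸ Finset.mem_univ x)
    obtain ⟨m, hm⟩ := hc.exists_pow_eq (moved a) (moved j)
    have inv : ∀ m : ℕ, (((σ ^ m) a : Fin (n+3)) : ℕ) < (k:ℕ) := by
      intro m
      induction m with
      | zero => simp only [pow_zero, Perm.one_apply]; omega
      | succ m ih =>
        rw [pow_succ', Perm.mul_apply, sigma_val]
        split_ifs <;> omega
    have := inv m
    rw [hm] at this
    omega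
  · -- j < k → cycle + full support
    intro hlt
    have hJK' : (j:ℕ) < (k:ℕ) := hlt
    have nofix : ∀ x : Fin (n+3), σ x ≠ x := by
      intro x h
      have := sigma_val x
      rw [h] at this
      have hx := x.isLt
      split_ifs at this <;> omega
    have orbit : ∀ m : ℕ, m < n+3 → (((σ ^ m) a : Fin (n+3)) : ℕ) =
        if m < (j:ℕ) then m else if m < (j:ℕ) + (n+3) - (k:ℕ) then m + (k:ℕ) - (j:ℕ)
        else m + (k:ℕ) - (n+3) := by
      intro m
      induction m with
      | zero =>
        intro _
        simp only [pow_zero, Perm.one_apply]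
        split_ifs <;> omega
      | succ m ih =>
        intro hm
        rw [pow_succ', Perm.mul_apply, sigma_val, ih (by omega)]
        split_ifs <;> omega
    have surj : ∀ y : Fin (n+3), ∃ m : ℕ, (σ ^ m) a = y := by
      intro y
      have hy := y.isLt
      rcases Nat.lt_or_ge (y:ℕ) (j:ℕ) with h1|h1
      · exact ⟨(y:ℕ), Fin.ext (by rw [orbit _ (by omega)]; (split_ifs; omega))⟩
      rcases Nat.lt_or_ge (y:ℕ) (k:ℕ) with h2|h2
      · exact ⟨(y:ℕ) + (n+3) - (k:ℕ), Fin.ext (by rw [orbit _ (by omega)]; split_ifs <;> omega)⟩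
      · exact ⟨(y:ℕ) + (j:ℕ) - (k:ℕ), Fin.ext (by rw [orbit _ (by omega)]; split_ifs <;> omega)⟩
    refine ⟨⟨a, nofix a, fun y hy => ?_⟩, ?_⟩
    · obtain ⟨m, hm⟩ := surj y
      exact ⟨(m : ℤ), by rw [zpow_natCast]; exact hm⟩
    · have hsupp : σ.support = Finset.univ :=
        Finset.eq_univ_iff_forall.mpr fun x => mem_support.mpr (nofix x)
      rw [hsupp, Finset.card_univ, Fintype.card_fin]

/-- With `α = (1 2 ⋯ d)` the standard `d`-cycle (here on `Fin d`, sending `i ↦ i+1`) and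
`β = (1 j k)` a 3-cycle (here the cycle `0 ↦ j ↦ k ↦ 0`) with `j, k ≠ 0` distinct, the
product `βα` is a `d`-cycle if and only if `j < k`. -/
theorem threeCycle_mul_cycle_isCycle_iff (d : ℕ) (hd : 3 ≤ d) (j k : Fin d)
    (hj : j ≠ ⟨0, by omega⟩) (hk : k ≠ ⟨0, by omega⟩) (hjk : j ≠ k) :
    ((([(⟨0, by omega⟩ : Fin d), j, k].formPerm * finRotate d).IsCycle ∧
      ([(⟨0, by omega⟩ : Fin d), j, k].formPerm * finRotate d).support.card = d)) ↔
      j < k := by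
  obtain ⟨n, rfl⟩ : ∃ n, d = n + 3 := ⟨d - 3, by omega⟩
  exact aux n j k hj hk hjk
end

section
/- Let a, b be positive integers with a + b = d, and let α ∈ S_d be the permutation (1 2 ⋯ a)(a+1 ⋯ d) with two cycles of lengths a and b. If a ≠ b, then there exists exactly one 3-cycle β (up to simultaneous conjugation by the centralizer of α) acting nontrivially on both orbits of α such that βα has cycle type (a,b); if a = b, then no such 3-cycle exists. -/
open Equiv Equiv.Perm

/-- `β` is a 3-cycle acting nontrivially on both orbits `Fin a` and `Fin b` of the
permutation `α = (1⋯a)(a+1⋯d)` (realized as `sumCongr (finRotate a) (finRotate b)` on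
`Fin a ⊕ Fin b`) such that `βα` has cycle type `(a,b)`, i.e. is conjugate to `α`. -/
def GoodThreeCycle (a b : ℕ) (β : Perm (Fin a ⊕ Fin b)) : Prop :=
  β.IsThreeCycle ∧
  (∃ x : Fin a, β (Sum.inl x) ≠ Sum.inl x) ∧
  (∃ y : Fin b, β (Sum.inr y) ≠ Sum.inr y) ∧
  IsConj (Equiv.sumCongr (finRotate a) (finRotate b))
    (β * Equiv.sumCongr (finRotate a) (finRotate b))

section aux
open Sum

lemma finRotate_val {n : ℕ} (x : Fin n) :
    (finRotate n x : ℕ) = if (x : ℕ) + 1 = n then 0 else (x : ℕ) + 1 := by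
  cases n with
  | zero => exact x.elim0
  | succ m =>
    by_cases h : x = Fin.last m
    · subst h; simp [coe_finRotate]
    · rw [coe_finRotate, if_neg h, if_neg]
      intro hc
      exact h (Fin.ext (by simp only [Fin.val_last]; omega))

lemma rotpow_val {n : ℕ} (k : ℕ) (x : Fin n) :
    ((((finRotate n) ^ k) x : Fin n) : ℕ) = ((x : ℕ) + k) % n := by
  have hn : 0 < n := x.pos
  induction k with
  | zero => simp [Nat.mod_eq_of_lt x.isLt]
  | succ k ih =>
    rw [pow_succ', Perm.mul_apply, finRotate_val, ih]
    have h1 : ((x : ℕ) + (k + 1)) % n = (((x : ℕ) + k) % n + 1) % n := by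
      rw [Nat.mod_add_mod, Nat.add_assoc]
    have h2 : ((x : ℕ) + k) % n < n := Nat.mod_lt _ hn
    by_cases hc : ((x : ℕ) + k) % n + 1 = n
    · rw [if_pos hc, h1, hc, Nat.mod_self]
    · rw [if_neg hc, h1]
      exact (Nat.mod_eq_of_lt (by omega)).symm

/-- the three-cycle `inl u → inl v → inr w → inl u`. -/
def bcyc {a b : ℕ} (u v : Fin a) (w : Fin b) : Perm (Fin a ⊕ Fin b) :=
  swap (inl u) (inl v) * swap (inl v) (inr w)

lemma bcyc_apply_inl_u {a b : ℕ} {u v : Fin a} (w : Fin b) (huv : u ≠ v) :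
    bcyc u v w (inl u) = inl v := by
  unfold bcyc
  have h := swap_apply_of_ne_of_ne (show (inl u : Fin a ⊕ Fin b) ≠ inl v by simp [huv])
    (show (inl u : Fin a ⊕ Fin b) ≠ inr w by simp)
  rw [Perm.mul_apply, h, swap_apply_left]

lemma bcyc_apply_inl_v {a b : ℕ} (u v : Fin a) (w : Fin b) :
    bcyc u v w (inl v) = inr w := by
  unfold bcyc
  have h := swap_apply_of_ne_of_ne (show (inr w : Fin a ⊕ Fin b) ≠ inl u by simp)
    (show (inr w : Fin a ⊕ Fin b) ≠ inl v by simp)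
  rw [Perm.mul_apply, swap_apply_left, h]

lemma bcyc_apply_inr_w {a b : ℕ} (u v : Fin a) (w : Fin b) :
    bcyc u v w (inr w) = inl u := by
  unfold bcyc
  rw [Perm.mul_apply, swap_apply_right, swap_apply_right]

lemma bcyc_apply_other {a b : ℕ} {u v : Fin a} {w : Fin b} {x : Fin a ⊕ Fin b}
    (h1 : x ≠ inl u) (h2 : x ≠ inl v) (h3 : x ≠ inr w) :
    bcyc u v w x = x := by
  unfold bcyc
  have h := swap_apply_of_ne_of_ne h2 h3
  rw [Perm.mul_apply, h, swap_apply_of_ne_of_ne h1 h2]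

def alp (a b : ℕ) : Perm (Fin a ⊕ Fin b) := Equiv.sumCongr (finRotate a) (finRotate b)

@[simp] lemma alp_inl {a b : ℕ} (x : Fin a) : alp a b (inl x) = inl (finRotate a x) := rfl
@[simp] lemma alp_inr {a b : ℕ} (y : Fin b) : alp a b (inr y) = inr (finRotate b y) := rfl

/-- The re-indexing equivalence matching up the two cycles of `bcyc u 0 0 * alp (t+s) b`
with `Fin t` and `Fin (s+b)`. -/
def piz (t s b : ℕ) : Fin t ⊕ Fin (s + b) ≃ Fin (t + s) ⊕ Fin b :=
  (Equiv.sumCongr (Equiv.refl (Fin t)) finSumFinEquiv.symm).trans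
    ((Equiv.sumAssoc (Fin t) (Fin s) (Fin b)).symm.trans
      (Equiv.sumCongr finSumFinEquiv (Equiv.refl (Fin b))))

lemma piz_castAdd {t s b : ℕ} (j : Fin s) :
    piz t s b (inr (Fin.castAdd b j)) = inl (Fin.natAdd t j) := by simp [piz]

lemma piz_natAdd {t s b : ℕ} (j : Fin b) :
    piz t s b (inr (Fin.natAdd s j)) = inr j := by simp [piz]

lemma piz_inl {t s b : ℕ} (i : Fin t) :
    piz t s b (inl i) = inl ⟨(i : ℕ), by have := i.isLt; omega⟩ := by
  simp [piz, Fin.ext_iff]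

lemma piz_inr_lt {t s b : ℕ} (j : Fin (s + b)) (h : (j : ℕ) < s) :
    piz t s b (inr j) = inl ⟨t + (j : ℕ), by omega⟩ := by
  have hj : j = Fin.castAdd b ⟨(j : ℕ), h⟩ := Fin.ext rfl
  conv_lhs => rw [hj]
  rw [piz_castAdd]
  exact congrArg _ (Fin.ext rfl)

lemma piz_inr_ge {t s b : ℕ} (j : Fin (s + b)) (h : s ≤ (j : ℕ)) :
    piz t s b (inr j) = inr ⟨(j : ℕ) - s, by have := j.isLt; omega⟩ := by
  have hj : j = Fin.natAdd s ⟨(j : ℕ) - s, by have := j.isLt; omega⟩ := Fin.ext (by simp; omega)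
  conv_lhs => rw [hj]
  rw [piz_natAdd]

lemma finRotate_eq_mk {n : ℕ} (x : Fin n) (d : ℕ) (hd : d < n)
    (hcd : (if (x : ℕ) + 1 = n then 0 else (x : ℕ) + 1) = d) :
    finRotate n x = ⟨d, hd⟩ :=
  Fin.ext (by rw [finRotate_val]; simpa using hcd)

lemma struct0_key {t s b : ℕ} (ht : 1 ≤ t) (hs : 1 ≤ s) (hb : 1 ≤ b) (x : Fin t ⊕ Fin (s + b)) :
    bcyc (⟨t, by omega⟩ : Fin (t + s)) ⟨0, by omega⟩ (⟨0, by omega⟩ : Fin b)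
        (alp (t + s) b (piz t s b x)) = piz t s b (alp t (s + b) x) := by
  obtain i | j := x
  · have hi := i.isLt
    rw [piz_inl, alp_inl, alp_inl, piz_inl]
    rw [finRotate_eq_mk (⟨(i : ℕ), by omega⟩ : Fin (t + s)) ((i : ℕ) + 1) (by omega)
      (by simp only [Fin.val_mk]; split <;> omega)]
    by_cases hit : (i : ℕ) + 1 = t
    · have e2 : (⟨(i : ℕ) + 1, by omega⟩ : Fin (t + s)) = ⟨t, by omega⟩ := Fin.ext (by simp; omega)
      rw [e2, bcyc_apply_inl_u _ (by simp only [ne_eq, Fin.mk.injEq]; omega)]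
      exact congrArg _ (Fin.ext (by simp only [finRotate_val, Fin.val_mk]; split <;> omega))
    · rw [bcyc_apply_other (by simp only [ne_eq, Sum.inl.injEq, Fin.mk.injEq]; omega)
        (by simp only [ne_eq, Sum.inl.injEq, Fin.mk.injEq]; omega) (by simp)]
      exact congrArg _ (Fin.ext (by simp only [finRotate_val, Fin.val_mk]; split <;> omega))
  · have hj := j.isLt
    rw [alp_inr]
    by_cases h2 : (j : ℕ) + 1 = s + b
    · rw [piz_inr_ge j (by omega), alp_inr,
        finRotate_eq_mk (⟨(j : ℕ) - s, by omega⟩ : Fin b) 0 (by omega)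
          (by simp only [Fin.val_mk]; split <;> omega),
        bcyc_apply_inr_w,
        finRotate_eq_mk j 0 (by omega) (by split <;> omega),
        piz_inr_lt ⟨0, by omega⟩ (by simp only [Fin.val_mk]; omega)]
      exact congrArg _ (Fin.ext (by simp))
    · by_cases hjs : (j : ℕ) + 1 = s
      · rw [piz_inr_lt j (by omega), alp_inl,
          finRotate_eq_mk (⟨t + (j : ℕ), by omega⟩ : Fin (t + s)) 0 (by omega)
            (by simp only [Fin.val_mk]; split <;> omega),
          bcyc_apply_inl_v,
          finRotate_eq_mk j s (by omega) (by split <;> omega),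
          piz_inr_ge ⟨s, by omega⟩ (by simp only [Fin.val_mk]; omega)]
        exact congrArg _ (Fin.ext (by simp))
      · by_cases hlt : (j : ℕ) < s
        · rw [piz_inr_lt j hlt, alp_inl,
            finRotate_eq_mk (⟨t + (j : ℕ), by omega⟩ : Fin (t + s)) (t + (j : ℕ) + 1) (by omega)
              (by simp only [Fin.val_mk]; split <;> omega),
            bcyc_apply_other (by simp only [ne_eq, Sum.inl.injEq, Fin.mk.injEq]; omega)
              (by simp only [ne_eq, Sum.inl.injEq, Fin.mk.injEq]; omega) (by simp),
            finRotate_eq_mk j ((j : ℕ) + 1) (by omega) (by split <;> omega),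
            piz_inr_lt ⟨(j : ℕ) + 1, by omega⟩ (by simp only [Fin.val_mk]; omega)]
          exact congrArg _ (Fin.ext (by simp only [Fin.val_mk]; omega))
        · rw [piz_inr_ge j (by omega), alp_inr,
            finRotate_eq_mk (⟨(j : ℕ) - s, by omega⟩ : Fin b) ((j : ℕ) - s + 1) (by omega)
              (by simp only [Fin.val_mk]; split <;> omega),
            bcyc_apply_other (by simp) (by simp)
              (by simp only [ne_eq, Sum.inr.injEq, Fin.mk.injEq]; omega),
            finRotate_eq_mk j ((j : ℕ) + 1) (by omega) (by split <;> omega),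
            piz_inr_ge ⟨(j : ℕ) + 1, by omega⟩ (by simp only [Fin.val_mk]; omega)]
          exact congrArg _ (Fin.ext (by simp only [Fin.val_mk]; omega))

lemma struct0 {t s b : ℕ} (ht : 1 ≤ t) (hs : 1 ≤ s) (hb : 1 ≤ b) :
    bcyc (⟨t, by omega⟩ : Fin (t + s)) ⟨0, by omega⟩ (⟨0, by omega⟩ : Fin b) * alp (t + s) b
      = (piz t s b).permCongr (alp t (s + b)) := by
  apply Equiv.ext
  intro z
  have h := struct0_key ht hs hb ((piz t s b).symm z)
  rw [Equiv.apply_symm_apply] at h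
  simpa [Equiv.permCongr_apply, Perm.mul_apply] using h

lemma cycleType_permCongr {α β : Type*} [Fintype α] [DecidableEq α] [Fintype β] [DecidableEq β]
    (e : α ≃ β) (g : Perm α) : (e.permCongr g).cycleType = g.cycleType := by
  have h : e.permCongr g
      = g.extendDomain (e.trans (Equiv.subtypeUnivEquiv (fun (_ : β) => trivial)).symm) := by
    ext x
    rw [Equiv.permCongr_apply, Perm.extendDomain_apply_subtype _ _ trivial]
    simp [Equiv.subtypeUnivEquiv]
  rw [h, cycleType_extendDomain]

lemma permCongr_swap {α β : Type*} [DecidableEq α] [DecidableEq β] (e : α ≃ β) (u v : α) :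
    e.permCongr (swap u v) = swap (e u) (e v) := by
  ext z
  rw [Equiv.permCongr_apply]
  by_cases h1 : z = e u
  · simp [h1]
  · by_cases h2 : z = e v
    · simp [h2]
    · rw [swap_apply_of_ne_of_ne (fun hc => h1 (by rw [← hc]; simp))
        (fun hc => h2 (by rw [← hc]; simp)), Equiv.apply_symm_apply,
        swap_apply_of_ne_of_ne h1 h2]

def leftE (n m : ℕ) : Fin n ≃ {x : Fin n ⊕ Fin m // x.isLeft} where
  toFun i := ⟨inl i, rfl⟩
  invFun x := x.1.getLeft x.2
  left_inv i := rfl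
  right_inv := by
    rintro ⟨x | x, h⟩
    · rfl
    · simp at h

def rightE (n m : ℕ) : Fin m ≃ {x : Fin n ⊕ Fin m // x.isRight} where
  toFun i := ⟨inr i, rfl⟩
  invFun x := x.1.getRight x.2
  left_inv i := rfl
  right_inv := by
    rintro ⟨x | x, h⟩
    · simp at h
    · rfl

lemma sumCongr_left_eq {n m : ℕ} (f : Perm (Fin n)) :
    (Equiv.sumCongr f (1 : Perm (Fin m)) : Perm (Fin n ⊕ Fin m)) = f.extendDomain (leftE n m) := by
  ext x
  obtain x | x := x
  · have h1 := Perm.extendDomain_apply_subtype f (leftE n m)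
      (show ((inl x : Fin n ⊕ Fin m)).isLeft = true from rfl)
    rw [h1]
    rfl
  · rw [Perm.extendDomain_apply_not_subtype _ _ (by simp)]
    rfl

lemma sumCongr_right_eq {n m : ℕ} (g : Perm (Fin m)) :
    (Equiv.sumCongr (1 : Perm (Fin n)) g : Perm (Fin n ⊕ Fin m)) = g.extendDomain (rightE n m) := by
  ext x
  obtain x | x := x
  · rw [Perm.extendDomain_apply_not_subtype _ _ (by simp)]
    rfl
  · have h1 := Perm.extendDomain_apply_subtype g (rightE n m)
      (show ((inr x : Fin n ⊕ Fin m)).isRight = true from rfl)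
    rw [h1]
    rfl

lemma sumCongr_perm_mul {n m : ℕ} (f f' : Perm (Fin n)) (g g' : Perm (Fin m)) :
    (Equiv.sumCongr f g : Perm (Fin n ⊕ Fin m)) * Equiv.sumCongr f' g'
      = Equiv.sumCongr (f * f') (g * g') := by
  rw [Perm.mul_def, Equiv.sumCongr_trans]
  rfl

lemma sumCongr_disjoint {n m : ℕ} (f : Perm (Fin n)) (g : Perm (Fin m)) :
    Perm.Disjoint (Equiv.sumCongr f (1 : Perm (Fin m)) : Perm (Fin n ⊕ Fin m))
      (Equiv.sumCongr (1 : Perm (Fin n)) g) := by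
  rintro (x | x)
  · right; rfl
  · left; rfl

lemma cycleType_sumCongr {n m : ℕ} (f : Perm (Fin n)) (g : Perm (Fin m)) :
    Equiv.Perm.cycleType (Equiv.sumCongr f g : Perm (Fin n ⊕ Fin m)) = f.cycleType + g.cycleType := by
  have h : (Equiv.sumCongr f g : Perm (Fin n ⊕ Fin m))
      = Equiv.sumCongr f (1 : Perm (Fin m)) * Equiv.sumCongr (1 : Perm (Fin n)) g := by
    rw [sumCongr_perm_mul, mul_one, one_mul]
  rw [h, (sumCongr_disjoint f g).cycleType_mul, sumCongr_left_eq, sumCongr_right_eq,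
    cycleType_extendDomain, cycleType_extendDomain]

lemma cycleType_finRotate_gen (n : ℕ) :
    (finRotate n).cycleType = if 2 ≤ n then {n} else 0 := by
  match n with
  | 0 => rw [if_neg (by omega), Subsingleton.elim (finRotate 0) 1, cycleType_one]
  | 1 => rw [if_neg (by omega), finRotate_one]; exact cycleType_one
  | (n + 2) =>
    rw [if_pos (by omega), (isCycle_finRotate).cycleType, support_finRotate,
      Finset.card_univ, Fintype.card_fin]

lemma threeCycle_decomp {α : Type*} [DecidableEq α] [Fintype α] {σ : Perm α}
    (h : IsThreeCycle σ) :
    ∃ x y z : α, x ≠ y ∧ x ≠ z ∧ y ≠ z ∧ σ x = y ∧ σ y = z ∧ σ z = x ∧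
      σ = swap x y * swap y z := by
  obtain ⟨x, hx, -⟩ := h.isCycle
  have h3 : σ (σ (σ x)) = x := by
    have hord : σ ^ 3 = 1 := by rw [← h.orderOf]; exact pow_orderOf_eq_one σ
    have h2 : (σ ^ 3) x = x := by rw [hord]; rfl
    simpa [pow_succ, Perm.mul_apply] using h2
  have hxy : x ≠ σ x := Ne.symm hx
  have hyz : σ x ≠ σ (σ x) := fun hc => hx (σ.injective hc).symm
  have hxz : x ≠ σ (σ x) := by
    intro hc
    have hcc := congrArg σ hc
    rw [h3] at hcc
    exact hx hcc
  refine ⟨x, σ x, σ (σ x), hxy, hxz, hyz, rfl, rfl, h3, ?_⟩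
  have hsupp : σ.support = {x, σ x, σ (σ x)} := by
    symm
    apply Finset.eq_of_subset_of_card_le
    · intro w hw
      simp only [Finset.mem_insert, Finset.mem_singleton] at hw
      rcases hw with rfl | rfl | rfl
      · exact mem_support.2 hx
      · exact mem_support.2 (fun hc => hx (σ.injective hc))
      · refine mem_support.2 ?_
        rw [h3]
        exact hxz
    · rw [h.card_support]
      rw [Finset.card_insert_of_notMem (by simp [hxy, hxz]),
        Finset.card_insert_of_notMem (by simp [hyz]), Finset.card_singleton]
  ext w
  by_cases hwx : w = x
  · subst hwx
    rw [Perm.mul_apply, swap_apply_of_ne_of_ne hxy hxz, swap_apply_left]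
  · by_cases hwy : w = σ x
    · subst hwy
      rw [Perm.mul_apply, swap_apply_left, swap_apply_of_ne_of_ne (Ne.symm hxz) (Ne.symm hyz)]
    · by_cases hwz : w = σ (σ x)
      · subst hwz
        rw [Perm.mul_apply, swap_apply_right, swap_apply_right]
        exact h3
      · have hw : w ∉ σ.support := by simp [hsupp, hwx, hwy, hwz]
        rw [Perm.mul_apply, swap_apply_of_ne_of_ne hwy hwz, swap_apply_of_ne_of_ne hwx hwy,
          notMem_support.1 hw]

section main
variable {a b : ℕ}

lemma cycleType_alp_full (a b : ℕ) :
    Perm.cycleType (alp a b) = (if 2 ≤ a then {a} else 0) + (if 2 ≤ b then {b} else 0) := by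
  rw [alp, cycleType_sumCongr, cycleType_finRotate_gen, cycleType_finRotate_gen]

lemma ctype_core (hb : 1 ≤ b) (u v : Fin a) (w : Fin b) (t : ℕ)
    (ht1 : 1 ≤ t) (ht2 : t < a) (ht3 : (u : ℕ) = ((v : ℕ) + t) % a) :
    Perm.cycleType (bcyc u v w * alp a b) = (if 2 ≤ t then {t} else 0) + {(a - t) + b} := by
  obtain ⟨s, rfl⟩ : ∃ s, a = t + s := ⟨a - t, by omega⟩
  have hs : 1 ≤ s := by omega
  set σ : Perm (Fin (t + s) ⊕ Fin b) :=
    Equiv.sumCongr ((finRotate (t + s)) ^ (v : ℕ)) ((finRotate b) ^ (w : ℕ)) with hσ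
  have hcomm : Commute σ (alp (t + s) b) := by
    show σ * _ = _ * σ
    rw [hσ, alp, sumCongr_perm_mul, sumCongr_perm_mul, ← pow_succ, ← pow_succ,
      ← pow_succ', ← pow_succ']
  have hval_u : σ (inl ⟨t, by omega⟩) = inl u := by
    simp only [hσ, Equiv.sumCongr_apply, Sum.map_inl]
    refine congrArg _ (Fin.ext ?_)
    rw [rotpow_val, Fin.val_mk, ht3, Nat.add_comm]
  have hval_v : σ (inl ⟨0, by omega⟩) = inl v := by
    simp only [hσ, Equiv.sumCongr_apply, Sum.map_inl]
    refine congrArg _ (Fin.ext ?_)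
    rw [rotpow_val, Fin.val_mk, Nat.zero_add, Nat.mod_eq_of_lt v.isLt]
  have hval_w : σ (inr ⟨0, by omega⟩) = inr w := by
    simp only [hσ, Equiv.sumCongr_apply, Sum.map_inr]
    refine congrArg _ (Fin.ext ?_)
    rw [rotpow_val, Fin.val_mk, Nat.zero_add, Nat.mod_eq_of_lt w.isLt]
  have hconj : bcyc u v w
      = σ * bcyc (⟨t, by omega⟩ : Fin (t + s)) ⟨0, by omega⟩ (⟨0, by omega⟩ : Fin b) * σ⁻¹ := by
    rw [bcyc, bcyc, show σ * (swap (inl (⟨t, by omega⟩ : Fin (t+s))) (inl ⟨0, by omega⟩)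
        * swap (inl (⟨0, by omega⟩ : Fin (t+s))) (inr (⟨0, by omega⟩ : Fin b))) * σ⁻¹
      = (σ * swap (inl (⟨t, by omega⟩ : Fin (t+s))) (inl ⟨0, by omega⟩) * σ⁻¹)
        * (σ * swap (inl (⟨0, by omega⟩ : Fin (t+s))) (inr (⟨0, by omega⟩ : Fin b)) * σ⁻¹)
      from by group, ← swap_apply_apply, ← swap_apply_apply, hval_u, hval_v, hval_w]
  have hmain : bcyc u v w * alp (t + s) b
      = σ * (bcyc (⟨t, by omega⟩ : Fin (t + s)) ⟨0, by omega⟩ (⟨0, by omega⟩ : Fin b)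
          * alp (t + s) b) * σ⁻¹ := by
    have h2 : σ⁻¹ * alp (t + s) b = alp (t + s) b * σ⁻¹ := hcomm.inv_left.eq
    set B := bcyc (⟨t, by omega⟩ : Fin (t + s)) ⟨0, by omega⟩ (⟨0, by omega⟩ : Fin b) with hB
    calc bcyc u v w * alp (t + s) b = σ * B * σ⁻¹ * alp (t + s) b := by rw [hconj]
      _ = σ * B * (σ⁻¹ * alp (t + s) b) := by rw [mul_assoc]
      _ = σ * B * (alp (t + s) b * σ⁻¹) := by rw [h2]
      _ = σ * (B * alp (t + s) b) * σ⁻¹ := by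
          rw [← mul_assoc, ← mul_assoc, mul_assoc σ]
  rw [hmain, cycleType_conj, struct0 ht1 hs hb, cycleType_permCongr, alp, cycleType_sumCongr,
    cycleType_finRotate_gen, cycleType_finRotate_gen, if_pos (show 2 ≤ s + b by omega),
    show t + s - t = s from by omega]

lemma ctype_bcyc (ha : 1 ≤ a) (hb : 1 ≤ b) (u v : Fin a) (w : Fin b) (huv : u ≠ v) :
    ∃ t : ℕ, 1 ≤ t ∧ t < a ∧ (u : ℕ) = ((v : ℕ) + t) % a ∧
      Perm.cycleType (bcyc u v w * alp a b) = (if 2 ≤ t then {t} else 0) + {(a - t) + b} := by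
  have hu := u.isLt
  have hv := v.isLt
  have hne : (u : ℕ) ≠ (v : ℕ) := fun hc => huv (Fin.ext hc)
  by_cases hc : (v : ℕ) ≤ (u : ℕ)
  · refine ⟨(u : ℕ) - (v : ℕ), by omega, by omega, ?_, ?_⟩
    · rw [show (v : ℕ) + ((u : ℕ) - (v : ℕ)) = (u : ℕ) from by omega, Nat.mod_eq_of_lt hu]
    · exact ctype_core hb u v w _ (by omega) (by omega)
        (by rw [show (v : ℕ) + ((u : ℕ) - (v : ℕ)) = (u : ℕ) from by omega, Nat.mod_eq_of_lt hu])
  · refine ⟨(u : ℕ) + a - (v : ℕ), by omega, by omega, ?_, ?_⟩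
    · rw [show (v : ℕ) + ((u : ℕ) + a - (v : ℕ)) = (u : ℕ) + a from by omega,
        Nat.add_mod_right, Nat.mod_eq_of_lt hu]
    · exact ctype_core hb u v w _ (by omega) (by omega)
        (by rw [show (v : ℕ) + ((u : ℕ) + a - (v : ℕ)) = (u : ℕ) + a from by omega,
          Nat.add_mod_right, Nat.mod_eq_of_lt hu])

lemma good_bcyc_core (ha : 1 ≤ a) (hb : 1 ≤ b) (u v : Fin a) (w : Fin b) (huv : u ≠ v)
    (hconj : IsConj (alp a b) (bcyc u v w * alp a b)) :
    b < a ∧ (u : ℕ) = ((v : ℕ) + b) % a := by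
  obtain ⟨t, t1, t2, t3, hct⟩ := ctype_bcyc ha hb u v w huv
  have he := isConj_iff_cycleType_eq.mp hconj
  rw [hct, cycleType_alp_full, if_pos (show 2 ≤ a by omega)] at he
  have htb : t = b := by
    by_cases h2t : 2 ≤ t
    · rw [if_pos h2t] at he
      by_cases h2b : 2 ≤ b
      · rw [if_pos h2b] at he
        have hmem : t ∈ ({t} : Multiset ℕ) + {a - t + b} := by simp
        rw [← he] at hmem
        simp only [Multiset.mem_add, Multiset.mem_singleton] at hmem
        omega
      · rw [if_neg h2b] at he
        have hcard := congrArg Multiset.card he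
        simp at hcard
    · rw [if_neg h2t] at he
      by_cases h2b : 2 ≤ b
      · rw [if_pos h2b] at he
        have hcard := congrArg Multiset.card he
        simp at hcard
      · omega
  exact ⟨by omega, by rw [← htb]; exact t3⟩
end main

section mirror
variable {a b : ℕ}

def mir {a b : ℕ} (γ : Perm (Fin b ⊕ Fin a)) : Perm (Fin a ⊕ Fin b) :=
  (Equiv.sumComm (Fin b) (Fin a)).permCongr γ

lemma mir_mul (γ₁ γ₂ : Perm (Fin b ⊕ Fin a)) : mir (γ₁ * γ₂) = mir γ₁ * mir γ₂ := by
  ext z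
  simp [mir, Equiv.permCongr_apply, Perm.mul_apply]

lemma mir_one : mir (1 : Perm (Fin b ⊕ Fin a)) = 1 := by
  ext z
  simp [mir, Equiv.permCongr_apply]

lemma mir_inv (γ : Perm (Fin b ⊕ Fin a)) : mir γ⁻¹ = (mir γ)⁻¹ :=
  eq_inv_of_mul_eq_one_right (by rw [← mir_mul]; simp [mir_one])

lemma mir_mir (β : Perm (Fin b ⊕ Fin a)) : mir (mir β) = β := by
  ext z
  obtain z | z := z <;> simp [mir, Equiv.permCongr_apply]

lemma mir_alp : mir (alp b a) = alp a b := by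
  ext z
  obtain z | z := z <;> simp [mir, alp, Equiv.permCongr_apply]

lemma mir_cycleType (γ : Perm (Fin b ⊕ Fin a)) :
    Perm.cycleType (mir γ) = γ.cycleType := cycleType_permCongr _ _

lemma mir_bcyc (u v : Fin b) (w : Fin a) :
    mir (bcyc u v w) = swap (inr u) (inr v) * swap (inr v) (inl w) := by
  rw [bcyc, mir_mul, mir, mir, permCongr_swap, permCongr_swap]
  rfl

lemma galp (a b : ℕ) : (Equiv.sumCongr (finRotate a) (finRotate b) : Perm (Fin a ⊕ Fin b)) = alp a b := rfl

lemma good_mir (γ : Perm (Fin b ⊕ Fin a)) (h : GoodThreeCycle b a γ) :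
    GoodThreeCycle a b (mir γ) := by
  obtain ⟨h1, ⟨x, hx⟩, ⟨y, hy⟩, h4⟩ := h
  refine ⟨?_, ⟨y, ?_⟩, ⟨x, ?_⟩, ?_⟩
  · show Perm.cycleType (mir γ) = {3}
    rw [mir_cycleType]
    exact h1
  · show (Equiv.sumComm (Fin b) (Fin a)).permCongr γ (inl y) ≠ inl y
    rw [Equiv.permCongr_apply]
    intro hc
    apply hy
    have h5 := congrArg (Equiv.sumComm (Fin b) (Fin a)).symm hc
    rw [Equiv.symm_apply_apply] at h5
    simpa using h5
  · show (Equiv.sumComm (Fin b) (Fin a)).permCongr γ (inr x) ≠ inr x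
    rw [Equiv.permCongr_apply]
    intro hc
    apply hx
    have h5 := congrArg (Equiv.sumComm (Fin b) (Fin a)).symm hc
    rw [Equiv.symm_apply_apply] at h5
    simpa using h5
  · show IsConj (alp a b) (mir γ * alp a b)
    rw [isConj_iff_cycleType_eq, ← mir_alp, ← mir_mul, mir_cycleType, mir_cycleType]
    have h4' := isConj_iff_cycleType_eq.mp h4
    rw [galp] at h4'
    exact h4'
end mirror

variable {a b : ℕ}

lemma swap_rot1 {α : Type*} [DecidableEq α] {x y z : α} (hxy : x ≠ y) (hxz : x ≠ z)
    (hyz : y ≠ z) : swap x y * swap y z = swap y z * swap z x := by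
  ext w
  simp only [Perm.mul_apply, swap_apply_def]
  split_ifs <;> simp_all <;> tauto

lemma swap_rot2 {α : Type*} [DecidableEq α] {x y z : α} (hxy : x ≠ y) (hxz : x ≠ z)
    (hyz : y ≠ z) : swap x y * swap y z = swap z x * swap x y := by
  rw [swap_rot1 hxy hxz hyz, swap_rot1 hyz (Ne.symm hxy) (Ne.symm hxz)]

lemma good_exists_blt (hb : 1 ≤ b) (hba : b < a) :
    GoodThreeCycle a b (bcyc (⟨b, hba⟩ : Fin a) ⟨0, by omega⟩ (⟨0, by omega⟩ : Fin b)) := by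
  have huv : (⟨b, hba⟩ : Fin a) ≠ ⟨0, by omega⟩ := by
    simp only [ne_eq, Fin.mk.injEq]
    omega
  refine ⟨?_, ⟨⟨0, by omega⟩, ?_⟩, ⟨⟨0, by omega⟩, ?_⟩, ?_⟩
  · rw [bcyc, Equiv.swap_comm (inl (⟨b, hba⟩ : Fin a)) (inl ⟨0, by omega⟩)]
    exact isThreeCycle_swap_mul_swap_same (by simpa using Ne.symm huv) (by simp) (by simp)
  · rw [bcyc_apply_inl_v]
    simp
  · rw [bcyc_apply_inr_w]
    simp
  · rw [galp, isConj_iff_cycleType_eq, cycleType_alp_full,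
      ctype_core hb _ _ _ b (by omega) hba
        (by simp only [Fin.val_mk, Nat.zero_add]; exact (Nat.mod_eq_of_lt hba).symm),
      show a - b + b = a from by omega, if_pos (show 2 ≤ a by omega), add_comm]

lemma classify (ha : 1 ≤ a) (hb : 1 ≤ b) (β : Perm (Fin a ⊕ Fin b))
    (h : GoodThreeCycle a b β) :
    (b < a ∧ ∃ (u v : Fin a) (w : Fin b), u ≠ v ∧ β = bcyc u v w ∧
        (u : ℕ) = ((v : ℕ) + b) % a) ∨
    (a < b ∧ ∃ (u v : Fin b) (w : Fin a), u ≠ v ∧ β = mir (bcyc u v w) ∧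
        (u : ℕ) = ((v : ℕ) + a) % b) := by
  obtain ⟨h1, hmoveL, hmoveR, h4⟩ := h
  rw [galp] at h4
  obtain ⟨x, y, z, hxy, hxz, hyz, hσx, hσy, hσz, hdec⟩ := threeCycle_decomp h1
  have hfix : ∀ p, p ≠ x → p ≠ y → p ≠ z → β p = p := by
    intro p p1 p2 p3
    rw [hdec, Perm.mul_apply, swap_apply_of_ne_of_ne p2 p3, swap_apply_of_ne_of_ne p1 p2]
  -- helper to close the "2 points on the left" cases
  have mainL : ∀ (u v : Fin a) (w : Fin b), u ≠ v → β = bcyc u v w →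
      (b < a ∧ ∃ (u v : Fin a) (w : Fin b), u ≠ v ∧ β = bcyc u v w ∧
        (u : ℕ) = ((v : ℕ) + b) % a) := by
    intro u v w hne hβ
    rw [hβ] at h4
    obtain ⟨hblt, hval⟩ := good_bcyc_core ha hb u v w hne h4
    exact ⟨hblt, u, v, w, hne, hβ, hval⟩
  have mainR : ∀ (u v : Fin b) (w : Fin a), u ≠ v → β = mir (bcyc u v w) →
      (a < b ∧ ∃ (u v : Fin b) (w : Fin a), u ≠ v ∧ β = mir (bcyc u v w) ∧
        (u : ℕ) = ((v : ℕ) + a) % b) := by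
    intro u v w hne hβ
    have hg2 := good_mir (a := b) (b := a) β ⟨h1, hmoveL, hmoveR, by rw [galp]; exact h4⟩
    rw [hβ, mir_mir] at hg2
    obtain ⟨g1, g2, g3, g4⟩ := hg2
    rw [galp] at g4
    obtain ⟨halt, hval⟩ := good_bcyc_core hb ha u v w hne g4
    exact ⟨halt, u, v, w, hne, hβ, hval⟩
  obtain xl | xr := x <;> obtain yl | yr := y <;> obtain zl | zr := z
  · obtain ⟨q, hq⟩ := hmoveR
    exact absurd (hfix (inr q) (by simp) (by simp) (by simp)) hq
  · -- x=inl, y=inl, z=inr : β = bcyc xl yl zr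
    exact Or.inl (mainL xl yl zr (fun hc => hxy (by rw [hc])) hdec)
  · -- x=inl, y=inr, z=inl : β = bcyc zl xl yr
    refine Or.inl (mainL zl xl yr (fun hc => hxz (by rw [hc])) ?_)
    rw [hdec, swap_rot2 hxy hxz hyz]
    rfl
  · -- x=inl, y=inr, z=inr : β = mir (bcyc yr zr xl)
    refine Or.inr (mainR yr zr xl (fun hc => hyz (by rw [hc])) ?_)
    rw [hdec, swap_rot1 hxy hxz hyz, mir_bcyc]
  · -- x=inr, y=inl, z=inl : β = bcyc yl zl xr
    refine Or.inl (mainL yl zl xr (fun hc => hyz (by rw [hc])) ?_)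
    rw [hdec, swap_rot1 hxy hxz hyz]
    rfl
  · -- x=inr, y=inl, z=inr : β = mir (bcyc zr xr yl)
    refine Or.inr (mainR zr xr yl (fun hc => hxz (by rw [hc])) ?_)
    rw [hdec, swap_rot2 hxy hxz hyz, mir_bcyc]
  · -- x=inr, y=inr, z=inl : β = mir (bcyc xr yr zl)
    refine Or.inr (mainR xr yr zl (fun hc => hxy (by rw [hc])) ?_)
    rw [hdec, mir_bcyc]
  · obtain ⟨q, hq⟩ := hmoveL
    exact absurd (hfix (inl q) (by simp) (by simp) (by simp)) hq

lemma uniq_core (ha : 1 ≤ a) (hb : 1 ≤ b) (u v : Fin a) (w : Fin b) (u' v' : Fin a) (w' : Fin b)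
    (hu : (u : ℕ) = ((v : ℕ) + b) % a) (hu' : (u' : ℕ) = ((v' : ℕ) + b) % a) :
    ∃ σ : Perm (Fin a ⊕ Fin b), σ * alp a b = alp a b * σ ∧
      σ * bcyc u v w * σ⁻¹ = bcyc u' v' w' := by
  have hv := v.isLt
  have hv' := v'.isLt
  have hw := w.isLt
  have hw' := w'.isLt
  set k := (v' : ℕ) + a - (v : ℕ) with hk
  set l := (w' : ℕ) + b - (w : ℕ) with hl
  set σ : Perm (Fin a ⊕ Fin b) :=
    Equiv.sumCongr ((finRotate a) ^ k) ((finRotate b) ^ l) with hσ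
  have hval_u : σ (inl u) = inl u' := by
    simp only [hσ, Equiv.sumCongr_apply, Sum.map_inl]
    refine congrArg _ (Fin.ext ?_)
    rw [rotpow_val, hu, hu', Nat.mod_add_mod,
      show (v : ℕ) + b + k = (v' : ℕ) + b + a from by omega, Nat.add_mod_right]
  have hval_v : σ (inl v) = inl v' := by
    simp only [hσ, Equiv.sumCongr_apply, Sum.map_inl]
    refine congrArg _ (Fin.ext ?_)
    rw [rotpow_val, show (v : ℕ) + k = (v' : ℕ) + a from by omega, Nat.add_mod_right,
      Nat.mod_eq_of_lt hv']
  have hval_w : σ (inr w) = inr w' := by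
    simp only [hσ, Equiv.sumCongr_apply, Sum.map_inr]
    refine congrArg _ (Fin.ext ?_)
    rw [rotpow_val, show (w : ℕ) + l = (w' : ℕ) + b from by omega, Nat.add_mod_right,
      Nat.mod_eq_of_lt hw']
  refine ⟨σ, ?_, ?_⟩
  · rw [hσ, alp, sumCongr_perm_mul, sumCongr_perm_mul, ← pow_succ, ← pow_succ,
      ← pow_succ', ← pow_succ']
  · rw [bcyc, bcyc, show σ * (swap (inl u) (inl v) * swap (inl v) (inr w)) * σ⁻¹
        = (σ * swap (inl u) (inl v) * σ⁻¹) * (σ * swap (inl v) (inr w) * σ⁻¹) from by group,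
      ← swap_apply_apply, ← swap_apply_apply, hval_u, hval_v, hval_w]


end aux

/-- If `a ≠ b`, there is exactly one such 3-cycle up to simultaneous conjugation by the
centralizer of `α`; if `a = b`, there is none. -/
theorem threeCycle_ab_classification (a b : ℕ) (ha : 0 < a) (hb : 0 < b) :
    (a ≠ b →
      (∃ β, GoodThreeCycle a b β) ∧
      ∀ β β' : Perm (Fin a ⊕ Fin b), GoodThreeCycle a b β → GoodThreeCycle a b β' →
        ∃ σ : Perm (Fin a ⊕ Fin b),
          σ * Equiv.sumCongr (finRotate a) (finRotate b) =
            Equiv.sumCongr (finRotate a) (finRotate b) * σ ∧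
          σ * β * σ⁻¹ = β') ∧
    (a = b → ¬ ∃ β, GoodThreeCycle a b β) := by
  have ha1 : 1 ≤ a := ha
  have hb1 : 1 ≤ b := hb
  constructor
  · intro hab
    constructor
    · rcases Nat.lt_or_ge b a with hba | hba
      · exact ⟨_, good_exists_blt hb1 hba⟩
      · have hab' : a < b := by omega
        exact ⟨mir (bcyc (⟨a, hab'⟩ : Fin b) ⟨0, by omega⟩ (⟨0, by omega⟩ : Fin a)),
          good_mir _ (good_exists_blt ha1 hab')⟩
    · intro β β' hβ hβ'
      rcases classify ha1 hb1 β hβ with ⟨hblt, u, v, w, hne, hbe, hval⟩ |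
        ⟨halt, u, v, w, hne, hbe, hval⟩
      · rcases classify ha1 hb1 β' hβ' with ⟨_, u', v', w', hne', hbe', hval'⟩ | ⟨halt', _⟩
        · obtain ⟨σ, hσ1, hσ2⟩ := uniq_core ha1 hb1 u v w u' v' w' hval hval'
          refine ⟨σ, ?_, ?_⟩
          · rw [galp]
            exact hσ1
          · rw [hbe, hbe']
            exact hσ2
        · omega
      · rcases classify ha1 hb1 β' hβ' with ⟨hblt', _⟩ | ⟨_, u', v', w', hne', hbe', hval'⟩
        · omega
        · obtain ⟨σ', hσ1, hσ2⟩ := uniq_core hb1 ha1 u v w u' v' w' hval hval'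
          refine ⟨mir σ', ?_, ?_⟩
          · rw [galp]
            have hc := congrArg mir hσ1
            rw [mir_mul, mir_mul, mir_alp] at hc
            exact hc
          · rw [hbe, hbe', ← mir_inv, ← mir_mul, ← mir_mul]
            exact congrArg mir hσ2
  · rintro hab ⟨β, hβ⟩
    rcases classify ha1 hb1 β hβ with ⟨hblt, -⟩ | ⟨halt, -⟩ <;> omega
end

section
/- For every positive integer d, Σ_{a·m + b·n = d} m·b − Σ_{b·(m+n)=d} m·b = Σ_{d₁+d₂=d} σ₁(d₁)σ₁(d₂) − (d/2)·σ₁(d) + (d/2)·τ(d), where the first sum is over quadruples of positive integers (a,b,m,n) with am+bn=d, the second over triples (b,m,n) with b(m+n)=d, and the third over ordered pairs (d₁,d₂) of positive integers with d₁+d₂=d. -/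
/-- `σ₁(n) = ∑_{a ∣ n} a`, as a rational number. -/
def sigma1Q (n : ℕ) : ℚ := ∑ a ∈ n.divisors, (a : ℚ)

/-- The number of divisors `τ(n)`. -/
def tauQ (n : ℕ) : ℚ := (n.divisors.card : ℚ)

lemma sumFstDA (n : ℕ) : ∑ p ∈ n.divisorsAntidiagonal, (p.1 : ℚ) = sigma1Q n :=
  Nat.sum_divisorsAntidiagonal (fun i _ => (i : ℚ))

lemma sumSndDA (n : ℕ) : ∑ p ∈ n.divisorsAntidiagonal, (p.2 : ℚ) = sigma1Q n := by
  rw [Nat.sum_divisorsAntidiagonal (fun _ j => (j : ℚ)), sigma1Q,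
    ← Nat.sum_div_divisors n (fun k => (k : ℚ))]

lemma sumOneDA (n : ℕ) : ∑ _p ∈ n.divisorsAntidiagonal, (1 : ℚ) = tauQ n := by
  rw [Nat.sum_divisorsAntidiagonal (fun _ _ => (1 : ℚ))]
  simp [tauQ]

lemma gaussQ (s : ℕ) : ∑ m ∈ Finset.Ioo 0 s, (m : ℚ) = (s : ℚ) * ((s : ℚ) - 1) / 2 := by
  rcases Nat.eq_zero_or_pos s with h | h
  · simp [h]
  have h1 : ∑ m ∈ Finset.Ioo 0 s, (m : ℚ) = ∑ m ∈ Finset.range s, (m : ℚ) := by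
    rw [Finset.range_eq_Ico, ← Finset.Ioo_insert_left h, Finset.sum_insert (by simp)]
    simp
  have h2 := Finset.sum_range_id_mul_two s
  have h2q : (∑ i ∈ Finset.range s, (i : ℚ)) * 2 = (s : ℚ) * ((s : ℚ) - 1) := by
    have := congrArg (fun x : ℕ => (x : ℚ)) h2
    push_cast [Nat.cast_sub h] at this
    exact this
  rw [h1]
  linarith

lemma quad_sum (d : ℕ) (hd : 0 < d) :
    (∑ q ∈ (Finset.Icc 1 d ×ˢ Finset.Icc 1 d ×ˢ Finset.Icc 1 d ×ˢ Finset.Icc 1 d).filter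
          (fun q => q.1 * q.2.2.1 + q.2.1 * q.2.2.2 = d),
        (q.2.2.1 : ℚ) * (q.2.1 : ℚ)) =
    ∑ d₁ ∈ Finset.Ioo 0 d, sigma1Q d₁ * sigma1Q (d - d₁) := by
  have key : (∑ d₁ ∈ Finset.Ioo 0 d, sigma1Q d₁ * sigma1Q (d - d₁)) =
      ∑ x ∈ (Finset.Ioo 0 d).sigma
          (fun d₁ => d₁.divisorsAntidiagonal ×ˢ (d - d₁).divisorsAntidiagonal),
        (x.2.1.2 : ℚ) * (x.2.2.1 : ℚ) := by
    rw [Finset.sum_sigma]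
    refine Finset.sum_congr rfl fun d₁ _ => ?_
    rw [Finset.sum_product, ← sumSndDA d₁, ← sumFstDA (d - d₁), Finset.sum_mul_sum]
  rw [key]
  refine Finset.sum_nbij'
    (i := fun q => ⟨q.1 * q.2.2.1, ((q.1, q.2.2.1), (q.2.1, q.2.2.2))⟩)
    (j := fun x => (x.2.1.1, (x.2.2.1, (x.2.1.2, x.2.2.2)))) ?_ ?_ ?_ ?_ ?_
  · rintro ⟨a, b, m, n⟩ hq
    simp only [Finset.mem_filter, Finset.mem_product, Finset.mem_Icc] at hq
    obtain ⟨⟨⟨ha1, _⟩, ⟨hb1, _⟩, ⟨hm1, _⟩, ⟨hn1, _⟩⟩, heq⟩ := hq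
    have ham : 0 < a * m := Nat.mul_pos ha1 hm1
    have hbn : 0 < b * n := Nat.mul_pos hb1 hn1
    have hlt : a * m < d := heq ▸ Nat.lt_add_of_pos_right hbn
    simp only [Finset.mem_sigma, Finset.mem_Ioo, Finset.mem_product,
      Nat.mem_divisorsAntidiagonal]
    refine ⟨⟨ham, hlt⟩, ⟨trivial, ham.ne'⟩, ?_, Nat.sub_ne_zero_of_lt hlt⟩
    rw [← heq, Nat.add_sub_cancel_left]
  · rintro ⟨d₁, ⟨a, m⟩, ⟨b, n⟩⟩ hx
    simp only [Finset.mem_sigma, Finset.mem_Ioo, Finset.mem_product,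
      Nat.mem_divisorsAntidiagonal] at hx
    obtain ⟨⟨hd₁0, hd₁d⟩, ⟨ham, _⟩, ⟨hbn, _⟩⟩ := hx
    have ham0 : a * m ≠ 0 := by rw [ham]; exact hd₁0.ne'
    have hbn0 : b * n ≠ 0 := by rw [hbn]; exact (Nat.sub_ne_zero_of_lt hd₁d)
    obtain ⟨ha0, hm0⟩ := Nat.mul_ne_zero_iff.mp ham0
    obtain ⟨hb0, hn0⟩ := Nat.mul_ne_zero_iff.mp hbn0
    have had : a ≤ d := le_trans (ham ▸ Nat.le_mul_of_pos_right a (Nat.pos_of_ne_zero hm0))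
      hd₁d.le
    have hmd : m ≤ d := le_trans (ham ▸ Nat.le_mul_of_pos_left m (Nat.pos_of_ne_zero ha0))
      hd₁d.le
    have hbd : b ≤ d := le_trans (hbn ▸ Nat.le_mul_of_pos_right b (Nat.pos_of_ne_zero hn0))
      (Nat.sub_le d d₁)
    have hnd : n ≤ d := le_trans (hbn ▸ Nat.le_mul_of_pos_left n (Nat.pos_of_ne_zero hb0))
      (Nat.sub_le d d₁)
    simp only [Finset.mem_filter, Finset.mem_product, Finset.mem_Icc]
    refine ⟨⟨⟨Nat.pos_of_ne_zero ha0, had⟩, ⟨Nat.pos_of_ne_zero hb0, hbd⟩,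
      ⟨Nat.pos_of_ne_zero hm0, hmd⟩, ⟨Nat.pos_of_ne_zero hn0, hnd⟩⟩, ?_⟩
    rw [ham, hbn]
    omega
  · rintro ⟨a, b, m, n⟩ _; rfl
  · rintro ⟨d₁, ⟨a, m⟩, ⟨b, n⟩⟩ hx
    simp only [Finset.mem_sigma, Finset.mem_Ioo, Finset.mem_product,
      Nat.mem_divisorsAntidiagonal] at hx
    obtain ⟨_, ⟨ham, _⟩, _⟩ := hx
    simp only
    exact Sigma.ext ham (by rw [ham])
  · rintro ⟨a, b, m, n⟩ _; rfl

lemma triple_sum (d : ℕ) (hd : 0 < d) :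
    (∑ t ∈ (Finset.Icc 1 d ×ˢ Finset.Icc 1 d ×ˢ Finset.Icc 1 d).filter
          (fun t => t.1 * (t.2.1 + t.2.2) = d),
        (t.2.1 : ℚ) * (t.1 : ℚ)) =
      (d : ℚ) / 2 * sigma1Q d - (d : ℚ) / 2 * tauQ d := by
  have key : (∑ x ∈ d.divisorsAntidiagonal.sigma (fun p => Finset.Ioo 0 p.2),
      (x.2 : ℚ) * (x.1.1 : ℚ)) = (d : ℚ) / 2 * sigma1Q d - (d : ℚ) / 2 * tauQ d := by
    rw [Finset.sum_sigma]
    have step : ∀ p ∈ d.divisorsAntidiagonal,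
        (∑ m ∈ Finset.Ioo 0 p.2, (m : ℚ) * (p.1 : ℚ)) =
        (d : ℚ) / 2 * (p.2 : ℚ) - (d : ℚ) / 2 * 1 := by
      rintro ⟨b, s⟩ hp
      rw [Nat.mem_divisorsAntidiagonal] at hp
      have hbs : (b : ℚ) * (s : ℚ) = (d : ℚ) := by exact_mod_cast congrArg (Nat.cast (R := ℚ)) hp.1
      simp only [← Finset.sum_mul, gaussQ]
      field_simp
      ring_nf
      nlinarith [hbs]
    rw [Finset.sum_congr rfl step, Finset.sum_sub_distrib, ← Finset.mul_sum, ← Finset.mul_sum,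
      sumSndDA, sumOneDA]
  rw [← key]
  refine Finset.sum_nbij'
    (i := fun t => ⟨(t.1, t.2.1 + t.2.2), t.2.1⟩)
    (j := fun x => (x.1.1, (x.2, x.1.2 - x.2))) ?_ ?_ ?_ ?_ ?_
  · rintro ⟨b, m, n⟩ ht
    simp only [Finset.mem_filter, Finset.mem_product, Finset.mem_Icc] at ht
    obtain ⟨⟨⟨hb1, _⟩, ⟨hm1, _⟩, ⟨hn1, _⟩⟩, heq⟩ := ht
    simp only [Finset.mem_sigma, Finset.mem_Ioo, Nat.mem_divisorsAntidiagonal]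
    exact ⟨⟨heq, hd.ne'⟩, hm1, Nat.lt_add_of_pos_right hn1⟩
  · rintro ⟨⟨b, s⟩, m⟩ hx
    simp only [Finset.mem_sigma, Finset.mem_Ioo, Nat.mem_divisorsAntidiagonal] at hx
    obtain ⟨⟨hbs, _⟩, hm0, hms⟩ := hx
    have hs0 : s ≠ 0 := by rintro rfl; omega
    have hb0 : b ≠ 0 := by rintro rfl; simp at hbs; omega
    have hsd : s ≤ d := hbs ▸ Nat.le_mul_of_pos_left s (Nat.pos_of_ne_zero hb0)
    have hbd : b ≤ d := hbs ▸ Nat.le_mul_of_pos_right b (Nat.pos_of_ne_zero hs0)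
    simp only [Finset.mem_filter, Finset.mem_product, Finset.mem_Icc]
    refine ⟨⟨⟨Nat.pos_of_ne_zero hb0, hbd⟩, ⟨hm0, le_trans hms.le hsd⟩,
      ⟨by omega, by omega⟩⟩, ?_⟩
    rw [show m + (s - m) = s by omega, hbs]
  · rintro ⟨b, m, n⟩ _
    simp only [Nat.add_sub_cancel_left]
  · rintro ⟨⟨b, s⟩, m⟩ hx
    simp only [Finset.mem_sigma, Finset.mem_Ioo, Nat.mem_divisorsAntidiagonal] at hx
    obtain ⟨_, _, hms⟩ := hx
    simp only
    have : m + (s - m) = s := by omega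
    exact Sigma.ext (by rw [this]) (by rw [this])
  · rintro ⟨b, m, n⟩ _; rfl

/-- `∑_{am+bn=d} m·b − ∑_{b(m+n)=d} m·b = ∑_{d₁+d₂=d} σ₁(d₁)σ₁(d₂) − (d/2)σ₁(d) + (d/2)τ(d)`,
where the first sum is over quadruples of positive integers `(a,b,m,n)` with `am+bn=d`,
the second over triples `(b,m,n)` with `b(m+n)=d`, and the third over ordered pairs
`(d₁,d₂)` of positive integers with `d₁+d₂=d`. -/
theorem quadruple_minus_triple_sum (d : ℕ) (hd : 0 < d) :
    (∑ q ∈ (Finset.Icc 1 d ×ˢ Finset.Icc 1 d ×ˢ Finset.Icc 1 d ×ˢ Finset.Icc 1 d).filter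
          (fun q => q.1 * q.2.2.1 + q.2.1 * q.2.2.2 = d),
        (q.2.2.1 : ℚ) * (q.2.1 : ℚ)) -
      (∑ t ∈ (Finset.Icc 1 d ×ˢ Finset.Icc 1 d ×ˢ Finset.Icc 1 d).filter
          (fun t => t.1 * (t.2.1 + t.2.2) = d),
        (t.2.1 : ℚ) * (t.1 : ℚ)) =
      (∑ d₁ ∈ Finset.Ioo 0 d, sigma1Q d₁ * sigma1Q (d - d₁)) -
        (d : ℚ) / 2 * sigma1Q d + (d : ℚ) / 2 * tauQ d := by
  rw [quad_sum d hd, triple_sum d hd]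
  ring
end
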